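/- arXiv:2604.20147 — 6 statements merged into one kernel-verified Lean document; each statement's English description precedes it below -/
import Mathlib

section
/- For any real q > 0, the empirical mean embedding satisfies the moment bound E[‖μ̂ − μ_P‖_H^q] ≤ √(4πq) · (4Cq/(e·n))^{q/2} · e^{1/(6q)}, where e is Euler's number and the expectation is over the n i.i.d. samples from P. -/
open Real Set MeasureTheory Filter Topology

namespace MEB


lemma sinh_le_mul_cosh {y : ℝ} (hy : 0 ≤ y) : Real.sinh y ≤ y * Real.cosh y := by
  have h : ∀ z ∈ Set.Ici (0:ℝ), 0 ≤ deriv (fun w => w * Real.cosh w - Real.sinh w) z := by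
    intro z hz
    have hd : HasDerivAt (fun w => w * Real.cosh w - Real.sinh w)
        (1 * Real.cosh z + z * Real.sinh z - Real.cosh z) z :=
      ((hasDerivAt_id z).mul (Real.hasDerivAt_cosh z)).sub (Real.hasDerivAt_sinh z)
    rw [hd.deriv]
    have : 0 ≤ z * Real.sinh z := mul_nonneg hz (by
      rw [← Real.sinh_zero]; exact Real.sinh_le_sinh.mpr hz)
    nlinarith
  have hmono : MonotoneOn (fun w => w * Real.cosh w - Real.sinh w) (Set.Ici (0:ℝ)) := by
    apply monotoneOn_of_deriv_nonneg (convex_Ici 0)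
    · exact (Continuous.sub (continuous_id.mul Real.continuous_cosh) Real.continuous_sinh).continuousOn
    · intro z hz
      exact (((hasDerivAt_id z).mul (Real.hasDerivAt_cosh z)).sub (Real.hasDerivAt_sinh z)).differentiableAt.differentiableWithinAt
    · intro z hz
      exact h z (interior_subset hz)
  have := hmono (Set.self_mem_Ici) (Set.mem_Ici.mpr hy) hy
  simp only [Real.cosh_zero, Real.sinh_zero, mul_one, zero_mul, sub_zero, zero_sub, neg_zero] at this
  linarith [this]

lemma sinh_div_monotone : MonotoneOn (fun y => Real.sinh y / y) (Set.Ioi (0:ℝ)) := by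
  apply monotoneOn_of_deriv_nonneg (convex_Ioi 0)
  · exact (Real.continuous_sinh.continuousOn.div continuous_id.continuousOn (fun y hy => ne_of_gt hy))
  · intro z hz
    rw [interior_Ioi] at hz
    exact ((Real.hasDerivAt_sinh z).div (hasDerivAt_id z) (ne_of_gt hz)).differentiableAt.differentiableWithinAt
  · intro z hz
    rw [interior_Ioi] at hz
    have hd : HasDerivAt (fun y => Real.sinh y / y)
        ((Real.cosh z * z - Real.sinh z * 1) / z ^ 2) z :=
      (Real.hasDerivAt_sinh z).div (hasDerivAt_id z) (ne_of_gt hz)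
    rw [hd.deriv]
    have h1 : Real.sinh z ≤ z * Real.cosh z := sinh_le_mul_cosh hz.le
    have hz' : (0:ℝ) < z := hz
    have : (0:ℝ) < z ^ 2 := by nlinarith
    apply div_nonneg _ this.le
    nlinarith

lemma cosh_le_exp_half_sq (y : ℝ) : Real.cosh y ≤ Real.exp (y ^ 2 / 2) := by
  -- reduce to y ≥ 0
  wlog hy : 0 ≤ y with H
  · have := H (-y) (by linarith [le_of_not_ge hy])
    simpa [Real.cosh_neg, neg_pow] using this
  -- F y = exp (y^2/2) * cosh y ... use log approach: show g y := y^2/2 - log (cosh y) ≥ 0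
  have key : ∀ z ∈ Set.Ici (0:ℝ), 0 ≤ deriv (fun w => w ^ 2 / 2 - Real.log (Real.cosh w)) z := by
    intro z hz
    have hcosh : Real.cosh z ≠ 0 := ne_of_gt (Real.cosh_pos z)
    have hd : HasDerivAt (fun w => w ^ 2 / 2 - Real.log (Real.cosh w))
        (z - Real.sinh z / Real.cosh z) z := by
      have h1 : HasDerivAt (fun w : ℝ => w ^ 2 / 2) z z := by
        simpa using ((hasDerivAt_pow 2 z).div_const 2)
      have h2 : HasDerivAt (fun w => Real.log (Real.cosh w)) (Real.sinh z / Real.cosh z) z := by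
        simpa using (Real.hasDerivAt_cosh z).log hcosh
      exact h1.sub h2
    rw [hd.deriv]
    have h1 : Real.sinh z ≤ z * Real.cosh z := sinh_le_mul_cosh hz
    rw [sub_nonneg, div_le_iff₀ (Real.cosh_pos z)]
    linarith
  have hmono : MonotoneOn (fun w => w ^ 2 / 2 - Real.log (Real.cosh w)) (Set.Ici (0:ℝ)) := by
    apply monotoneOn_of_deriv_nonneg (convex_Ici 0)
    · apply ContinuousOn.sub
      · exact (continuous_pow 2).continuousOn.div_const 2
      · exact (Real.continuous_cosh.log (fun x => ne_of_gt (Real.cosh_pos x))).continuousOn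
    · intro z hz
      have hcosh : Real.cosh z ≠ 0 := ne_of_gt (Real.cosh_pos z)
      have h1 : HasDerivAt (fun w : ℝ => w ^ 2 / 2) z z := by
        simpa using ((hasDerivAt_pow 2 z).div_const 2)
      have h2 : HasDerivAt (fun w => Real.log (Real.cosh w)) (Real.sinh z / Real.cosh z) z := by
        simpa using (Real.hasDerivAt_cosh z).log hcosh
      exact (h1.sub h2).differentiableAt.differentiableWithinAt
    · intro z hz
      exact key z (interior_subset hz)
  have h0 := hmono (Set.self_mem_Ici) (Set.mem_Ici.mpr hy) hy
  simp only [Real.cosh_zero, Real.log_one, sub_zero] at h0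
  norm_num at h0
  -- h0 : 0 ≤ y^2/2 - log (cosh y)
  have hc := Real.cosh_pos y
  have := Real.add_one_le_exp (Real.log (Real.cosh y))
  calc Real.cosh y = Real.exp (Real.log (Real.cosh y)) := (Real.exp_log hc).symm
    _ ≤ Real.exp (y ^ 2 / 2) := Real.exp_le_exp.mpr (by linarith)


lemma convexOn_cosh_sqrt {L : ℝ} (hL : 0 ≤ L) :
    ConvexOn ℝ (Set.Ici (0:ℝ)) (fun v => Real.cosh (L * Real.sqrt v)) := by
  rcases eq_or_lt_of_le hL with rfl | hL
  · simpa using convexOn_const (Real.cosh 0) (convex_Ici (0:ℝ))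
  have hderiv : ∀ v : ℝ, 0 < v → HasDerivAt (fun v => Real.cosh (L * Real.sqrt v))
      (Real.sinh (L * Real.sqrt v) * (L * (1 / (2 * Real.sqrt v)))) v := by
    intro v hv
    have h1 : HasDerivAt (fun v : ℝ => L * Real.sqrt v) (L * (1 / (2 * Real.sqrt v))) v :=
      (Real.hasDerivAt_sqrt (ne_of_gt hv)).const_mul L
    exact (Real.hasDerivAt_cosh (L * Real.sqrt v)).comp v h1
  apply MonotoneOn.convexOn_of_deriv (convex_Ici 0)
  · exact (Real.continuous_cosh.comp (continuous_const.mul Real.continuous_sqrt)).continuousOn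
  · rw [interior_Ici]
    intro v hv
    exact (hderiv v hv).differentiableAt.differentiableWithinAt
  · rw [interior_Ici]
    intro v hv v' hv' hvv'
    rw [(hderiv v hv).deriv, (hderiv v' hv').deriv]
    have hsv : 0 < Real.sqrt v := Real.sqrt_pos.mpr hv
    have hsv' : 0 < Real.sqrt v' := Real.sqrt_pos.mpr hv'
    have ha : 0 < L * Real.sqrt v := mul_pos hL hsv
    have ha' : 0 < L * Real.sqrt v' := mul_pos hL hsv'
    have hmono := sinh_div_monotone (Set.mem_Ioi.mpr ha) (Set.mem_Ioi.mpr ha')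
      (mul_le_mul_of_nonneg_left (Real.sqrt_le_sqrt hvv') hL.le)
    have e1 : Real.sinh (L * Real.sqrt v) * (L * (1 / (2 * Real.sqrt v)))
        = (Real.sinh (L * Real.sqrt v) / (L * Real.sqrt v)) * (L ^ 2 / 2) := by
      field_simp
    have e2 : Real.sinh (L * Real.sqrt v') * (L * (1 / (2 * Real.sqrt v')))
        = (Real.sinh (L * Real.sqrt v') / (L * Real.sqrt v')) * (L ^ 2 / 2) := by
      field_simp
    rw [e1, e2]
    have hL2 : (0:ℝ) ≤ L ^ 2 / 2 := by positivity
    exact mul_le_mul_of_nonneg_right hmono hL2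

variable {H : Type*} [NormedAddCommGroup H] [InnerProductSpace ℝ H]

lemma pointwise_cosh_bound (s x : H) {L b : ℝ} (hL : 0 ≤ L) (hb : 0 < b) (hx : ‖x‖ ≤ b) :
    Real.cosh (L * ‖s + x‖) ≤ Real.cosh (L * ‖s‖) * Real.cosh (L * b)
      + Real.sinh (L * ‖s‖) * Real.sinh (L * b) / (‖s‖ * b) * (inner ℝ s x : ℝ) := by
  rcases eq_or_ne s 0 with rfl | hs
  · simp only [norm_zero, mul_zero, Real.sinh_zero, zero_mul, zero_div, zero_add,
      Real.cosh_zero, one_mul, zero_mul, add_zero]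
    have h := Real.cosh_le_cosh (x := L * ‖x‖) (y := L * b)
    rw [abs_of_nonneg (mul_nonneg hL (norm_nonneg x)), abs_of_nonneg (mul_nonneg hL hb.le)] at h
    exact h.mpr (mul_le_mul_of_nonneg_left hx hL)
  · set r := ‖s‖ with hr
    have hr0 : 0 < r := norm_pos_iff.mpr hs
    set w : ℝ := 2 * (inner ℝ s x : ℝ) with hwdef
    set a : ℝ := 2 * (r * b) with hadef
    have ha0 : 0 < a := by positivity
    have hinner : |(inner ℝ s x : ℝ)| ≤ r * b := by
      calc |(inner ℝ s x : ℝ)| ≤ ‖s‖ * ‖x‖ := abs_real_inner_le_norm s x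
        _ ≤ r * b := by rw [← hr]; exact mul_le_mul_of_nonneg_left hx (norm_nonneg s)
    have hw : |w| ≤ a := by rw [hwdef, hadef, abs_mul, abs_two]; nlinarith [hinner]
    set c : ℝ := r ^ 2 + b ^ 2 with hcdef
    have hca : 0 ≤ c - a := by rw [hcdef, hadef]; nlinarith [sq_nonneg (r - b)]
    have hkey : ‖s + x‖ ^ 2 ≤ c + w := by
      rw [norm_add_sq_real]
      have : ‖x‖ ^ 2 ≤ b ^ 2 := by nlinarith [norm_nonneg x]
      rw [hcdef, hwdef]; nlinarith
    -- step 1 : cosh (L ‖s+x‖) ≤ f (c + w)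
    have h1 : Real.cosh (L * ‖s + x‖) ≤ Real.cosh (L * Real.sqrt (c + w)) := by
      rw [Real.cosh_le_cosh, abs_of_nonneg (by positivity),
        abs_of_nonneg (mul_nonneg hL (Real.sqrt_nonneg _))]
      apply mul_le_mul_of_nonneg_left _ hL
      calc ‖s + x‖ = Real.sqrt (‖s + x‖ ^ 2) := by
            rw [Real.sqrt_sq (norm_nonneg _)]
        _ ≤ Real.sqrt (c + w) := Real.sqrt_le_sqrt hkey
    -- step 2 : convexity chord
    have hcv := convexOn_cosh_sqrt hL
    have hmem1 : c - a ∈ Set.Ici (0:ℝ) := hca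
    have hmem2 : c + a ∈ Set.Ici (0:ℝ) := by
      simp only [Set.mem_Ici] at hmem1 ⊢; linarith
    have hθ1 : (0:ℝ) ≤ (a - w) / (2 * a) := by
      apply div_nonneg _ (by positivity)
      have := abs_le.mp hw; linarith [this.2]
    have hθ2 : (0:ℝ) ≤ (a + w) / (2 * a) := by
      apply div_nonneg _ (by positivity)
      have := abs_le.mp hw; linarith [this.1]
    have hθsum : (a - w) / (2 * a) + (a + w) / (2 * a) = 1 := by field_simp; ring
    have hcomb := hcv.2 hmem1 hmem2 hθ1 hθ2 hθsum
    simp only [smul_eq_mul] at hcomb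
    rw [show (a - w) / (2 * a) * (c - a) + (a + w) / (2 * a) * (c + a) = c + w by
      field_simp; ring] at hcomb
    -- step 3 : evaluate the chord
    have hsqrt1 : Real.sqrt (c - a) = |r - b| := by
      rw [hcdef, hadef, show r ^ 2 + b ^ 2 - 2 * (r * b) = (r - b) ^ 2 by ring,
        Real.sqrt_sq_eq_abs]
    have hsqrt2 : Real.sqrt (c + a) = r + b := by
      rw [hcdef, hadef, show r ^ 2 + b ^ 2 + 2 * (r * b) = (r + b) ^ 2 by ring,
        Real.sqrt_sq (by positivity)]
    have hval1 : Real.cosh (L * Real.sqrt (c - a)) = Real.cosh (L * (r - b)) := by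
      rw [hsqrt1, ← Real.cosh_abs (L * (r - b)), abs_mul, abs_of_nonneg hL]
    have hval2 : Real.cosh (L * Real.sqrt (c + a)) = Real.cosh (L * (r + b)) := by
      rw [hsqrt2]
    rw [hval1, hval2] at hcomb
    have hchord : (a - w) / (2 * a) * Real.cosh (L * (r - b))
        + (a + w) / (2 * a) * Real.cosh (L * (r + b))
        = Real.cosh (L * r) * Real.cosh (L * b)
          + Real.sinh (L * r) * Real.sinh (L * b) / (r * b) * (inner ℝ s x : ℝ) := by
      have key : ∀ CC SS : ℝ, (a - w) / (2 * a) * (CC - SS) + (a + w) / (2 * a) * (CC + SS)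
          = CC + SS / (r * b) * (inner ℝ s x : ℝ) := by
        intro CC SS
        rw [hadef, hwdef]
        field_simp
        ring
      rw [mul_sub, mul_add, Real.cosh_sub, Real.cosh_add]
      exact key _ _
    calc Real.cosh (L * ‖s + x‖) ≤ Real.cosh (L * Real.sqrt (c + w)) := h1
      _ ≤ (a - w) / (2 * a) * Real.cosh (L * (r - b))
          + (a + w) / (2 * a) * Real.cosh (L * (r + b)) := hcomb
      _ = _ := hchord




variable [CompleteSpace H] {Ξ : Type*} [MeasurableSpace Ξ]

lemma cosh_norm_stronglyMeasurable {Y : Ξ → H} (hYm : StronglyMeasurable Y)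
    (L : ℝ) (s : H) (m : ℕ) :
    StronglyMeasurable fun x : Fin m → Ξ => Real.cosh (L * ‖s + ∑ j, Y (x j)‖) := by
  have h1 : StronglyMeasurable fun x : Fin m → Ξ => ∑ j, Y (x j) := by
    apply Finset.stronglyMeasurable_fun_sum
    intro j _
    exact hYm.comp_measurable (measurable_pi_apply j)
  exact (Real.continuous_cosh.comp (continuous_const.mul continuous_id)).comp_stronglyMeasurable
    ((stronglyMeasurable_const.add h1).norm)

lemma one_step (ν : Measure Ξ) [IsProbabilityMeasure ν] {Y : Ξ → H}
    (hYm : StronglyMeasurable Y) {b : ℝ} (hb : 0 < b) (hYb : ∀ ξ, ‖Y ξ‖ ≤ b)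
    (hY0 : ∫ ξ, Y ξ ∂ν = 0) {L : ℝ} (hL : 0 ≤ L) (s : H) :
    ∫ ξ, Real.cosh (L * ‖s + Y ξ‖) ∂ν ≤ Real.cosh (L * ‖s‖) * Real.cosh (L * b) := by
  have hYint : Integrable Y ν := by
    apply Integrable.mono' (integrable_const b) hYm.aestronglyMeasurable
    exact Filter.Eventually.of_forall hYb
  set K : ℝ := Real.sinh (L * ‖s‖) * Real.sinh (L * b) / (‖s‖ * b) with hK
  have hint_inner : Integrable (fun ξ => (inner ℝ s (Y ξ) : ℝ)) ν := hYint.const_inner s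
  have hg : Integrable (fun ξ => Real.cosh (L * ‖s‖) * Real.cosh (L * b)
      + K * (inner ℝ s (Y ξ) : ℝ)) ν := (integrable_const _).add (hint_inner.const_mul K)
  have hle := integral_mono_of_nonneg
    (Filter.Eventually.of_forall (fun ξ => (Real.cosh_pos (L * ‖s + Y ξ‖)).le)) hg
    (Filter.Eventually.of_forall (fun ξ => pointwise_cosh_bound s (Y ξ) hL hb (hYb ξ)))
  rw [integral_add (integrable_const _) (hint_inner.const_mul K), integral_const,
    integral_const_mul, integral_inner hYint s, hY0, inner_zero_right] at hle
  simpa using hle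

lemma multi_step (P : Measure Ξ) [IsProbabilityMeasure P] {Y : Ξ → H}
    (hYm : StronglyMeasurable Y) {b L : ℝ} (hb : 0 < b) (hYb : ∀ ξ, ‖Y ξ‖ ≤ b)
    (hY0 : ∫ ξ, Y ξ ∂P = 0) (hL : 0 ≤ L) :
    ∀ (n : ℕ) (s : H),
      ∫ x : Fin n → Ξ, Real.cosh (L * ‖s + ∑ j, Y (x j)‖) ∂(Measure.pi fun _ : Fin n => P)
        ≤ Real.cosh (L * ‖s‖) * Real.cosh (L * b) ^ n := by
  intro n
  induction n with
  | zero =>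
    intro s
    simp only [Finset.univ_eq_empty, Finset.sum_empty, add_zero, pow_zero, mul_one]
    rw [integral_const]
    simp
  | succ n ih =>
    intro s
    have hmp := measurePreserving_piFinSuccAbove (fun _ : Fin (n + 1) => P) 0
    set e := MeasurableEquiv.piFinSuccAbove (fun _ : Fin (n + 1) => Ξ) 0 with he
    set g : Ξ × (Fin n → Ξ) → ℝ :=
      fun p => Real.cosh (L * ‖s + Y p.1 + ∑ j, Y (p.2 j)‖) with hg
    -- identification
    have hcomp : ∀ x : Fin (n + 1) → Ξ,
        g (e x) = Real.cosh (L * ‖s + ∑ j, Y (x j)‖) := by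
      intro x
      simp only [hg, he, MeasurableEquiv.piFinSuccAbove_apply, Fin.insertNthEquiv,
        Fin.zero_succAbove]
      rw [Fin.sum_univ_succ]
      rw [add_assoc]
      rfl
    have hgm : StronglyMeasurable g := by
      have h1 : StronglyMeasurable fun p : Ξ × (Fin n → Ξ) => s + Y p.1 + ∑ j, Y (p.2 j) := by
        apply StronglyMeasurable.add
        · exact stronglyMeasurable_const.add (hYm.comp_measurable measurable_fst)
        · apply Finset.stronglyMeasurable_fun_sum
          intro j _
          exact hYm.comp_measurable ((measurable_pi_apply j).comp measurable_snd)
      exact (Real.continuous_cosh.comp (continuous_const.mul continuous_id)).comp_stronglyMeasurable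
        h1.norm
    have hgbd : ∀ p, ‖g p‖ ≤ Real.cosh (L * (‖s‖ + b + n * b)) := by
      intro p
      rw [hg, Real.norm_eq_abs, abs_of_pos (Real.cosh_pos _), Real.cosh_le_cosh]
      have hn : ‖s + Y p.1 + ∑ j, Y (p.2 j)‖ ≤ ‖s‖ + b + n * b := by
        refine le_trans (norm_add_le _ _) ?_
        have h2 : ‖∑ j, Y (p.2 j)‖ ≤ n * b := by
          refine le_trans (norm_sum_le _ _) ?_
          calc ∑ j : Fin n, ‖Y (p.2 j)‖ ≤ ∑ _j : Fin n, b :=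
                Finset.sum_le_sum fun j _ => hYb _
            _ = n * b := by simp [mul_comm]
        have h1 : ‖s + Y p.1‖ ≤ ‖s‖ + b :=
          le_trans (norm_add_le _ _) (by linarith [hYb p.1])
        linarith
      have hbnd : 0 ≤ ‖s‖ + b + n * b := by positivity
      rw [abs_of_nonneg (by positivity), abs_of_nonneg (by positivity)]
      exact mul_le_mul_of_nonneg_left hn hL
    have hgint : Integrable g ((P.prod (Measure.pi fun _ : Fin n => P))) := by
      apply Integrable.mono' (integrable_const (Real.cosh (L * (‖s‖ + b + n * b))))
        hgm.aestronglyMeasurable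
      exact Filter.Eventually.of_forall hgbd
    have step1 : ∫ x : Fin (n + 1) → Ξ, Real.cosh (L * ‖s + ∑ j, Y (x j)‖)
          ∂(Measure.pi fun _ : Fin (n + 1) => P)
        = ∫ p, g p ∂(P.prod (Measure.pi fun _ : Fin n => P)) := by
      rw [← hmp.integral_comp (MeasurableEquiv.measurableEmbedding e) g]
      exact (integral_congr_ae (Filter.Eventually.of_forall fun x => hcomp x)).symm
    rw [step1, integral_prod _ hgint]
    -- bound inner integral by ih
    have hinner_le : ∀ ξ : Ξ,
        (∫ z : Fin n → Ξ, g (ξ, z) ∂(Measure.pi fun _ : Fin n => P))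
          ≤ Real.cosh (L * ‖s + Y ξ‖) * Real.cosh (L * b) ^ n := fun ξ => ih (s + Y ξ)
    have houter_m : StronglyMeasurable fun ξ => Real.cosh (L * ‖s + Y ξ‖) :=
      (Real.continuous_cosh.comp (continuous_const.mul continuous_id)).comp_stronglyMeasurable
        ((stronglyMeasurable_const.add hYm).norm)
    have houter_int : Integrable (fun ξ => Real.cosh (L * ‖s + Y ξ‖) * Real.cosh (L * b) ^ n) P := by
      apply Integrable.mul_const
      apply Integrable.mono' (integrable_const (Real.cosh (L * (‖s‖ + b))))
        houter_m.aestronglyMeasurable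
      refine Filter.Eventually.of_forall fun ξ => ?_
      rw [Real.norm_eq_abs, abs_of_pos (Real.cosh_pos _), Real.cosh_le_cosh,
        abs_of_nonneg (by positivity), abs_of_nonneg (by positivity)]
      refine mul_le_mul_of_nonneg_left ?_ hL
      exact le_trans (norm_add_le _ _) (by linarith [hYb ξ])
    have step2 : ∫ ξ, (∫ z : Fin n → Ξ, g (ξ, z) ∂(Measure.pi fun _ : Fin n => P)) ∂P
        ≤ ∫ ξ, Real.cosh (L * ‖s + Y ξ‖) * Real.cosh (L * b) ^ n ∂P := by
      apply integral_mono_of_nonneg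
      · refine Filter.Eventually.of_forall fun ξ => ?_
        exact integral_nonneg fun z => (Real.cosh_pos _).le
      · exact houter_int
      · exact Filter.Eventually.of_forall hinner_le
    refine le_trans step2 ?_
    rw [integral_mul_const]
    have := one_step P hYm hb hYb hY0 hL s
    calc (∫ ξ, Real.cosh (L * ‖s + Y ξ‖) ∂P) * Real.cosh (L * b) ^ n
        ≤ (Real.cosh (L * ‖s‖) * Real.cosh (L * b)) * Real.cosh (L * b) ^ n := by
          refine mul_le_mul_of_nonneg_right this ?_
          positivity
      _ = Real.cosh (L * ‖s‖) * Real.cosh (L * b) ^ (n + 1) := by ring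



variable {α : Type*} [MeasurableSpace α]

lemma tail_bound (μ : Measure α) [IsProbabilityMeasure μ]
    {f : α → ℝ} {M : ℝ} (hfm : AEStronglyMeasurable f μ) (hf0 : ∀ ω, 0 ≤ f ω)
    (hfM : ∀ ω, f ω ≤ M) {σ2 : ℝ} (hσ : 0 < σ2)
    (hmgf : ∀ L : ℝ, 0 ≤ L → ∫ ω, Real.cosh (L * f ω) ∂μ ≤ Real.exp (L ^ 2 * σ2 / 2))
    {t : ℝ} (ht : 0 < t) :
    μ {ω | t ≤ f ω} ≤ ENNReal.ofReal (2 * Real.exp (-t ^ 2 / (2 * σ2))) := by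
  set L : ℝ := t / σ2 with hL
  have hL0 : 0 < L := div_pos ht hσ
  set g : α → ℝ := fun ω => Real.cosh (L * f ω) with hg
  have hgm : AEStronglyMeasurable g μ :=
    (Real.continuous_cosh.comp (continuous_const.mul continuous_id)).comp_aestronglyMeasurable hfm
  have hgint : Integrable g μ := by
    apply Integrable.mono' (integrable_const (Real.cosh (L * M))) hgm
    refine Filter.Eventually.of_forall fun ω => ?_
    rw [Real.norm_eq_abs, abs_of_pos (Real.cosh_pos _), Real.cosh_le_cosh,
      abs_of_nonneg (mul_nonneg hL0.le (hf0 ω)),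
      abs_of_nonneg (mul_nonneg hL0.le (le_trans (hf0 ω) (hfM ω)))]
    exact mul_le_mul_of_nonneg_left (hfM ω) hL0.le
  have hmarkov := mul_meas_ge_le_integral_of_nonneg
    (Filter.Eventually.of_forall fun ω => (Real.cosh_pos (L * f ω)).le) hgint (Real.cosh (L * t))
  have hsub : {ω | t ≤ f ω} ⊆ {ω | Real.cosh (L * t) ≤ g ω} := by
    intro ω hω
    simp only [Set.mem_setOf_eq] at hω ⊢
    show Real.cosh (L * t) ≤ Real.cosh (L * f ω)
    rw [Real.cosh_le_cosh, abs_of_nonneg (mul_nonneg hL0.le ht.le),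
      abs_of_nonneg (mul_nonneg hL0.le (hf0 ω))]
    exact mul_le_mul_of_nonneg_left hω hL0.le
  have hmono : μ {ω | t ≤ f ω} ≤ μ {ω | Real.cosh (L * t) ≤ g ω} := measure_mono hsub
  have h2 : (μ {ω | t ≤ f ω}).toReal ≤ 2 * Real.exp (-t ^ 2 / (2 * σ2)) := by
    have hcosh_pos : 0 < Real.cosh (L * t) := Real.cosh_pos _
    have hexp_half : Real.exp (L * t) / 2 ≤ Real.cosh (L * t) := by
      rw [Real.cosh_eq]
      have : 0 < Real.exp (-(L * t)) := Real.exp_pos _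
      linarith
    have htr : (μ {ω | t ≤ f ω}).toReal ≤ (μ {ω | Real.cosh (L * t) ≤ g ω}).toReal :=
      ENNReal.toReal_mono (measure_ne_top μ _) hmono
    have hmv : (μ {ω | Real.cosh (L * t) ≤ g ω}).toReal ≤ (∫ ω, g ω ∂μ) / Real.cosh (L * t) := by
      rw [le_div_iff₀ hcosh_pos, mul_comm]
      exact hmarkov
    have hfinal : (∫ ω, g ω ∂μ) / Real.cosh (L * t)
        ≤ Real.exp (L ^ 2 * σ2 / 2) / (Real.exp (L * t) / 2) := by
      apply div_le_div₀ (Real.exp_pos _).le (hmgf L hL0.le) (by positivity) hexp_half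
    have heq : Real.exp (L ^ 2 * σ2 / 2) / (Real.exp (L * t) / 2)
        = 2 * Real.exp (-t ^ 2 / (2 * σ2)) := by
      rw [div_div_eq_mul_div, mul_comm, mul_div_assoc, ← Real.exp_sub]
      congr 2
      rw [hL]
      field_simp
      ring
    calc (μ {ω | t ≤ f ω}).toReal ≤ _ := htr
      _ ≤ _ := hmv
      _ ≤ _ := hfinal
      _ = _ := heq
  calc μ {ω | t ≤ f ω} = ENNReal.ofReal ((μ {ω | t ≤ f ω}).toReal) := by
        rw [ENNReal.ofReal_toReal (measure_ne_top μ _)]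
    _ ≤ ENNReal.ofReal (2 * Real.exp (-t ^ 2 / (2 * σ2))) := ENNReal.ofReal_le_ofReal h2

lemma moment_from_tail (μ : Measure α) [IsProbabilityMeasure μ]
    {f : α → ℝ} (hfm : AEMeasurable f μ) (hf0 : ∀ ω, 0 ≤ f ω) {β : ℝ} (hβ : 0 < β)
    (htail : ∀ t : ℝ, 0 < t → μ {ω | t ≤ f ω} ≤ ENNReal.ofReal (2 * Real.exp (-β * t ^ 2)))
    {q : ℝ} (hq : 0 < q) :
    ∫ ω, f ω ^ q ∂μ ≤ q * β ^ (-(q / 2)) * Real.Gamma (q / 2) := by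
  have hq1 : (-1 : ℝ) < q - 1 := by linarith
  have hfq_meas : AEStronglyMeasurable (fun ω => f ω ^ q) μ :=
    (hfm.pow aemeasurable_const).aestronglyMeasurable
  have step0 : ∫ ω, f ω ^ q ∂μ = (∫⁻ ω, ENNReal.ofReal (f ω ^ q) ∂μ).toReal := by
    rw [integral_eq_lintegral_of_nonneg_ae
      (Filter.Eventually.of_forall fun ω => Real.rpow_nonneg (hf0 ω) q) hfq_meas]
  have hlayer := lintegral_rpow_eq_lintegral_meas_le_mul μ
    (Filter.Eventually.of_forall hf0) hfm hq
  set h : ℝ → ℝ := fun t => 2 * (t ^ (q - 1) * Real.exp (-β * t ^ 2)) with hh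
  have hhnn : ∀ t : ℝ, t ∈ Ioi (0:ℝ) → 0 ≤ h t := by
    intro t ht
    have h1 : (0:ℝ) ≤ t ^ (q-1) := Real.rpow_nonneg (le_of_lt ht) _
    have h2 := (Real.exp_pos (-β * t ^ 2)).le
    rw [hh]
    positivity
  have hhint : IntegrableOn h (Ioi (0:ℝ)) := by
    have := (integrableOn_rpow_mul_exp_neg_mul_sq hβ hq1).const_mul (2:ℝ)
    simpa [hh, mul_assoc, IntegrableOn] using this
  have hstep : ∫⁻ t in Ioi 0, μ {a | t ≤ f a} * ENNReal.ofReal (t ^ (q - 1))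
      ≤ ∫⁻ t in Ioi 0, ENNReal.ofReal (h t) := by
    apply setLIntegral_mono' measurableSet_Ioi
    intro t ht
    have h1 : μ {a | t ≤ f a} * ENNReal.ofReal (t ^ (q - 1))
        ≤ ENNReal.ofReal (2 * Real.exp (-β * t ^ 2)) * ENNReal.ofReal (t ^ (q - 1)) :=
      mul_le_mul_left (htail t ht) _
    refine le_trans h1 (le_of_eq ?_)
    rw [← ENNReal.ofReal_mul (by positivity)]
    congr 1
    rw [hh]; ring
  have hofreal : ∫⁻ t in Ioi 0, ENNReal.ofReal (h t)
      = ENNReal.ofReal (∫ t in Ioi 0, h t) := by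
    rw [← ofReal_integral_eq_lintegral_ofReal hhint
      ((ae_restrict_iff' measurableSet_Ioi).mpr (Filter.Eventually.of_forall hhnn))]
  have hval : ∫ t in Ioi 0, h t = β ^ (-(q / 2)) * Real.Gamma (q / 2) := by
    have hconv : ∫ t in Ioi (0:ℝ), t ^ (q - 1) * Real.exp (-β * t ^ 2)
        = ∫ t in Ioi (0:ℝ), t ^ (q - 1) * Real.exp (-β * t ^ (2:ℝ)) := by
      refine setIntegral_congr_fun measurableSet_Ioi (fun t _ => ?_)
      rw [show (2:ℝ) = ((2:ℕ):ℝ) by norm_num, Real.rpow_natCast]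
    have hmain := integral_rpow_mul_exp_neg_mul_rpow (p := 2) (q := q - 1) (b := β)
      zero_lt_two hq1 hβ
    have hI : ∫ t in Ioi (0:ℝ), t ^ (q - 1) * Real.exp (-β * t ^ 2)
        = β ^ (-(q / 2)) * (1 / 2) * Real.Gamma (q / 2) := by
      rw [hconv, hmain, neg_div]
      norm_num
    rw [hh, MeasureTheory.integral_const_mul, hI]
    ring
  have hchain : ∫⁻ ω, ENNReal.ofReal (f ω ^ q) ∂μ
      ≤ ENNReal.ofReal (q * (β ^ (-(q / 2)) * Real.Gamma (q / 2))) := by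
    rw [hlayer]
    calc ENNReal.ofReal q * ∫⁻ t in Ioi 0, μ {a | t ≤ f a} * ENNReal.ofReal (t ^ (q - 1))
        ≤ ENNReal.ofReal q * ENNReal.ofReal (∫ t in Ioi 0, h t) := by
          rw [← hofreal]; exact mul_le_mul_right hstep _
      _ = ENNReal.ofReal (q * (β ^ (-(q / 2)) * Real.Gamma (q / 2))) := by
          rw [hval, ← ENNReal.ofReal_mul hq.le]
  rw [step0]
  have hVnn : 0 ≤ q * (β ^ (-(q / 2)) * Real.Gamma (q / 2)) := by positivity
  calc (∫⁻ ω, ENNReal.ofReal (f ω ^ q) ∂μ).toReal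
      ≤ (ENNReal.ofReal (q * (β ^ (-(q / 2)) * Real.Gamma (q / 2)))).toReal :=
        ENNReal.toReal_mono ENNReal.ofReal_ne_top hchain
    _ = q * (β ^ (-(q / 2)) * Real.Gamma (q / 2)) := ENNReal.toReal_ofReal hVnn
    _ = q * β ^ (-(q / 2)) * Real.Gamma (q / 2) := by ring



noncomputable def Efn (x : ℝ) : ℝ :=
  Real.log (Real.Gamma x) - (x - 1/2) * Real.log x + x - Real.log (Real.sqrt (2 * π))

lemma Efn_step {x : ℝ} (hx : 0 < x) :
    Efn x = Efn (x + 1) + ((x + 1/2) * Real.log ((x + 1) / x) - 1) := by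
  have hΓ : Real.Gamma (x + 1) = x * Real.Gamma x := Real.Gamma_add_one hx.ne'
  have hΓpos : 0 < Real.Gamma x := Real.Gamma_pos_of_pos hx
  have hlogΓ : Real.log (Real.Gamma (x + 1)) = Real.log x + Real.log (Real.Gamma x) := by
    rw [hΓ, Real.log_mul hx.ne' hΓpos.ne']
  have hlogdiv : Real.log ((x + 1) / x) = Real.log (x + 1) - Real.log x :=
    Real.log_div (by linarith) hx.ne'
  simp only [Efn, hlogΓ, hlogdiv]
  ring

lemma key_log_ineq {t : ℝ} (ht0 : 0 ≤ t) (ht1 : t < 1) :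
    Real.log (1 + t) - Real.log (1 - t) ≤ 2 * t + 2 * t ^ 3 / (3 * (1 - t ^ 2)) := by
  set G : ℝ → ℝ := fun t => 2 * t + 2 * t ^ 3 / (3 * (1 - t ^ 2))
    - (Real.log (1 + t) - Real.log (1 - t)) with hG
  have hderiv : ∀ u ∈ Set.Ioo (0:ℝ) 1, HasDerivAt G
      (2 + (6 * u ^ 2 * (3 * (1 - u ^ 2)) - 2 * u ^ 3 * (3 * (0 - 2 * u))) / (3 * (1 - u ^ 2)) ^ 2
        - (1 / (1 + u) - (-1) / (1 - u))) u := by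
    intro u hu
    have h1u : (0:ℝ) < 1 + u := by linarith [hu.1]
    have h2u : (0:ℝ) < 1 - u := by linarith [hu.2]
    have hden : 3 * (1 - u ^ 2) ≠ 0 := by nlinarith [hu.1, hu.2]
    have d1 : HasDerivAt (fun t : ℝ => 2 * t) 2 u := by
      simpa using (hasDerivAt_id u).const_mul (2:ℝ)
    have dnum : HasDerivAt (fun t : ℝ => 2 * t ^ 3) (2 * (3 * u ^ 2)) u := by
      have h := (hasDerivAt_pow 3 u).const_mul (2:ℝ)
      exact h.congr_deriv (by push_cast; ring)
    have dden : HasDerivAt (fun t : ℝ => 3 * (1 - t ^ 2)) (3 * (0 - 2 * u)) u := by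
      have h1 : HasDerivAt (fun t : ℝ => 1 - t ^ 2) (0 - 2 * u) u := by
        have h2 := (hasDerivAt_pow 2 u).const_sub (1:ℝ)
        exact h2.congr_deriv (by push_cast; ring)
      exact h1.const_mul (3:ℝ)
    have d2 : HasDerivAt (fun t : ℝ => 2 * t ^ 3 / (3 * (1 - t ^ 2)))
        ((2 * (3 * u ^ 2) * (3 * (1 - u ^ 2)) - 2 * u ^ 3 * (3 * (0 - 2 * u)))
          / (3 * (1 - u ^ 2)) ^ 2) u := dnum.div dden hden
    have d3 : HasDerivAt (fun t : ℝ => Real.log (1 + t)) (1 / (1 + u)) u := by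
      have h := ((hasDerivAt_id u).const_add (1:ℝ)).log h1u.ne'
      simpa using h
    have d4 : HasDerivAt (fun t : ℝ => Real.log (1 - t)) ((-1) / (1 - u)) u := by
      have h1 : HasDerivAt (fun t : ℝ => 1 - t) (-1) u := by
        exact (hasDerivAt_id u).const_sub (1:ℝ)
      have h := h1.log h2u.ne'
      simpa using h
    have := (d1.add d2).sub (d3.sub d4)
    exact this.congr_deriv (by ring)
  have hmono : MonotoneOn G (Set.Ico (0:ℝ) 1) := by
    apply monotoneOn_of_deriv_nonneg (convex_Ico 0 1)
    · apply ContinuousOn.sub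
      · apply ContinuousOn.add
        · exact (continuous_const.mul continuous_id).continuousOn
        · apply ContinuousOn.div
          · exact (continuous_const.mul (continuous_pow 3)).continuousOn
          · exact (continuous_const.mul (continuous_const.sub (continuous_pow 2))).continuousOn
          · intro t ht
            have := ht.1; have := ht.2
            nlinarith
      · apply ContinuousOn.sub
        · apply ContinuousOn.log
          · exact (continuous_const.add continuous_id).continuousOn
          · intro t ht; have := ht.1; nlinarith
        · apply ContinuousOn.log
          · exact (continuous_const.sub continuous_id).continuousOn
          · intro t ht; have := ht.2; nlinarith
    · rw [interior_Ico]
      intro u hu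
      exact (hderiv u hu).differentiableAt.differentiableWithinAt
    · rw [interior_Ico]
      intro u hu
      rw [(hderiv u hu).deriv]
      have h1u : (0:ℝ) < 1 + u := by linarith [hu.1]
      have h2u : (0:ℝ) < 1 - u := by linarith [hu.2]
      have hA : (0:ℝ) < 1 - u ^ 2 := by nlinarith [hu.1, hu.2]
      have hkey : 2 + (6 * u ^ 2 * (3 * (1 - u ^ 2)) - 2 * u ^ 3 * (3 * (0 - 2 * u)))
            / (3 * (1 - u ^ 2)) ^ 2 - (1 / (1 + u) - (-1) / (1 - u))
          = 4 * u ^ 4 / (3 * (1 - u ^ 2) ^ 2) := by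
        field_simp
        ring
      rw [hkey]
      positivity
  have h0 : G 0 = 0 := by
    simp [hG]
  have hmem0 : (0:ℝ) ∈ Set.Ico (0:ℝ) 1 := by constructor <;> norm_num
  have hmemt : t ∈ Set.Ico (0:ℝ) 1 := ⟨ht0, ht1⟩
  have := hmono hmem0 hmemt ht0
  rw [h0] at this
  simp only [hG] at this
  linarith

lemma key_step_ineq {x : ℝ} (hx : 0 < x) :
    (x + 1/2) * Real.log ((x + 1) / x) - 1 ≤ 1 / (12 * x) - 1 / (12 * (x + 1)) := by
  have h2x : (0:ℝ) < 2 * x + 1 := by linarith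
  set t : ℝ := 1 / (2 * x + 1) with htdef
  have ht0 : 0 < t := by positivity
  have ht1 : t < 1 := by
    rw [htdef, div_lt_one h2x]; linarith
  have h1tpos : (0:ℝ) < 1 - t := by
    rw [htdef, sub_pos, div_lt_one h2x]; linarith
  have hids : (x + 1) / x = (1 + t) / (1 - t) := by
    rw [div_eq_div_iff hx.ne' h1tpos.ne']
    rw [htdef]
    field_simp
    ring
  have h1t : (0:ℝ) < 1 - t := h1tpos
  have h1t' : (0:ℝ) < 1 + t := by linarith
  have hlogd : Real.log ((1 + t) / (1 - t)) = Real.log (1 + t) - Real.log (1 - t) :=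
    Real.log_div h1t'.ne' h1t.ne'
  have hlog := key_log_ineq ht0.le ht1
  have hxpos : (0:ℝ) < x + 1/2 := by linarith
  have hmul : (x + 1/2) * Real.log ((x + 1) / x)
      ≤ (x + 1/2) * (2 * t + 2 * t ^ 3 / (3 * (1 - t ^ 2))) := by
    rw [hids, hlogd]
    exact mul_le_mul_of_nonneg_left hlog hxpos.le
  have hid2 : (x + 1/2) * (2 * t + 2 * t ^ 3 / (3 * (1 - t ^ 2))) - 1
      = 1 / (12 * x) - 1 / (12 * (x + 1)) := by
    rw [htdef]
    have hne : (2 * x + 1) ≠ 0 := h2x.ne'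
    have h1t2 : 1 - (1 / (2 * x + 1)) ^ 2 = (4 * x ^ 2 + 4 * x) / (2 * x + 1) ^ 2 := by
      field_simp
      ring
    rw [h1t2]
    have hx1 : x + 1 ≠ 0 := by positivity
    field_simp
    ring
  linarith

lemma Efn_nat {m : ℕ} (hm : 1 ≤ m) :
    Efn m = Real.log (Stirling.stirlingSeq m) - Real.log (Real.sqrt π) := by
  obtain ⟨k, rfl⟩ : ∃ k, m = k + 1 := ⟨m - 1, (Nat.succ_pred_eq_of_pos hm).symm⟩
  have hcast : ((k + 1 : ℕ) : ℝ) = (k : ℝ) + 1 := by push_cast; ring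
  have hk1 : (0:ℝ) < (k : ℝ) + 1 := by positivity
  have hΓ : Real.Gamma ((k + 1 : ℕ) : ℝ) = (Nat.factorial k : ℝ) := by
    rw [hcast, Real.Gamma_nat_eq_factorial]
  have hfactpos : (0:ℝ) < (Nat.factorial k : ℝ) := by
    exact_mod_cast Nat.factorial_pos k
  have hfactcast : ((Nat.factorial (k + 1) : ℕ) : ℝ)
      = ((k:ℝ) + 1) * (Nat.factorial k : ℝ) := by
    rw [Nat.factorial_succ]; push_cast; ring
  simp only [Efn]
  rw [hΓ, Stirling.log_stirlingSeq_formula, hcast, hfactcast,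
    Real.log_mul hk1.ne' hfactpos.ne',
    Real.log_mul two_ne_zero hk1.ne',
    Real.log_div hk1.ne' (Real.exp_ne_zero 1), Real.log_exp,
    Real.log_sqrt (by positivity : (0:ℝ) ≤ 2 * π),
    Real.log_mul two_ne_zero pi_ne_zero,
    Real.log_sqrt pi_pos.le]
  ring

lemma Efn_tendsto_zero : Tendsto (fun m : ℕ => Efn m) atTop (𝓝 0) := by
  have hsq : Tendsto (fun m : ℕ => Real.log (Stirling.stirlingSeq m)) atTop
      (𝓝 (Real.log (Real.sqrt π))) := by
    have hpos : (0:ℝ) < Real.sqrt π := Real.sqrt_pos.mpr pi_pos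
    exact ((Real.continuousAt_log hpos.ne').tendsto).comp Stirling.tendsto_stirlingSeq_sqrt_pi
  have := hsq.sub (tendsto_const_nhds (x := Real.log (Real.sqrt π)))
  rw [sub_self] at this
  apply this.congr'
  filter_upwards [eventually_ge_atTop 1] with m hm
  exact (Efn_nat hm).symm

lemma Efn_floor_bound {y : ℝ} (hy : 1 ≤ y) :
    Efn y ≤ Efn (⌊y⌋₊ : ℝ) + 1 / (2 * (⌊y⌋₊ : ℝ)) := by
  set m := ⌊y⌋₊ with hmdef
  have hy0 : (0:ℝ) < y := by linarith
  have hm1 : 1 ≤ m := Nat.le_floor (by exact_mod_cast hy)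
  have hm0 : (0:ℝ) < (m:ℝ) := by exact_mod_cast Nat.lt_of_lt_of_le Nat.zero_lt_one hm1
  have hmy : (m:ℝ) ≤ y := Nat.floor_le hy0.le
  have hym : y < (m:ℝ) + 1 := Nat.lt_floor_add_one y
  set s : ℝ := y - m with hsdef
  have hs0 : 0 ≤ s := by simp [hsdef]; linarith
  have hs1 : s < 1 := by simp [hsdef]; linarith
  have hΓm : 0 < Real.Gamma (m:ℝ) := Real.Gamma_pos_of_pos hm0
  -- log-convexity
  have hconv := Real.convexOn_log_Gamma.2 (Set.mem_Ioi.mpr hm0)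
    (Set.mem_Ioi.mpr (by linarith : (0:ℝ) < (m:ℝ) + 1)) (by linarith : (0:ℝ) ≤ 1 - s) hs0
    (by ring)
  have hpoint : (1 - s) • ((m:ℝ)) + s • ((m:ℝ) + 1) = y := by
    simp only [smul_eq_mul]; rw [hsdef]; ring
  rw [hpoint] at hconv
  have hΓm1 : Real.log (Real.Gamma ((m:ℝ) + 1))
      = Real.log (m:ℝ) + Real.log (Real.Gamma (m:ℝ)) := by
    rw [Real.Gamma_add_one hm0.ne', Real.log_mul hm0.ne' hΓm.ne']
  simp only [Function.comp_apply, smul_eq_mul] at hconv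
  rw [hΓm1] at hconv
  have hlogΓ : Real.log (Real.Gamma y) ≤ Real.log (Real.Gamma (m:ℝ)) + s * Real.log (m:ℝ) := by
    nlinarith [hconv]
  -- lower bound for log y - log m
  have hloglow : s / y ≤ Real.log y - Real.log (m:ℝ) := by
    have h := Real.log_le_sub_one_of_pos (show (0:ℝ) < (m:ℝ) / y by positivity)
    rw [Real.log_div hm0.ne' hy0.ne'] at h
    have : (m:ℝ) / y - 1 = -(s / y) := by
      rw [hsdef]; field_simp; ring
    rw [this] at h
    linarith
  have hy12 : (0:ℝ) ≤ y - 1/2 := by linarith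
  have hprod : (y - 1/2) * (s / y) ≤ (y - 1/2) * (Real.log y - Real.log (m:ℝ)) :=
    mul_le_mul_of_nonneg_left hloglow hy12
  have hEdiff : Efn y - Efn (m:ℝ)
      = (Real.log (Real.Gamma y) - Real.log (Real.Gamma (m:ℝ)))
        - (y - 1/2) * Real.log y + ((m:ℝ) - 1/2) * Real.log (m:ℝ) + s := by
    simp only [Efn]; rw [hsdef]; ring
  have hcoef : s * Real.log (m:ℝ) + ((m:ℝ) - 1/2) * Real.log (m:ℝ)
      = (y - 1/2) * Real.log (m:ℝ) := by
    rw [hsdef]; ring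
  clear_value s m
  have hexp : (y - 1/2) * (Real.log y - Real.log (m:ℝ))
      = (y - 1/2) * Real.log y - (y - 1/2) * Real.log (m:ℝ) := by ring
  have hstep1 : Efn y - Efn (m:ℝ) ≤ s - (y - 1/2) * (Real.log y - Real.log (m:ℝ)) := by
    rw [hEdiff]
    linarith [hlogΓ, hcoef, hexp]
  have hstep2 : s - (y - 1/2) * (s / y) = s / (2 * y) := by
    field_simp
    ring
  have hstep3 : s / (2 * y) ≤ 1 / (2 * (m:ℝ)) :=
    div_le_div₀ zero_le_one hs1.le (by positivity) (by linarith)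
  linarith [hstep1, hprod, hstep2, hstep3]

lemma Efn_le {x : ℝ} (hx : 0 < x) : Efn x ≤ 1 / (12 * x) := by
  have htel : ∀ n : ℕ, Efn x ≤ Efn (x + n) + (1 / (12 * x) - 1 / (12 * (x + n))) := by
    intro n
    induction n with
    | zero => simp
    | succ n ih =>
      have hxn : (0:ℝ) < x + n := by positivity
      have hstep := Efn_step hxn
      have hkey := key_step_ineq hxn
      have h2 : Efn (x + n) ≤ Efn (x + n + 1)
          + (1 / (12 * (x + n)) - 1 / (12 * (x + n + 1))) := by
        rw [hstep]; linarith
      push_cast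
      have hcast : x + ((n:ℝ) + 1) = x + n + 1 := by ring
      rw [hcast]
      linarith
  have hdrop : ∀ n : ℕ, Efn x - 1 / (12 * x) ≤ Efn (x + n) := by
    intro n
    have hxn : (0:ℝ) < x + n := by positivity
    have h1 : (0:ℝ) ≤ 1 / (12 * (x + n)) := by positivity
    linarith [htel n]
  have hfloor_tendsto : Tendsto (fun n : ℕ => ⌊x + (n:ℝ)⌋₊) atTop atTop := by
    apply tendsto_nat_floor_atTop.comp
    exact tendsto_atTop_add_const_left atTop x tendsto_natCast_atTop_atTop
  have hbase : Tendsto (fun m : ℕ => Efn m + 1 / (2 * (m:ℝ))) atTop (𝓝 0) := by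
    have h2 : Tendsto (fun m : ℕ => 1 / (2 * (m:ℝ))) atTop (𝓝 0) := by
      have h3 := tendsto_const_div_atTop_nhds_zero_nat (1/2 : ℝ)
      apply h3.congr
      intro m
      rw [div_div]
    simpa using Efn_tendsto_zero.add h2
  have hutend : Tendsto (fun n : ℕ => Efn ((⌊x + (n:ℝ)⌋₊ : ℕ) : ℝ)
      + 1 / (2 * ((⌊x + (n:ℝ)⌋₊ : ℕ) : ℝ))) atTop (𝓝 0) := hbase.comp hfloor_tendsto
  have hband : ∀ᶠ n : ℕ in atTop, Efn x - 1 / (12 * x)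
      ≤ Efn ((⌊x + (n:ℝ)⌋₊ : ℕ) : ℝ) + 1 / (2 * ((⌊x + (n:ℝ)⌋₊ : ℕ) : ℝ)) := by
    filter_upwards [eventually_ge_atTop 1] with n hn
    have hy1 : 1 ≤ x + (n:ℝ) := by
      have h4 : (1:ℝ) ≤ (n:ℝ) := by exact_mod_cast hn
      linarith
    exact le_trans (hdrop n) (Efn_floor_bound hy1)
  have := ge_of_tendsto hutend hband
  linarith

lemma Gamma_le_stirling {x : ℝ} (hx : 0 < x) :
    Real.Gamma x ≤ Real.sqrt (2 * π / x) * (x / Real.exp 1) ^ x * Real.exp (1 / (12 * x)) := by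
  have hE := Efn_le hx
  have hΓpos : 0 < Real.Gamma x := Real.Gamma_pos_of_pos hx
  have hsq : Real.sqrt (2 * π / x) = Real.exp ((Real.log (2 * π) - Real.log x) / 2) := by
    rw [← Real.log_div (by positivity) hx.ne', ← Real.log_sqrt (by positivity),
      Real.exp_log (Real.sqrt_pos.mpr (by positivity))]
  have hpow : (x / Real.exp 1) ^ x = Real.exp (x * (Real.log x - 1)) := by
    rw [Real.rpow_def_of_pos (by positivity)]
    congr 1
    rw [Real.log_div hx.ne' (Real.exp_ne_zero 1), Real.log_exp]
    ring
  have hlog2π : Real.log (Real.sqrt (2 * π)) = Real.log (2 * π) / 2 :=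
    Real.log_sqrt (by positivity)
  rw [hsq, hpow, ← Real.exp_add, ← Real.exp_add]
  calc Real.Gamma x = Real.exp (Real.log (Real.Gamma x)) := (Real.exp_log hΓpos).symm
    _ ≤ _ := by
        apply Real.exp_le_exp.mpr
        have hlg : Real.log (Real.Gamma x) = Efn x + (x - 1/2) * Real.log x - x
            + Real.log (Real.sqrt (2 * π)) := by
          simp only [Efn]; ring
        rw [hlg, hlog2π]
        have hexpand : (x - 1/2) * Real.log x = x * Real.log x - Real.log x / 2 := by ring
        have hexpand2 : x * (Real.log x - 1) = x * Real.log x - x := by ring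
        linarith


end MEB

open MeasureTheory

noncomputable def empEmb {Ξ H : Type*} [NormedAddCommGroup H] [InnerProductSpace ℝ H]
    (φ : Ξ → H) {n : ℕ} (x : Fin n → Ξ) : H := (n : ℝ)⁻¹ • ∑ j, φ (x j)

/-- **Moment error bound for the empirical mean embedding.**
For any real `q > 0`, `E[‖μ̂ − μ_P‖^q] ≤ √(4πq) · (4Cq/(e·n))^{q/2} · e^{1/(6q)}`,
the expectation being over the `n` i.i.d. samples from `P` (modeled by the product
measure on `Fin n → Ξ`). -/
theorem moment_error_bound_for_empirical_mean_embedding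
    {H : Type*} [NormedAddCommGroup H] [InnerProductSpace ℝ H] [CompleteSpace H]
    {Ξ : Type*} [MeasurableSpace Ξ]
    (C : ℝ) (hC : 0 < C)
    (φ : Ξ → H) (hφm : StronglyMeasurable φ) (hφ : ∀ ξ, ‖φ ξ‖ ^ 2 ≤ C)
    (P : Measure Ξ) [IsProbabilityMeasure P]
    (n : ℕ) (hn : 0 < n)
    (q : ℝ) (hq : 0 < q) :
    ∫ x : Fin n → Ξ, ‖empEmb φ x - ∫ ξ, φ ξ ∂P‖ ^ q ∂(Measure.pi fun _ : Fin n => P) ≤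
      Real.sqrt (4 * Real.pi * q) * (4 * C * q / (Real.exp 1 * n)) ^ (q / 2) *
        Real.exp (1 / (6 * q)) := by
  have hn0 : (0:ℝ) < (n:ℝ) := by exact_mod_cast hn
  have hsC : 0 < Real.sqrt C := Real.sqrt_pos.mpr hC
  set μP : H := ∫ ξ, φ ξ ∂P with hμP
  have hφnorm : ∀ ξ, ‖φ ξ‖ ≤ Real.sqrt C := by
    intro ξ
    nlinarith [hφ ξ, Real.sq_sqrt hC.le, Real.sqrt_nonneg C, norm_nonneg (φ ξ)]
  have hφint : Integrable φ P := by
    apply Integrable.mono' (integrable_const (Real.sqrt C)) hφm.aestronglyMeasurable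
    exact Filter.Eventually.of_forall hφnorm
  have hμPnorm : ‖μP‖ ≤ Real.sqrt C := by
    rw [hμP]
    calc ‖∫ ξ, φ ξ ∂P‖ ≤ ∫ ξ, ‖φ ξ‖ ∂P := norm_integral_le_integral_norm φ
      _ ≤ ∫ _ξ, Real.sqrt C ∂P := by
          apply integral_mono_of_nonneg (Filter.Eventually.of_forall fun ξ => norm_nonneg _)
            (integrable_const _) (Filter.Eventually.of_forall hφnorm)
      _ = Real.sqrt C := by simp
  set Y : Ξ → H := fun ξ => (n : ℝ)⁻¹ • (φ ξ - μP) with hY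
  set b : ℝ := 2 * Real.sqrt C / n with hb
  have hbpos : 0 < b := by rw [hb]; positivity
  have hYm : StronglyMeasurable Y := (hφm.sub stronglyMeasurable_const).const_smul _
  have hYb : ∀ ξ, ‖Y ξ‖ ≤ b := by
    intro ξ
    show ‖(n : ℝ)⁻¹ • (φ ξ - μP)‖ ≤ b
    rw [norm_smul, norm_inv, Real.norm_natCast]
    calc (n:ℝ)⁻¹ * ‖φ ξ - μP‖ ≤ (n:ℝ)⁻¹ * (2 * Real.sqrt C) := by
          apply mul_le_mul_of_nonneg_left _ (by positivity)
          calc ‖φ ξ - μP‖ ≤ ‖φ ξ‖ + ‖μP‖ := norm_sub_le _ _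
            _ ≤ 2 * Real.sqrt C := by linarith [hφnorm ξ, hμPnorm]
      _ = b := by rw [hb]; field_simp
  have hY0 : ∫ ξ, Y ξ ∂P = 0 := by
    show ∫ ξ, (n : ℝ)⁻¹ • (φ ξ - μP) ∂P = 0
    rw [integral_smul, integral_sub hφint (integrable_const _)]
    simp [hμP]
  have hrewrite : ∀ x : Fin n → Ξ, empEmb φ x - μP = ∑ j, Y (x j) := by
    intro x
    show empEmb φ x - μP = ∑ j : Fin n, (n : ℝ)⁻¹ • (φ (x j) - μP)
    rw [← Finset.smul_sum, Finset.sum_sub_distrib, Finset.sum_const, Finset.card_univ,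
      Fintype.card_fin, smul_sub, empEmb]
    congr 1
    rw [← Nat.cast_smul_eq_nsmul ℝ n μP, smul_smul, inv_mul_cancel₀ hn0.ne', one_smul]
  set f : (Fin n → Ξ) → ℝ := fun x => ‖∑ j, Y (x j)‖ with hf
  have hfsm : StronglyMeasurable f := by
    apply StronglyMeasurable.norm
    apply Finset.stronglyMeasurable_fun_sum
    intro j _
    exact hYm.comp_measurable (measurable_pi_apply j)
  have hf0 : ∀ x, 0 ≤ f x := fun x => norm_nonneg _
  have hfM : ∀ x, f x ≤ n * b := by
    intro x
    show ‖∑ j : Fin n, Y (x j)‖ ≤ n * b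
    refine le_trans (norm_sum_le _ _) ?_
    calc ∑ j : Fin n, ‖Y (x j)‖ ≤ ∑ _j : Fin n, b := Finset.sum_le_sum fun j _ => hYb _
      _ = n * b := by simp [mul_comm]
  set σ2 : ℝ := n * b ^ 2 with hσ2
  have hσ2pos : 0 < σ2 := by rw [hσ2]; positivity
  have hmgf : ∀ L : ℝ, 0 ≤ L →
      ∫ x, Real.cosh (L * f x) ∂(Measure.pi fun _ : Fin n => P)
        ≤ Real.exp (L ^ 2 * σ2 / 2) := by
    intro L hL
    have hms := MEB.multi_step P hYm hbpos hYb hY0 hL n 0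
    simp only [zero_add, norm_zero, mul_zero, Real.cosh_zero, one_mul] at hms
    have hchain : Real.cosh (L * b) ^ n ≤ Real.exp (L ^ 2 * σ2 / 2) := by
      calc Real.cosh (L * b) ^ n ≤ Real.exp ((L * b) ^ 2 / 2) ^ n := by
            apply pow_le_pow_left₀ (Real.cosh_pos _).le (MEB.cosh_le_exp_half_sq (L * b))
        _ = Real.exp (L ^ 2 * σ2 / 2) := by
            rw [← Real.exp_nat_mul, hσ2]
            congr 1
            ring
    exact le_trans hms hchain
  have htail : ∀ t : ℝ, 0 < t →
      (Measure.pi fun _ : Fin n => P) {x | t ≤ f x}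
        ≤ ENNReal.ofReal (2 * Real.exp (-(1 / (2 * σ2)) * t ^ 2)) := by
    intro t ht
    have := MEB.tail_bound (Measure.pi fun _ : Fin n => P) hfsm.aestronglyMeasurable hf0 hfM
      hσ2pos hmgf ht
    convert this using 3
    ring
  have hβpos : (0:ℝ) < 1 / (2 * σ2) := by positivity
  have hmom := MEB.moment_from_tail (Measure.pi fun _ : Fin n => P)
    hfsm.measurable.aemeasurable hf0 hβpos htail hq
  have hβpow : (1 / (2 * σ2) : ℝ) ^ (-(q / 2)) = (2 * σ2) ^ (q / 2) := by
    rw [one_div, Real.inv_rpow (by positivity), Real.rpow_neg (by positivity), inv_inv]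
  rw [hβpow] at hmom
  have hq2 : (0:ℝ) < q / 2 := by positivity
  have hΓ := MEB.Gamma_le_stirling hq2
  have hfactor : (0:ℝ) ≤ q * (2 * σ2) ^ (q / 2) := by positivity
  have hmom2 : ∫ x, f x ^ q ∂(Measure.pi fun _ : Fin n => P)
      ≤ q * (2 * σ2) ^ (q / 2) * (Real.sqrt (2 * π / (q / 2))
          * ((q / 2) / Real.exp 1) ^ (q / 2) * Real.exp (1 / (12 * (q / 2)))) := by
    calc ∫ x, f x ^ q ∂(Measure.pi fun _ : Fin n => P)
        ≤ q * (2 * σ2) ^ (q / 2) * Real.Gamma (q / 2) := by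
          have := hmom
          linarith [this]
      _ ≤ _ := mul_le_mul_of_nonneg_left hΓ hfactor
  have h2σ : 2 * σ2 = 8 * C / n := by
    rw [hσ2, hb, div_pow, mul_pow, Real.sq_sqrt hC.le]
    field_simp
    ring
  have eq1 : q * Real.sqrt (2 * π / (q / 2)) = Real.sqrt (4 * π * q) := by
    have h1 : 2 * π / (q / 2) = 4 * π / q := by
      field_simp
      ring
    have h2 : 4 * π * q = 4 * π / q * q ^ 2 := by
      field_simp
    rw [h1, h2, Real.sqrt_mul (by positivity) (q ^ 2), Real.sqrt_sq hq.le]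
    ring
  have eq2 : (2 * σ2) ^ (q / 2) * ((q / 2) / Real.exp 1) ^ (q / 2)
      = (4 * C * q / (Real.exp 1 * n)) ^ (q / 2) := by
    rw [← Real.mul_rpow (by positivity) (by positivity)]
    congr 1
    rw [h2σ]
    field_simp
    ring
  have eq3 : 12 * (q / 2) = 6 * q := by ring
  have hgoalrw : ∫ x : Fin n → Ξ, ‖empEmb φ x - μP‖ ^ q ∂(Measure.pi fun _ : Fin n => P)
      = ∫ x, f x ^ q ∂(Measure.pi fun _ : Fin n => P) := by
    apply integral_congr_ae
    apply Filter.Eventually.of_forall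
    intro x
    show ‖empEmb φ x - μP‖ ^ q = f x ^ q
    rw [hrewrite x]
  rw [hgoalrw]
  calc ∫ x, f x ^ q ∂(Measure.pi fun _ : Fin n => P)
      ≤ q * (2 * σ2) ^ (q / 2) * (Real.sqrt (2 * π / (q / 2))
          * ((q / 2) / Real.exp 1) ^ (q / 2) * Real.exp (1 / (12 * (q / 2)))) := hmom2
    _ = q * Real.sqrt (2 * π / (q / 2))
          * ((2 * σ2) ^ (q / 2) * ((q / 2) / Real.exp 1) ^ (q / 2))
          * Real.exp (1 / (12 * (q / 2))) := by ring
    _ = Real.sqrt (4 * Real.pi * q) * (4 * C * q / (Real.exp 1 * n)) ^ (q / 2) *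
        Real.exp (1 / (6 * q)) := by rw [eq1, eq2, eq3]
end

section
/- For every t ≥ 0, the deviation of the empirical mean embedding satisfies the sub-Gaussian tail bound P(‖μ̂ − μ_P‖_H ≥ t) ≤ 2·exp(−n t² / (8C)), where the probability is over the n i.i.d. samples from P. -/
open MeasureTheory
open scoped ENNReal

lemma aux_summable (x : ℝ) : Summable (fun k : ℕ => x ^ k / (Nat.factorial (2*k) : ℝ)) := by
  refine Summable.of_norm_bounded (Real.summable_pow_div_factorial |x|) ?_
  intro k
  rw [norm_div, norm_pow, Real.norm_eq_abs, Real.norm_eq_abs, Nat.abs_cast]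
  gcongr
  omega

lemma cosh_sqrt_eq {x : ℝ} (hx : 0 ≤ x) :
    Real.cosh (Real.sqrt x) = ∑' k : ℕ, x ^ k / (Nat.factorial (2*k) : ℝ) := by
  rw [Real.cosh_eq_tsum]
  exact tsum_congr fun k => by rw [pow_mul, Real.sq_sqrt hx]

lemma my_cosh_mono {x y : ℝ} (h0 : 0 ≤ x) (h : x ≤ y) : Real.cosh x ≤ Real.cosh y :=
  Real.cosh_le_cosh.2 (by rw [abs_of_nonneg h0, abs_of_nonneg (h0.trans h)]; exact h)

lemma convexOn_cosh_sqrt : ConvexOn ℝ (Set.Ici (0:ℝ)) (fun x => Real.cosh (Real.sqrt x)) := by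
  refine ⟨convex_Ici 0, fun x hx y hy a b ha hb hab => ?_⟩
  simp only [smul_eq_mul]
  have hx' : (0:ℝ) ≤ x := hx
  have hy' : (0:ℝ) ≤ y := hy
  have hxy : 0 ≤ a * x + b * y := add_nonneg (mul_nonneg ha hx') (mul_nonneg hb hy')
  rw [cosh_sqrt_eq hxy, cosh_sqrt_eq hx', cosh_sqrt_eq hy']
  have h1 : ∀ k : ℕ, (a*x+b*y)^k / ((Nat.factorial (2*k)) : ℝ) ≤
      a * (x^k/((Nat.factorial (2*k)) : ℝ)) + b * (y^k/((Nat.factorial (2*k)) : ℝ)) := by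
    intro k
    have hpow := (convexOn_pow (𝕜 := ℝ) k).2 hx hy ha hb hab
    simp only [smul_eq_mul] at hpow
    have he : a * (x^k/((Nat.factorial (2*k)) : ℝ)) + b * (y^k/((Nat.factorial (2*k)) : ℝ))
        = (a*x^k + b*y^k)/((Nat.factorial (2*k)) : ℝ) := by ring
    rw [he]
    gcongr
  calc ∑' k : ℕ, (a*x+b*y)^k / ((Nat.factorial (2*k)) : ℝ)
      ≤ ∑' k : ℕ, (a * (x^k/((Nat.factorial (2*k)) : ℝ)) + b * (y^k/((Nat.factorial (2*k)) : ℝ))) :=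
        Summable.tsum_le_tsum h1 (aux_summable _)
          (((aux_summable x).mul_left a).add ((aux_summable y).mul_left b))
    _ = a * ∑' k : ℕ, x^k/((Nat.factorial (2*k)) : ℝ) + b * ∑' k : ℕ, y^k/((Nat.factorial (2*k)) : ℝ) := by
        rw [Summable.tsum_add ((aux_summable x).mul_left a) ((aux_summable y).mul_left b),
          tsum_mul_left, tsum_mul_left]

lemma coshB {H : Type*} [NormedAddCommGroup H] [InnerProductSpace ℝ H]
    {l : ℝ} (hl : 0 ≤ l) (v u : H) :
    Real.cosh (l * ‖v + u‖) + Real.cosh (l * ‖v - u‖) ≤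
      2 * (Real.cosh (l * ‖v‖) * Real.cosh (l * ‖u‖)) := by
  set h : ℝ → ℝ := fun x => Real.cosh (Real.sqrt x) with hh
  have key : ∀ r : ℝ, 0 ≤ r → Real.cosh (l * r) = h ((l*r)^2) := by
    intro r hr
    simp only [hh, Real.sqrt_sq (mul_nonneg hl hr)]
  set x := (l*‖v+u‖)^2 with hxdef
  set y := (l*‖v-u‖)^2 with hydef
  set X := (l*(‖v‖+‖u‖))^2 with hXdef
  set Y := (l*(‖v‖-‖u‖))^2 with hYdef
  have par := parallelogram_law_with_norm ℝ v u
  have hS : x + y = X + Y := by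
    rw [hxdef, hydef, hXdef, hYdef]; linear_combination l^2 * par
  have h0Y : (0:ℝ) ≤ Y := sq_nonneg _
  have h0x : (0:ℝ) ≤ x := sq_nonneg _
  have h0y : (0:ℝ) ≤ y := sq_nonneg _
  have hxX : x ≤ X := by
    rw [hxdef, hXdef]
    exact pow_le_pow_left₀ (mul_nonneg hl (norm_nonneg _))
      (mul_le_mul_of_nonneg_left (norm_add_le v u) hl) 2
  have hyX : y ≤ X := by
    rw [hydef, hXdef]
    exact pow_le_pow_left₀ (mul_nonneg hl (norm_nonneg _))
      (mul_le_mul_of_nonneg_left (norm_sub_le v u) hl) 2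
  have hYX : Y ≤ X := by linarith
  have hYx : Y ≤ x := by linarith
  -- convexity of k on Icc Y X
  have hk : ConvexOn ℝ (Set.Icc Y X) (fun z => h z + h (x + y - z)) := by
    refine ⟨convex_Icc _ _, fun z1 hz1 z2 hz2 a b ha hb hab => ?_⟩
    simp only [smul_eq_mul]
    have e1 : x + y - (a*z1 + b*z2) = a*(x+y-z1) + b*(x+y-z2) := by
      linear_combination (-(x+y)) * hab
    have hz10 : z1 ∈ Set.Ici (0:ℝ) := le_trans h0Y hz1.1
    have hz20 : z2 ∈ Set.Ici (0:ℝ) := le_trans h0Y hz2.1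
    have hz1' : x + y - z1 ∈ Set.Ici (0:ℝ) := by
      simp only [Set.mem_Ici]; linarith [hz1.2]
    have hz2' : x + y - z2 ∈ Set.Ici (0:ℝ) := by
      simp only [Set.mem_Ici]; linarith [hz2.2]
    have c1 := convexOn_cosh_sqrt.2 hz10 hz20 ha hb hab
    have c2 := convexOn_cosh_sqrt.2 hz1' hz2' ha hb hab
    simp only [smul_eq_mul] at c1 c2
    rw [e1]
    calc h (a*z1 + b*z2) + h (a*(x+y-z1) + b*(x+y-z2))
        ≤ (a * h z1 + b * h z2) + (a * h (x+y-z1) + b * h (x+y-z2)) := add_le_add c1 c2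
      _ = a * (h z1 + h (x+y-z1)) + b * (h z2 + h (x+y-z2)) := by ring
  have hxseg : x ∈ segment ℝ Y X := by
    rw [segment_eq_Icc hYX]; exact ⟨hYx, hxX⟩
  have hmax := hk.le_on_segment (Set.left_mem_Icc.2 hYX) (Set.right_mem_Icc.2 hYX) hxseg
  have hkY : x + y - Y = X := by linarith
  have hkX : x + y - X = Y := by linarith
  have hkx : x + y - x = y := by ring
  rw [hkx, hkY, hkX] at hmax
  have hmax' : h x + h y ≤ h X + h Y := by
    rcases max_cases (h Y + h X) (h X + h Y) with ⟨he, _⟩ | ⟨he, _⟩ <;> rw [he] at hmax <;> linarith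
  have eX : h X = Real.cosh (l*(‖v‖+‖u‖)) := by
    simp only [hh, hXdef, Real.sqrt_sq_eq_abs, Real.cosh_abs]
  have eY : h Y = Real.cosh (l*(‖v‖-‖u‖)) := by
    simp only [hh, hYdef, Real.sqrt_sq_eq_abs, Real.cosh_abs]
  have e1 : Real.cosh (l * ‖v + u‖) = h x := key _ (norm_nonneg _)
  have e2 : Real.cosh (l * ‖v - u‖) = h y := key _ (norm_nonneg _)
  have efin : Real.cosh (l*(‖v‖+‖u‖)) + Real.cosh (l*(‖v‖-‖u‖))
      = 2 * (Real.cosh (l * ‖v‖) * Real.cosh (l * ‖u‖)) := by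
    have ea : l*(‖v‖+‖u‖) = l*‖v‖ + l*‖u‖ := by ring
    have eb : l*(‖v‖-‖u‖) = l*‖v‖ - l*‖u‖ := by ring
    rw [ea, eb, Real.cosh_add, Real.cosh_sub]; ring
  rw [e1, e2]
  calc h x + h y ≤ h X + h Y := hmax'
    _ = 2 * (Real.cosh (l * ‖v‖) * Real.cosh (l * ‖u‖)) := by rw [eX, eY, efin]

lemma convexOn_coshnorm {H : Type*} [NormedAddCommGroup H] [InnerProductSpace ℝ H]
    {l : ℝ} (hl : 0 ≤ l) :
    ConvexOn ℝ Set.univ (fun w : H => Real.cosh (l * ‖w‖)) := by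
  have hcosh : ConvexOn ℝ Set.univ Real.cosh := by
    have h2 : ConvexOn ℝ Set.univ (fun x : ℝ => Real.exp (-x)) := by
      refine ⟨convex_univ, fun x _ y _ a b ha hb hab => ?_⟩
      have h := convexOn_exp.2 (Set.mem_univ (-x)) (Set.mem_univ (-y)) ha hb hab
      simp only [smul_eq_mul] at h ⊢
      calc Real.exp (-(a*x+b*y)) = Real.exp (a*(-x)+b*(-y)) := by ring_nf
        _ ≤ a * Real.exp (-x) + b * Real.exp (-y) := h
    have h1 := convexOn_exp.add h2
    have heq : Real.cosh = fun x : ℝ => (1/2 : ℝ) • ((fun x : ℝ => Real.exp x + Real.exp (-x)) x) := by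
      funext x; rw [Real.cosh_eq]; simp [smul_eq_mul]; ring
    rw [heq]
    exact h1.smul (by norm_num : (0:ℝ) ≤ 1/2)
  refine ⟨convex_univ, fun w1 _ w2 _ a b ha hb hab => ?_⟩
  simp only [smul_eq_mul]
  have h1 : ‖a • w1 + b • w2‖ ≤ a*‖w1‖ + b*‖w2‖ := by
    refine (norm_add_le _ _).trans ?_
    rw [norm_smul, norm_smul, Real.norm_eq_abs, Real.norm_eq_abs, abs_of_nonneg ha,
      abs_of_nonneg hb]
  have h2 : Real.cosh (l*‖a•w1+b•w2‖) ≤ Real.cosh (l*(a*‖w1‖+b*‖w2‖)) :=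
    my_cosh_mono (mul_nonneg hl (norm_nonneg _)) (mul_le_mul_of_nonneg_left h1 hl)
  have h3 := hcosh.2 (Set.mem_univ (l*‖w1‖)) (Set.mem_univ (l*‖w2‖)) ha hb hab
  simp only [smul_eq_mul] at h3
  have harg : l*(a*‖w1‖+b*‖w2‖) = a*(l*‖w1‖) + b*(l*‖w2‖) := by ring
  rw [harg] at h2
  exact h2.trans h3

lemma stepC {H : Type*} [NormedAddCommGroup H] [InnerProductSpace ℝ H] [CompleteSpace H]
    {Ξ : Type*} [MeasurableSpace Ξ]
    (l sC : ℝ) (hl : 0 ≤ l)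
    (φ : Ξ → H) (hφm : StronglyMeasurable φ) (hφ : ∀ ξ, ‖φ ξ‖ ≤ sC)
    (P : Measure Ξ) [IsProbabilityMeasure P] (v : H) :
    ∫ ξ, Real.cosh (l * ‖v + (φ ξ - ∫ ξ', φ ξ' ∂P)‖) ∂P ≤
      Real.cosh (l * ‖v‖) * Real.cosh (l * (2 * sC)) := by
  set μ0 := ∫ ξ', φ ξ' ∂P with hμ0
  have hφint : Integrable φ P :=
    Integrable.mono' (integrable_const sC) hφm.aestronglyMeasurable
      (Filter.Eventually.of_forall hφ)
  set g : H → ℝ := fun w => Real.cosh (l * ‖w‖) with hg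
  have hgcont : Continuous g := Real.continuous_cosh.comp (continuous_const.mul continuous_norm)
  have hgnn : ∀ w : H, 0 ≤ g w := fun w => (Real.cosh_pos _).le
  have hgmono : ∀ (w : H) (r : ℝ), ‖w‖ ≤ r → g w ≤ Real.cosh (l * r) := fun w r hw =>
    my_cosh_mono (mul_nonneg hl (norm_nonneg _)) (mul_le_mul_of_nonneg_left hw hl)
  have hμ0n : ‖μ0‖ ≤ sC := by
    rw [hμ0]
    refine (norm_integral_le_integral_norm φ).trans ?_
    calc ∫ ξ, ‖φ ξ‖ ∂P ≤ ∫ _, sC ∂P := integral_mono hφint.norm (integrable_const _) hφ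
      _ = sC := by simp
  set B := Real.cosh (l * (‖v‖ + 2*sC)) with hB
  have hbd : ∀ ξ ξ' : Ξ, g (v + (φ ξ - φ ξ')) ≤ B := by
    intro ξ ξ'
    refine hgmono _ _ ?_
    calc ‖v + (φ ξ - φ ξ')‖ ≤ ‖v‖ + ‖φ ξ - φ ξ'‖ := norm_add_le _ _
      _ ≤ ‖v‖ + (‖φ ξ‖ + ‖φ ξ'‖) := by gcongr; exact norm_sub_le _ _
      _ ≤ ‖v‖ + 2*sC := by have := hφ ξ; have := hφ ξ'; linarith
  have hjen : ∀ ξ, g (v + (φ ξ - μ0)) ≤ ∫ ξ', g (v + (φ ξ - φ ξ')) ∂P := by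
    intro ξ
    have hfun : (fun ξ' => v + (φ ξ - φ ξ')) = (fun ξ' => (v + φ ξ) - φ ξ') := by
      funext ξ'; rw [add_sub_assoc]
    have hint1 : Integrable (fun ξ' => v + (φ ξ - φ ξ')) P := by
      rw [hfun]; exact (integrable_const _).sub hφint
    have hint2 : Integrable (g ∘ fun ξ' => v + (φ ξ - φ ξ')) P := by
      refine Integrable.mono' (integrable_const B) ?_ ?_
      · exact hgcont.comp_aestronglyMeasurable hint1.aestronglyMeasurable
      · refine Filter.Eventually.of_forall fun ξ' => ?_
        rw [Function.comp_apply, Real.norm_eq_abs, abs_of_nonneg (hgnn _)]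
        exact hbd ξ ξ'
    have hJ := (convexOn_coshnorm (H := H) hl).map_average_le hgcont.continuousOn
      isClosed_univ (Filter.Eventually.of_forall fun _ => Set.mem_univ _) hint1 hint2
    rw [average_eq_integral, average_eq_integral] at hJ
    have hEq : ∫ ξ', (v + (φ ξ - φ ξ')) ∂P = v + (φ ξ - μ0) := by
      rw [hfun, integral_sub (integrable_const _) hφint, integral_const]
      simp [measure_univ, add_sub_assoc, hμ0]
    rw [hEq] at hJ
    exact hJ
  set F : Ξ × Ξ → ℝ := fun z => g (v + (φ z.1 - φ z.2)) with hF
  have hFsm : StronglyMeasurable F := by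
    apply hgcont.comp_stronglyMeasurable
    exact stronglyMeasurable_const.add
      ((hφm.comp_measurable measurable_fst).sub (hφm.comp_measurable measurable_snd))
  have hFint : Integrable F (P.prod P) := by
    refine Integrable.mono' (integrable_const B) hFsm.aestronglyMeasurable ?_
    refine Filter.Eventually.of_forall fun z => ?_
    rw [Real.norm_eq_abs, abs_of_nonneg (hgnn _)]
    exact hbd z.1 z.2
  have hIv : Integrable (fun ξ => g (v + (φ ξ - μ0))) P := by
    refine Integrable.mono' (integrable_const B) ?_ ?_
    · refine hgcont.comp_aestronglyMeasurable ?_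
      exact aestronglyMeasurable_const.add
        (hφm.aestronglyMeasurable.sub aestronglyMeasurable_const)
    · refine Filter.Eventually.of_forall fun ξ => ?_
      rw [Real.norm_eq_abs, abs_of_nonneg (hgnn _)]
      refine hgmono _ _ ?_
      calc ‖v + (φ ξ - μ0)‖ ≤ ‖v‖ + ‖φ ξ - μ0‖ := norm_add_le _ _
        _ ≤ ‖v‖ + (‖φ ξ‖ + ‖μ0‖) := by gcongr; exact norm_sub_le _ _
        _ ≤ ‖v‖ + 2*sC := by have := hφ ξ; linarith [hμ0n]
  have step1 : ∫ ξ, g (v + (φ ξ - μ0)) ∂P ≤ ∫ z, F z ∂(P.prod P) := by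
    rw [integral_prod _ hFint]
    exact integral_mono hIv hFint.integral_prod_left hjen
  have hFsw : Integrable (fun z : Ξ × Ξ => g (v - (φ z.1 - φ z.2))) (P.prod P) := by
    refine Integrable.mono' (integrable_const B) ?_ ?_
    · refine (hgcont.comp_stronglyMeasurable ?_).aestronglyMeasurable
      exact stronglyMeasurable_const.sub
        ((hφm.comp_measurable measurable_fst).sub (hφm.comp_measurable measurable_snd))
    · refine Filter.Eventually.of_forall fun z => ?_
      rw [Real.norm_eq_abs, abs_of_nonneg (hgnn _)]
      refine hgmono _ _ ?_
      calc ‖v - (φ z.1 - φ z.2)‖ ≤ ‖v‖ + ‖φ z.1 - φ z.2‖ := norm_sub_le _ _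
        _ ≤ ‖v‖ + (‖φ z.1‖ + ‖φ z.2‖) := by gcongr; exact norm_sub_le _ _
        _ ≤ ‖v‖ + 2*sC := by have := hφ z.1; have := hφ z.2; linarith
  have hswap : ∫ z, F z ∂(P.prod P) = ∫ z, g (v - (φ z.1 - φ z.2)) ∂(P.prod P) := by
    rw [← integral_prod_swap F]
    refine integral_congr_ae (Filter.Eventually.of_forall fun z => ?_)
    show g (v + (φ z.2 - φ z.1)) = g (v - (φ z.1 - φ z.2))
    congr 1
    abel
  have step2 : ∫ z, F z ∂(P.prod P) ≤ Real.cosh (l*‖v‖) * Real.cosh (l*(2*sC)) := by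
    have h2 : (2:ℝ) * ∫ z, F z ∂(P.prod P)
        = ∫ z, (F z + g (v - (φ z.1 - φ z.2))) ∂(P.prod P) := by
      rw [integral_add hFint hFsw, ← hswap]; ring
    have hbd2 : ∀ z : Ξ × Ξ, F z + g (v - (φ z.1 - φ z.2))
        ≤ 2 * (Real.cosh (l*‖v‖) * Real.cosh (l*(2*sC))) := by
      intro z
      have h3 := coshB hl v (φ z.1 - φ z.2)
      have h4 : Real.cosh (l*‖φ z.1 - φ z.2‖) ≤ Real.cosh (l*(2*sC)) := by
        refine my_cosh_mono (mul_nonneg hl (norm_nonneg _)) (mul_le_mul_of_nonneg_left ?_ hl)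
        calc ‖φ z.1 - φ z.2‖ ≤ ‖φ z.1‖ + ‖φ z.2‖ := norm_sub_le _ _
          _ ≤ 2*sC := by have := hφ z.1; have := hφ z.2; linarith
      have h5 : (0:ℝ) < Real.cosh (l*‖v‖) := Real.cosh_pos _
      have e1 : F z = Real.cosh (l * ‖v + (φ z.1 - φ z.2)‖) := rfl
      have e2 : g (v - (φ z.1 - φ z.2)) = Real.cosh (l * ‖v - (φ z.1 - φ z.2)‖) := rfl
      rw [e1, e2]
      nlinarith [h3, h4, h5]
    have h6 := integral_mono (hFint.add hFsw) (integrable_const _) hbd2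
    rw [integral_const] at h6
    simp only [measure_univ, probReal_univ, ENNReal.toReal_one, smul_eq_mul, one_mul, Pi.add_apply] at h6
    linarith [h2, h6]
  exact step1.trans step2

lemma stepD {H : Type*} [NormedAddCommGroup H] [InnerProductSpace ℝ H] [CompleteSpace H]
    {Ξ : Type*} [MeasurableSpace Ξ]
    (l sC : ℝ) (hl : 0 ≤ l)
    (φ : Ξ → H) (hφm : StronglyMeasurable φ) (hφ : ∀ ξ, ‖φ ξ‖ ≤ sC)
    (P : Measure Ξ) [IsProbabilityMeasure P] :
    ∀ (m : ℕ) (v : H),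
      ∫ x : Fin m → Ξ, Real.cosh (l * ‖v + ∑ j, (φ (x j) - ∫ ξ', φ ξ' ∂P)‖)
          ∂(Measure.pi fun _ => P)
        ≤ Real.cosh (l * ‖v‖) * Real.cosh (l * (2 * sC)) ^ m := by
  intro m
  induction m with
  | zero =>
      intro v
      simp [integral_const]
  | succ m ih =>
      intro v
      set μ0 := ∫ ξ', φ ξ' ∂P with hμ0
      set K := Real.cosh (l * (2 * sC)) with hK
      have hφint : Integrable φ P :=
        Integrable.mono' (integrable_const sC) hφm.aestronglyMeasurable
          (Filter.Eventually.of_forall hφ)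
      have hμ0n : ‖μ0‖ ≤ sC := by
        rw [hμ0]
        refine (norm_integral_le_integral_norm φ).trans ?_
        calc ∫ ξ, ‖φ ξ‖ ∂P ≤ ∫ _, sC ∂P := integral_mono hφint.norm (integrable_const _) hφ
          _ = sC := by simp
      have hterm : ∀ ξ, ‖φ ξ - μ0‖ ≤ 2*sC := fun ξ =>
        (norm_sub_le _ _).trans (by have := hφ ξ; linarith)
      have hKnn : (0:ℝ) ≤ K := (Real.cosh_pos _).le
      set e := MeasurableEquiv.piFinSuccAbove (fun _ : Fin (m+1) => Ξ) 0 with he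
      have hmp := (measurePreserving_piFinSuccAbove (fun _ : Fin (m+1) => P) 0).symm
      set G : (Fin (m+1) → Ξ) → ℝ :=
        fun x => Real.cosh (l * ‖v + ∑ j, (φ (x j) - μ0)‖) with hG
      set Gs : Ξ × (Fin m → Ξ) → ℝ :=
        fun z => Real.cosh (l * ‖v + (φ z.1 - μ0) + ∑ j, (φ (z.2 j) - μ0)‖) with hGs
      have hGe : ∀ z : Ξ × (Fin m → Ξ), G (e.symm z) = Gs z := by
        intro z
        simp only [hG, hGs, he, MeasurableEquiv.piFinSuccAbove_symm_apply,
          Fin.insertNthEquiv, Equiv.coe_fn_mk, Fin.insertNth_zero, Fin.sum_univ_succ,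
          Fin.zero_succAbove, cast_eq, Fin.cons_zero, Fin.cons_succ]
        rw [add_assoc]
      have hsum_sm : StronglyMeasurable fun z : Ξ × (Fin m → Ξ) =>
          v + (φ z.1 - μ0) + ∑ j, (φ (z.2 j) - μ0) := by
        refine (stronglyMeasurable_const.add ((hφm.comp_measurable measurable_fst).sub
          stronglyMeasurable_const)).add ?_
        refine Finset.stronglyMeasurable_fun_sum _ fun j _ => ?_
        exact (hφm.comp_measurable ((measurable_pi_apply j).comp measurable_snd)).sub
          stronglyMeasurable_const
      have hbound : ∀ z : Ξ × (Fin m → Ξ),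
          ‖v + (φ z.1 - μ0) + ∑ j, (φ (z.2 j) - μ0)‖ ≤ ‖v‖ + 2*sC + m*(2*sC) := by
        intro z
        refine (norm_add_le _ _).trans ?_
        have hA : ‖v + (φ z.1 - μ0)‖ ≤ ‖v‖ + 2*sC :=
          (norm_add_le _ _).trans (by have := hterm z.1; linarith)
        have hBs : ‖∑ j, (φ (z.2 j) - μ0)‖ ≤ m*(2*sC) := by
          refine (norm_sum_le _ _).trans ?_
          calc ∑ j, ‖φ (z.2 j) - μ0‖ ≤ ∑ _j : Fin m, 2*sC :=
                Finset.sum_le_sum fun j _ => hterm (z.2 j)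
            _ = m*(2*sC) := by simp [Finset.sum_const, Finset.card_univ, nsmul_eq_mul]
        linarith
      have hGsint : Integrable Gs (P.prod (Measure.pi fun _ : Fin m => P)) := by
        refine Integrable.mono'
          (integrable_const (Real.cosh (l * (‖v‖ + 2*sC + m*(2*sC))))) ?_ ?_
        · exact ((Real.continuous_cosh.comp
            (continuous_const.mul continuous_norm)).comp_stronglyMeasurable
              hsum_sm).aestronglyMeasurable
        · refine Filter.Eventually.of_forall fun z => ?_
          rw [Real.norm_eq_abs, abs_of_nonneg (Real.cosh_pos _).le]
          exact my_cosh_mono (mul_nonneg hl (norm_nonneg _))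
            (mul_le_mul_of_nonneg_left (hbound z) hl)
      have h1 : ∫ x, G x ∂(Measure.pi fun _ : Fin (m+1) => P)
          = ∫ z, Gs z ∂(P.prod (Measure.pi fun _ : Fin m => P)) := by
        rw [← hmp.integral_comp e.symm.measurableEmbedding G]
        exact integral_congr_ae (Filter.Eventually.of_forall fun z => hGe z)
      have h2 : ∫ z, Gs z ∂(P.prod (Measure.pi fun _ : Fin m => P))
          = ∫ ξ, (∫ y, Gs (ξ, y) ∂(Measure.pi fun _ : Fin m => P)) ∂P :=
        integral_prod _ hGsint
      have h3 : ∀ ξ, (∫ y, Gs (ξ, y) ∂(Measure.pi fun _ : Fin m => P))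
          ≤ Real.cosh (l * ‖v + (φ ξ - μ0)‖) * K^m := fun ξ => ih (v + (φ ξ - μ0))
      have hIv2 : Integrable (fun ξ => Real.cosh (l * ‖v + (φ ξ - μ0)‖) * K^m) P := by
        refine Integrable.mul_const ?_ _
        refine Integrable.mono' (integrable_const (Real.cosh (l*(‖v‖+2*sC)))) ?_ ?_
        · exact ((Real.continuous_cosh.comp
            (continuous_const.mul continuous_norm)).comp_stronglyMeasurable
              (stronglyMeasurable_const.add
                (hφm.sub stronglyMeasurable_const))).aestronglyMeasurable
        · refine Filter.Eventually.of_forall fun ξ => ?_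
          rw [Real.norm_eq_abs, abs_of_nonneg (Real.cosh_pos _).le]
          refine my_cosh_mono (mul_nonneg hl (norm_nonneg _))
            (mul_le_mul_of_nonneg_left ?_ hl)
          refine (norm_add_le _ _).trans ?_
          have := hterm ξ; linarith
      have h4 : ∫ ξ, (∫ y, Gs (ξ, y) ∂(Measure.pi fun _ : Fin m => P)) ∂P
          ≤ ∫ ξ, Real.cosh (l * ‖v + (φ ξ - μ0)‖) * K^m ∂P :=
        integral_mono hGsint.integral_prod_left hIv2 h3
      have h5 : ∫ ξ, Real.cosh (l * ‖v + (φ ξ - μ0)‖) * K^m ∂P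
          = (∫ ξ, Real.cosh (l * ‖v + (φ ξ - μ0)‖) ∂P) * K^m := integral_mul_const _ _
      have h6 := stepC l sC hl φ hφm hφ P v
      calc ∫ x : Fin (m+1) → Ξ, G x ∂(Measure.pi fun _ => P)
          = ∫ z, Gs z ∂(P.prod (Measure.pi fun _ : Fin m => P)) := h1
        _ = ∫ ξ, (∫ y, Gs (ξ, y) ∂(Measure.pi fun _ : Fin m => P)) ∂P := h2
        _ ≤ ∫ ξ, Real.cosh (l * ‖v + (φ ξ - μ0)‖) * K^m ∂P := h4
        _ = (∫ ξ, Real.cosh (l * ‖v + (φ ξ - μ0)‖) ∂P) * K^m := h5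
        _ ≤ (Real.cosh (l*‖v‖) * K) * K^m :=
            mul_le_mul_of_nonneg_right h6 (pow_nonneg hKnn m)
        _ = Real.cosh (l*‖v‖) * K^(m+1) := by rw [pow_succ]; ring

/-- **Sub-Gaussian tail bound for the empirical mean embedding.**
For every `t ≥ 0`, `P(‖μ̂ − μ_P‖ ≥ t) ≤ 2·exp(−n t² / (8C))`, the probability being
over the `n` i.i.d. samples from `P` (modeled by the product measure on `Fin n → Ξ`). -/
theorem tail_bound_for_empirical_mean_embedding
    {H : Type*} [NormedAddCommGroup H] [InnerProductSpace ℝ H] [CompleteSpace H]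
    {Ξ : Type*} [MeasurableSpace Ξ]
    (C : ℝ) (hC : 0 < C)
    (φ : Ξ → H) (hφm : StronglyMeasurable φ) (hφ : ∀ ξ, ‖φ ξ‖ ^ 2 ≤ C)
    (P : Measure Ξ) [IsProbabilityMeasure P]
    (n : ℕ) (hn : 0 < n)
    (t : ℝ) (ht : 0 ≤ t) :
    (Measure.pi fun _ : Fin n => P) {x : Fin n → Ξ | t ≤ ‖empEmb φ x - ∫ ξ, φ ξ ∂P‖} ≤
      ENNReal.ofReal (2 * Real.exp (-(n * t ^ 2 / (8 * C)))) := by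
  set sC := Real.sqrt C with hsCdef
  have hsC : (0:ℝ) ≤ sC := Real.sqrt_nonneg C
  have hφ' : ∀ ξ, ‖φ ξ‖ ≤ sC := fun ξ => (Real.le_sqrt (norm_nonneg _) hC.le).2 (hφ ξ)
  have hsq : sC^2 = C := Real.sq_sqrt hC.le
  set l := t / (4*C) with hl_def
  have hl : 0 ≤ l := div_nonneg ht (by linarith)
  set μ0 := ∫ ξ, φ ξ ∂P with hμ0
  set pm := (Measure.pi fun _ : Fin n => P) with hpm
  set K := Real.cosh (l * (2 * sC)) with hK
  have hKnn : (0:ℝ) ≤ K := (Real.cosh_pos _).le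
  set W : (Fin n → Ξ) → H := fun x => ∑ j, (φ (x j) - μ0) with hW
  have hφint : Integrable φ P :=
    Integrable.mono' (integrable_const sC) hφm.aestronglyMeasurable
      (Filter.Eventually.of_forall hφ')
  have hμ0n : ‖μ0‖ ≤ sC := by
    rw [hμ0]
    refine (norm_integral_le_integral_norm φ).trans ?_
    calc ∫ ξ, ‖φ ξ‖ ∂P ≤ ∫ _, sC ∂P := integral_mono hφint.norm (integrable_const _) hφ'
      _ = sC := by simp
  have hterm : ∀ ξ, ‖φ ξ - μ0‖ ≤ 2*sC := fun ξ =>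
    (norm_sub_le _ _).trans (by have := hφ' ξ; linarith)
  have hn0 : ((n:ℝ)) ≠ 0 := by exact_mod_cast hn.ne'
  have hkey : ∀ x : Fin n → Ξ, (n:ℝ) * ‖empEmb φ x - μ0‖ = ‖W x‖ := by
    intro x
    have hWx : W x = (∑ j, φ (x j)) - (n:ℝ) • μ0 := by
      rw [hW]
      simp only
      rw [Finset.sum_sub_distrib, Finset.sum_const, Finset.card_univ, Fintype.card_fin,
        ← Nat.cast_smul_eq_nsmul ℝ]
    have he : empEmb φ x - μ0 = (n:ℝ)⁻¹ • W x := by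
      rw [hWx, smul_sub, smul_smul, inv_mul_cancel₀ hn0, one_smul]
      rfl
    rw [he, norm_smul, Real.norm_eq_abs, abs_of_nonneg (inv_nonneg.2 (Nat.cast_nonneg n))]
    field_simp
  have hWsm : StronglyMeasurable W := Finset.stronglyMeasurable_fun_sum _ fun j _ =>
    (hφm.comp_measurable (measurable_pi_apply j)).sub stronglyMeasurable_const
  have hEsm : StronglyMeasurable fun x : Fin n → Ξ => empEmb φ x - μ0 := by
    have h8 : StronglyMeasurable fun x : Fin n → Ξ => (n:ℝ)⁻¹ • ∑ j, φ (x j) :=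
      (Finset.stronglyMeasurable_fun_sum _ fun j _ =>
        hφm.comp_measurable (measurable_pi_apply j)).const_smul _
    exact h8.sub stronglyMeasurable_const
  have hsmeas : MeasurableSet {x : Fin n → Ξ | t ≤ ‖empEmb φ x - μ0‖} :=
    measurableSet_le measurable_const hEsm.norm.measurable
  set c := Real.cosh (l * ((n:ℝ) * t)) with hc
  have hcpos : (0:ℝ) < c := Real.cosh_pos _
  have hGn_sm : StronglyMeasurable fun x : Fin n → Ξ => Real.cosh (l * ‖W x‖) :=
    (Real.continuous_cosh.comp
      (continuous_const.mul continuous_norm)).comp_stronglyMeasurable hWsm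
  have hWb : ∀ x, ‖W x‖ ≤ (n:ℝ) * (2*sC) := by
    intro x
    refine (norm_sum_le _ _).trans ?_
    calc ∑ j, ‖φ (x j) - μ0‖ ≤ ∑ _j : Fin n, 2*sC :=
          Finset.sum_le_sum fun j _ => hterm (x j)
      _ = (n:ℝ) * (2*sC) := by simp [Finset.sum_const, Finset.card_univ, nsmul_eq_mul]
  have hGnint : Integrable (fun x => Real.cosh (l * ‖W x‖)) pm := by
    refine Integrable.mono' (integrable_const (Real.cosh (l * ((n:ℝ)*(2*sC)))))
      hGn_sm.aestronglyMeasurable ?_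
    refine Filter.Eventually.of_forall fun x => ?_
    rw [Real.norm_eq_abs, abs_of_nonneg (Real.cosh_pos _).le]
    exact my_cosh_mono (mul_nonneg hl (norm_nonneg _))
      (mul_le_mul_of_nonneg_left (hWb x) hl)
  have hmain : ∫ x, Real.cosh (l * ‖W x‖) ∂pm ≤ K^n := by
    have hD := stepD l sC hl φ hφm hφ' P n 0
    simp only [zero_add, norm_zero, mul_zero, Real.cosh_zero, one_mul] at hD
    exact hD
  have hin : ∀ x ∈ {x : Fin n → Ξ | t ≤ ‖empEmb φ x - μ0‖},
      (1:ℝ≥0∞) ≤ ENNReal.ofReal (c⁻¹ * Real.cosh (l * ‖W x‖)) := by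
    intro x hx
    have hx' : t ≤ ‖empEmb φ x - μ0‖ := hx
    have hnt : (n:ℝ) * t ≤ ‖W x‖ := by
      rw [← hkey x]
      exact mul_le_mul_of_nonneg_left hx' (Nat.cast_nonneg n)
    have h7 : c ≤ Real.cosh (l * ‖W x‖) := by
      rw [hc]
      exact my_cosh_mono (mul_nonneg hl (mul_nonneg (Nat.cast_nonneg n) ht))
        (mul_le_mul_of_nonneg_left hnt hl)
    refine ENNReal.one_le_ofReal.2 ?_
    rw [mul_comm, ← div_eq_mul_inv]
    exact (one_le_div hcpos).2 h7
  have hmeasfun : Measurable fun x : Fin n → Ξ =>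
      ENNReal.ofReal (c⁻¹ * Real.cosh (l * ‖W x‖)) :=
    (hGn_sm.measurable.const_mul c⁻¹).ennreal_ofReal
  have hchain : pm {x : Fin n → Ξ | t ≤ ‖empEmb φ x - μ0‖}
      ≤ ENNReal.ofReal (c⁻¹ * K^n) := by
    calc pm {x : Fin n → Ξ | t ≤ ‖empEmb φ x - μ0‖}
        = ∫⁻ _ in {x : Fin n → Ξ | t ≤ ‖empEmb φ x - μ0‖}, 1 ∂pm :=
          (setLIntegral_one _).symm
      _ ≤ ∫⁻ x in {x : Fin n → Ξ | t ≤ ‖empEmb φ x - μ0‖},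
            ENNReal.ofReal (c⁻¹ * Real.cosh (l * ‖W x‖)) ∂pm :=
          setLIntegral_mono hmeasfun hin
      _ ≤ ∫⁻ x, ENNReal.ofReal (c⁻¹ * Real.cosh (l * ‖W x‖)) ∂pm :=
          setLIntegral_le_lintegral _ _
      _ = ENNReal.ofReal (∫ x, c⁻¹ * Real.cosh (l * ‖W x‖) ∂pm) :=
          (ofReal_integral_eq_lintegral_ofReal (hGnint.const_mul _)
            (Filter.Eventually.of_forall fun x =>
              mul_nonneg (inv_nonneg.2 hcpos.le) (Real.cosh_pos _).le)).symm
      _ ≤ ENNReal.ofReal (c⁻¹ * K^n) := by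
          refine ENNReal.ofReal_le_ofReal ?_
          rw [integral_const_mul]
          exact mul_le_mul_of_nonneg_left hmain (inv_nonneg.2 hcpos.le)
  refine hchain.trans (ENNReal.ofReal_le_ofReal ?_)
  have hKle : K ≤ Real.exp ((l*(2*sC))^2/2) := by
    rw [hK]; exact Real.cosh_le_exp_half_sq _
  have hKn : K^n ≤ Real.exp ((n:ℝ) * ((l*(2*sC))^2/2)) := by
    calc K^n ≤ (Real.exp ((l*(2*sC))^2/2))^n := pow_le_pow_left₀ hKnn hKle n
      _ = Real.exp ((n:ℝ) * ((l*(2*sC))^2/2)) := (Real.exp_nat_mul _ n).symm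
  have hcinv : c⁻¹ ≤ 2 * Real.exp (-(l * ((n:ℝ)*t))) := by
    have hle : Real.exp (l * ((n:ℝ)*t)) / 2 ≤ c := by
      rw [hc, Real.cosh_eq]
      have := (Real.exp_pos (-(l * ((n:ℝ)*t)))).le
      linarith
    calc c⁻¹ ≤ (Real.exp (l * ((n:ℝ)*t)) / 2)⁻¹ := inv_anti₀ (by positivity) hle
      _ = 2 * Real.exp (-(l * ((n:ℝ)*t))) := by
          rw [Real.exp_neg]; field_simp
  calc c⁻¹ * K^n
      ≤ (2 * Real.exp (-(l * ((n:ℝ)*t)))) * Real.exp ((n:ℝ) * ((l*(2*sC))^2/2)) :=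
        mul_le_mul hcinv hKn (pow_nonneg hKnn n) (by positivity)
    _ = 2 * Real.exp ((n:ℝ) * ((l*(2*sC))^2/2) - l * ((n:ℝ)*t)) := by
        rw [mul_assoc, ← Real.exp_add]
        congr 1
        ring
    _ = 2 * Real.exp (-((n:ℝ) * t^2 / (8*C))) := by
        have hC0 : C ≠ 0 := hC.ne'
        have e1 : (l*(2*sC))^2 = 4*C*l^2 := by
          have h' : (l*(2*sC))^2 = 4*sC^2*l^2 := by ring
          rw [h', hsq]
        rw [e1, hl_def]
        congr 1
        field_simp
        ring
end

section
/- For every δ ∈ (0,1), with probability at least 1 − δ over the M mutually independent datasets, the aggregated embedding estimation error satisfies Σ_{i=1}^M ‖μ̂_i − μ_i‖_H² ≤ 2C(1 + 2·log(M/δ))/n̄. -/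
open MeasureTheory
open Real
open scoped ENNReal

/-- Core analytic inequality behind Hoeffding's lemma. -/
lemma hoeffding_core {p : ℝ} (hp0 : 0 ≤ p) (hp1 : p ≤ 1) (u : ℝ) :
    Real.log (1 - p + p * Real.exp u) ≤ p * u + u ^ 2 / 8 := by
  rcases eq_or_lt_of_le hp0 with h0 | h0
  · simp [← h0]
    nlinarith [sq_nonneg u]
  rcases eq_or_lt_of_le hp1 with h1 | h1
  · simp [h1, Real.log_exp]
    nlinarith [sq_nonneg u]
  set q : ℝ := 1 - p with hq
  have hq0 : 0 < q := by simp [hq]; linarith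
  have hpos : ∀ t : ℝ, 0 < q + p * Real.exp t := fun t => by positivity
  -- F and its derivatives
  set F : ℝ → ℝ := fun t => Real.log (q + p * Real.exp t) - p * t with hF
  set F' : ℝ → ℝ := fun t => p * Real.exp t / (q + p * Real.exp t) - p with hF'
  have hdF : ∀ t, HasDerivAt F (F' t) t := by
    intro t
    have h1 : HasDerivAt (fun t : ℝ => q + p * Real.exp t) (p * Real.exp t) t := by
      simpa using ((Real.hasDerivAt_exp t).const_mul p).const_add q
    simpa [hF, hF'] using (h1.log (hpos t).ne').fun_sub ((hasDerivAt_id t).const_mul p)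
  have hdF' : ∀ t, HasDerivAt F' (p * q * Real.exp t / (q + p * Real.exp t) ^ 2) t := by
    intro t
    have h1 : HasDerivAt (fun t : ℝ => p * Real.exp t) (p * Real.exp t) t :=
      (Real.hasDerivAt_exp t).const_mul p
    have h2 : HasDerivAt (fun t : ℝ => q + p * Real.exp t) (p * Real.exp t) t := h1.const_add q
    have h3 := (h1.div h2 (hpos t).ne')
    have : (p * Real.exp t * (q + p * Real.exp t) - p * Real.exp t * (p * Real.exp t)) /
        (q + p * Real.exp t) ^ 2 = p * q * Real.exp t / (q + p * Real.exp t) ^ 2 := by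
      ring
    simpa [hF', this] using h3.sub_const p
  have hF'0 : F' 0 = 0 := by
    simp [hF', hq]
  have hF0 : F 0 = 0 := by simp [hF, hq]
  have hF''le : ∀ t, p * q * Real.exp t / (q + p * Real.exp t) ^ 2 ≤ 1 / 4 := by
    intro t
    rw [div_le_iff₀ (by positivity)]
    have hid : (1:ℝ)/4 * (q + p * Real.exp t) ^ 2 - p * q * Real.exp t
        = (1/4) * (q - p * Real.exp t) ^ 2 := by ring
    nlinarith [sq_nonneg (q - p * Real.exp t)]
  -- G' = t/4 - F' t is monotone
  set G' : ℝ → ℝ := fun t => t / 4 - F' t with hG'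
  have hdG' : ∀ t, HasDerivAt G' (1 / 4 - p * q * Real.exp t / (q + p * Real.exp t) ^ 2) t := by
    intro t
    simpa [hG'] using ((hasDerivAt_id t).div_const 4).fun_sub (hdF' t)
  have hmono : Monotone G' := by
    apply monotone_of_deriv_nonneg
    · exact fun t => (hdG' t).differentiableAt
    · intro t
      rw [(hdG' t).deriv]
      have := hF''le t
      linarith
  have hG'0 : G' 0 = 0 := by simp [hG', hF'0]
  -- G = u^2/8 - F u
  set G : ℝ → ℝ := fun t => t ^ 2 / 8 - F t with hG
  have hdG : ∀ t, HasDerivAt G (G' t) t := by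
    intro t
    have h1 : HasDerivAt (fun t : ℝ => t ^ 2 / 8) (t / 4) t := by
      have := ((hasDerivAt_pow 2 t).div_const 8)
      simpa [hG'] using this.congr_deriv (by ring)
    simpa [hG, hG'] using h1.fun_sub (hdF t)
  have hGdiff : Differentiable ℝ G := fun t => (hdG t).differentiableAt
  have hG0 : G 0 = 0 := by simp [hG, hF0]
  have key : 0 ≤ G u := by
    rcases le_total 0 u with hu | hu
    · have hm : MonotoneOn G (Set.Ici 0) := by
        apply monotoneOn_of_deriv_nonneg (convex_Ici 0) hGdiff.continuous.continuousOn
        · intro t ht; exact (hGdiff t).differentiableWithinAt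
        · intro t ht
          rw [(hdG t).deriv]
          rw [interior_Ici, Set.mem_Ioi] at ht
          have := hmono ht.le
          rw [hG'0] at this; exact this
      have := hm (Set.self_mem_Ici) (Set.mem_Ici.2 hu) hu
      rwa [hG0] at this
    · have hm : AntitoneOn G (Set.Iic 0) := by
        apply antitoneOn_of_deriv_nonpos (convex_Iic 0) hGdiff.continuous.continuousOn
        · intro t ht; exact (hGdiff t).differentiableWithinAt
        · intro t ht
          rw [(hdG t).deriv]
          rw [interior_Iic, Set.mem_Iio] at ht
          have := hmono ht.le
          rw [hG'0] at this; exact this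
      have := hm (Set.mem_Iic.2 hu) (Set.self_mem_Iic) hu
      rwa [hG0] at this
  have : F u ≤ u ^ 2 / 8 := by
    have := key; simp [hG] at this; linarith
  calc Real.log (1 - p + p * Real.exp u) = F u + p * u := by simp only [hF, hq]; ring
  _ ≤ p * u + u ^ 2 / 8 := by linarith


lemma integrable_of_bounds {α : Type*} [MeasurableSpace α] {ν : Measure α}
    [IsProbabilityMeasure ν] {X : α → ℝ} (hX : AEStronglyMeasurable X ν) {B : ℝ}
    (hB : ∀ ω, |X ω| ≤ B) : Integrable X ν := by
  refine Integrable.mono' (integrable_const B) hX ?_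
  exact ae_of_all _ fun ω => by simpa using hB ω

/-- **Hoeffding's lemma**, mean-zero version. -/
lemma hoeffding_lemma0 {α : Type*} [MeasurableSpace α] (ν : Measure α)
    [IsProbabilityMeasure ν] {Y : α → ℝ} (hY : Measurable Y)
    (hYint : Integrable Y ν) (hY0 : ∫ ω, Y ω ∂ν = 0) {A B : ℝ}
    (hYab : ∀ ω, A ≤ Y ω ∧ Y ω ≤ B) (l : ℝ) :
    ∫ ω, Real.exp (l * Y ω) ∂ν ≤ Real.exp (l ^ 2 * (B - A) ^ 2 / 8) := by
  have hA0 : A ≤ 0 := by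
    have := integral_mono (integrable_const A) hYint fun ω => (hYab ω).1
    simpa [hY0] using this
  have hB0 : 0 ≤ B := by
    have := integral_mono hYint (integrable_const B) fun ω => (hYab ω).2
    simpa [hY0] using this
  rcases eq_or_lt_of_le (le_trans hA0 hB0) with hAB | hAB
  · have hA' : A = 0 := le_antisymm hA0 (by rw [hAB]; exact hB0)
    have hB' : B = 0 := by rw [← hAB, hA']
    have h1 : ∀ ω, Real.exp (l * Y ω) = 1 := by
      intro ω
      have h2 : Y ω = 0 := le_antisymm (hB' ▸ (hYab ω).2) (hA' ▸ (hYab ω).1)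
      rw [h2, mul_zero, Real.exp_zero]
    calc ∫ ω, Real.exp (l * Y ω) ∂ν = ∫ _, (1:ℝ) ∂ν := by simp [h1]
      _ = 1 := by simp
      _ ≤ Real.exp (l ^ 2 * (B - A) ^ 2 / 8) := Real.one_le_exp (by positivity)
  · have hc0 : (0:ℝ) < B - A := by linarith
    have hcne : B - A ≠ 0 := hc0.ne'
    have hp0 : 0 ≤ -A / (B - A) := div_nonneg (by linarith) hc0.le
    have hp1 : -A / (B - A) ≤ 1 := by rw [div_le_one hc0]; linarith
    set c1 : ℝ := (B * Real.exp (l * A) - A * Real.exp (l * B)) / (B - A) with hc1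
    set c2 : ℝ := (Real.exp (l * B) - Real.exp (l * A)) / (B - A) with hc2
    have hpt : ∀ ω, Real.exp (l * Y ω) ≤ c1 + c2 * Y ω := by
      intro ω
      obtain ⟨h1, h2⟩ := hYab ω
      have ht0 : 0 ≤ (B - Y ω) / (B - A) := div_nonneg (by linarith) hc0.le
      have hs0 : 0 ≤ (Y ω - A) / (B - A) := div_nonneg (by linarith) hc0.le
      have hts : (B - Y ω) / (B - A) + (Y ω - A) / (B - A) = 1 := by
        rw [← add_div, div_eq_one_iff_eq hcne]; ring
      have hcomb := convexOn_exp.2 (Set.mem_univ (l * A)) (Set.mem_univ (l * B)) ht0 hs0 hts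
      have he : ((B - Y ω) / (B - A)) • (l * A) + ((Y ω - A) / (B - A)) • (l * B) = l * Y ω := by
        simp only [smul_eq_mul]
        field_simp
        ring
      rw [he] at hcomb
      calc Real.exp (l * Y ω)
          ≤ (B - Y ω) / (B - A) * Real.exp (l * A) + (Y ω - A) / (B - A) * Real.exp (l * B) := by
            simpa [smul_eq_mul] using hcomb
        _ = c1 + c2 * Y ω := by rw [hc1, hc2]; field_simp; ring
    have hexpint : Integrable (fun ω => Real.exp (l * Y ω)) ν := by
      apply integrable_of_bounds ((hY.const_mul l).exp).aestronglyMeasurable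
        (B := Real.exp (|l| * max |A| |B|))
      intro ω
      rw [abs_of_nonneg (Real.exp_nonneg _)]
      apply Real.exp_le_exp.2
      calc l * Y ω ≤ |l * Y ω| := le_abs_self _
        _ = |l| * |Y ω| := abs_mul _ _
        _ ≤ |l| * max |A| |B| :=
            mul_le_mul_of_nonneg_left (abs_le_max_abs_abs (hYab ω).1 (hYab ω).2) (abs_nonneg l)
    have step1 : ∫ ω, Real.exp (l * Y ω) ∂ν ≤ c1 := by
      calc ∫ ω, Real.exp (l * Y ω) ∂ν ≤ ∫ ω, (c1 + c2 * Y ω) ∂ν :=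
            integral_mono hexpint ((integrable_const c1).add (hYint.const_mul c2)) hpt
        _ = c1 := by
            rw [integral_add (integrable_const c1) (hYint.const_mul c2), integral_const_mul, hY0]
            simp
    have step2 : c1 ≤ Real.exp (l ^ 2 * (B - A) ^ 2 / 8) := by
      have hposq : 0 < 1 - -A / (B - A) + -A / (B - A) * Real.exp (l * (B - A)) := by
        rcases eq_or_lt_of_le hp0 with h | h
        · rw [← h]; norm_num
        · have := Real.exp_pos (l * (B - A)); nlinarith
      have hcore := hoeffding_core hp0 hp1 (l * (B - A))
      have hle : 1 - -A / (B - A) + -A / (B - A) * Real.exp (l * (B - A))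
          ≤ Real.exp (-A / (B - A) * (l * (B - A)) + (l * (B - A)) ^ 2 / 8) :=
        (Real.log_le_iff_le_exp hposq).1 hcore
      have hfac : c1 = Real.exp (l * A) *
          (1 - -A / (B - A) + -A / (B - A) * Real.exp (l * (B - A))) := by
        rw [hc1]
        have hBe : Real.exp (l * B) = Real.exp (l * A) * Real.exp (l * (B - A)) := by
          rw [← Real.exp_add]; ring_nf
        rw [hBe]
        field_simp
        ring
      have harg : l * A + (-A / (B - A) * (l * (B - A)) + (l * (B - A)) ^ 2 / 8)
          = l ^ 2 * (B - A) ^ 2 / 8 := by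
        field_simp
        ring
      calc c1 = Real.exp (l * A) *
            (1 - -A / (B - A) + -A / (B - A) * Real.exp (l * (B - A))) := hfac
        _ ≤ Real.exp (l * A) *
            Real.exp (-A / (B - A) * (l * (B - A)) + (l * (B - A)) ^ 2 / 8) :=
            mul_le_mul_of_nonneg_left hle (Real.exp_nonneg _)
        _ = Real.exp (l * A + (-A / (B - A) * (l * (B - A)) + (l * (B - A)) ^ 2 / 8)) :=
            (Real.exp_add _ _).symm
        _ = Real.exp (l ^ 2 * (B - A) ^ 2 / 8) := by rw [harg]
    exact le_trans step1 step2

/-- **Hoeffding's lemma**. -/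
lemma hoeffding_lemma {α : Type*} [MeasurableSpace α] (ν : Measure α)
    [IsProbabilityMeasure ν] {X : α → ℝ} (hX : Measurable X) {a b : ℝ}
    (hab : ∀ ω, X ω ∈ Set.Icc a b) (l : ℝ) :
    ∫ ω, Real.exp (l * (X ω - ∫ x, X x ∂ν)) ∂ν ≤ Real.exp (l ^ 2 * (b - a) ^ 2 / 8) := by
  have hXint : Integrable X ν := integrable_of_bounds hX.aestronglyMeasurable
    (B := max |a| |b|) (fun ω => abs_le_max_abs_abs (hab ω).1 (hab ω).2)
  have h := hoeffding_lemma0 ν (Y := fun ω => X ω - ∫ x, X x ∂ν)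
    (hX.sub measurable_const) (hXint.sub (integrable_const _))
    (by rw [integral_sub hXint (integrable_const _)]; simp)
    (A := a - ∫ x, X x ∂ν) (B := b - ∫ x, X x ∂ν)
    (fun ω => ⟨by linarith [(hab ω).1], by linarith [(hab ω).2]⟩) l
  have : (b - ∫ x, X x ∂ν) - (a - ∫ x, X x ∂ν) = b - a := by ring
  rwa [this] at h


section McDiarmid
variable {Ξ : Type*} [MeasurableSpace Ξ]

lemma measurable_fin_cons {n : ℕ} :
    Measurable (fun z : Ξ × (Fin n → Ξ) => (Fin.cons z.1 z.2 : Fin (n + 1) → Ξ)) := by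
  apply measurable_pi_iff.2
  intro j
  refine Fin.cases ?_ ?_ j
  · simpa using measurable_fst
  · intro i; simp; exact (measurable_pi_apply i).comp measurable_snd

lemma measurable_fin_cons_left {n : ℕ} (y : Fin n → Ξ) :
    Measurable (fun ξ : Ξ => (Fin.cons ξ y : Fin (n + 1) → Ξ)) :=
  measurable_fin_cons.comp (measurable_id.prodMk measurable_const)

lemma cons_update_eq {n : ℕ} {Ξ : Type*} (ξ0 : Ξ) (y : Fin n → Ξ) (j : Fin n) (ξ : Ξ) :
    (Fin.cons ξ0 (Function.update y j ξ) : Fin (n + 1) → Ξ)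
      = Function.update (Fin.cons ξ0 y) j.succ ξ := by
  funext i
  refine Fin.cases ?_ (fun i => ?_) i
  · rw [Function.update_of_ne (Fin.succ_ne_zero j).symm]
    simp
  · rcases eq_or_ne i j with rfl | h
    · simp
    · rw [Function.update_of_ne (fun hc => h (Fin.succ_injective n hc))]
      simp [Function.update_of_ne h]

/-- McDiarmid-type bound on the moment generating function over a product measure. -/
lemma mcdiarmid_mgf (P : Measure Ξ) [IsProbabilityMeasure P] [Nonempty Ξ] :
    ∀ (n : ℕ) (f : (Fin n → Ξ) → ℝ), Measurable f → ∀ (Bb : ℝ), (∀ x, |f x| ≤ Bb) →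
    ∀ (c : ℝ), (∀ (j : Fin n) (x : Fin n → Ξ) (ξ ξ' : Ξ),
      f (Function.update x j ξ) - f (Function.update x j ξ') ≤ c) →
    ∀ l : ℝ,
    ∫ x, Real.exp (l * (f x - ∫ y, f y ∂(Measure.pi fun _ : Fin n => P)))
        ∂(Measure.pi fun _ : Fin n => P)
      ≤ Real.exp (l ^ 2 * n * c ^ 2 / 8) := by
  intro n
  induction n with
  | zero =>
    intro f hf Bb hB c hosc l
    have h1 : ∀ x : Fin 0 → Ξ, f x - ∫ y, f y ∂(Measure.pi fun _ : Fin 0 => P) = 0 := by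
      intro x
      have : (fun y : Fin 0 → Ξ => f y) = fun _ => f x :=
        funext fun y => congrArg f (Subsingleton.elim y x)
      rw [this, integral_const]; simp
    have h2 : ∫ x, Real.exp (l * (f x - ∫ y, f y ∂(Measure.pi fun _ : Fin 0 => P)))
        ∂(Measure.pi fun _ : Fin 0 => P) = 1 := by
      rw [show (fun x => Real.exp (l * (f x - ∫ y, f y ∂(Measure.pi fun _ : Fin 0 => P))))
          = fun _ => (1:ℝ) from funext fun x => by rw [h1 x, mul_zero, Real.exp_zero]]
      simp
    rw [h2]
    exact Real.one_le_exp (by positivity)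
  | succ n IH =>
    intro f hf Bb hB c hosc l
    have hBb0 : 0 ≤ Bb := le_trans (abs_nonneg _) (hB (fun _ => Classical.arbitrary Ξ))
    set ν : Measure (Fin n → Ξ) := Measure.pi fun _ => P with hν
    set ν1 : Measure (Fin (n+1) → Ξ) := Measure.pi fun _ => P with hν1
    have mp := measurePreserving_piFinSuccAbove (fun _ : Fin (n+1) => P) 0
    set e := MeasurableEquiv.piFinSuccAbove (fun _ : Fin (n+1) => Ξ) 0 with he
    have hsymm : ∀ z : Ξ × (Fin n → Ξ), e.symm z = Fin.cons z.1 z.2 := by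
      intro z
      simp [he, MeasurableEquiv.piFinSuccAbove_symm_apply, Fin.insertNthEquiv,
        Fin.insertNth_zero]
    have transfer : ∀ (g : (Fin (n+1) → Ξ) → ℝ),
        ∫ x, g x ∂ν1 = ∫ z, g (Fin.cons z.1 z.2) ∂(P.prod ν) := by
      intro g
      have h1 := (mp.symm e).integral_comp' g
      have h2 : ∫ z, g (e.symm z) ∂(P.prod ν) = ∫ z, g (Fin.cons z.1 z.2) ∂(P.prod ν) :=
        integral_congr_ae (ae_of_all _ fun z => congrArg g (hsymm z))
      exact h1.symm.trans h2
    -- definitions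
    set m : ℝ := ∫ x, f x ∂ν1 with hm
    set g : (Fin n → Ξ) → ℝ := fun y => ∫ ξ, f (Fin.cons ξ y) ∂P with hg
    have hFmeas : Measurable (fun z : Ξ × (Fin n → Ξ) => f (Fin.cons z.1 z.2)) :=
      hf.comp measurable_fin_cons
    have hFint : Integrable (fun z : Ξ × (Fin n → Ξ) => f (Fin.cons z.1 z.2)) (P.prod ν) :=
      integrable_of_bounds hFmeas.aestronglyMeasurable (B := Bb) (fun z => hB _)
    have hgmeas : Measurable g := by
      have : StronglyMeasurable (fun z : Ξ × (Fin n → Ξ) => f (Fin.cons z.1 z.2)) :=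
        hFmeas.stronglyMeasurable
      exact this.integral_prod_left'.measurable
    have hgB : ∀ y, |g y| ≤ Bb := by
      intro y
      rw [hg]
      calc |∫ ξ, f (Fin.cons ξ y) ∂P| = ‖∫ ξ, f (Fin.cons ξ y) ∂P‖ := (Real.norm_eq_abs _).symm
        _ ≤ Bb * (P Set.univ).toReal := norm_integral_le_of_norm_le_const
              (ae_of_all _ fun ξ => by simpa using hB (Fin.cons ξ y))
        _ = Bb := by simp
    have hgosc : ∀ (j : Fin n) (y : Fin n → Ξ) (ξ ξ' : Ξ),
        g (Function.update y j ξ) - g (Function.update y j ξ') ≤ c := by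
      intro j y ξ ξ'
      have hint1 : Integrable (fun ξ0 => f (Fin.cons ξ0 (Function.update y j ξ))) P :=
        integrable_of_bounds (hf.comp (measurable_fin_cons_left _)).aestronglyMeasurable
          (B := Bb) (fun _ => hB _)
      have hint2 : Integrable (fun ξ0 => f (Fin.cons ξ0 (Function.update y j ξ'))) P :=
        integrable_of_bounds (hf.comp (measurable_fin_cons_left _)).aestronglyMeasurable
          (B := Bb) (fun _ => hB _)
      rw [hg]
      rw [← integral_sub hint1 hint2]
      calc ∫ ξ0, (f (Fin.cons ξ0 (Function.update y j ξ))
              - f (Fin.cons ξ0 (Function.update y j ξ'))) ∂P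
          ≤ ∫ _, c ∂P := by
            apply integral_mono (hint1.sub hint2) (integrable_const c)
            intro ξ0
            have h1 : (Fin.cons ξ0 (Function.update y j ξ) : Fin (n+1) → Ξ)
                = Function.update (Fin.cons ξ0 y) j.succ ξ := cons_update_eq ξ0 y j ξ
            have h2 : (Fin.cons ξ0 (Function.update y j ξ') : Fin (n+1) → Ξ)
                = Function.update (Fin.cons ξ0 y) j.succ ξ' := cons_update_eq ξ0 y j ξ'
            simp only [Pi.sub_apply]
            rw [h1, h2]
            exact hosc j.succ (Fin.cons ξ0 y) ξ ξ'
        _ = c := by simp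
    have hmg : m = ∫ y, g y ∂ν := by
      rw [hm, transfer f, integral_prod_symm _ hFint]
    -- inner bound
    have inner_bound : ∀ y : Fin n → Ξ,
        ∫ ξ, Real.exp (l * (f (Fin.cons ξ y) - m)) ∂P
          ≤ Real.exp (l ^ 2 * c ^ 2 / 8) * Real.exp (l * (g y - m)) := by
      intro y
      set X : Ξ → ℝ := fun ξ => f (Fin.cons ξ y) with hX
      have hXmeas : Measurable X := hf.comp (measurable_fin_cons_left y)
      have hXd : ∀ ξ ξ', X ξ - X ξ' ≤ c := by
        intro ξ ξ'
        have := hosc 0 (Fin.cons ξ' y) ξ ξ'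
        rwa [Fin.update_cons_zero, Fin.update_cons_zero] at this
      have hne : (Set.range X).Nonempty := Set.range_nonempty X
      have hbdd : BddBelow (Set.range X) := by
        refine ⟨X (Classical.arbitrary Ξ) - c, ?_⟩
        rintro r ⟨ξ, rfl⟩
        linarith [hXd (Classical.arbitrary Ξ) ξ]
      set a : ℝ := sInf (Set.range X) with ha
      have hXa : ∀ ξ, a ≤ X ξ := fun ξ => csInf_le hbdd ⟨ξ, rfl⟩
      have hXb : ∀ ξ, X ξ ≤ a + c := by
        intro ξ
        have : X ξ - c ≤ a := le_csInf hne (by rintro r ⟨ξ', rfl⟩; linarith [hXd ξ ξ'])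
        linarith
      have hhoef := hoeffding_lemma P hXmeas (a := a) (b := a + c)
        (fun ξ => ⟨hXa ξ, hXb ξ⟩) l
      rw [show a + c - a = c by ring] at hhoef
      have hXmean : ∫ ξ, X ξ ∂P = g y := rfl
      calc ∫ ξ, Real.exp (l * (f (Fin.cons ξ y) - m)) ∂P
          = ∫ ξ, Real.exp (l * (g y - m)) * Real.exp (l * (X ξ - g y)) ∂P := by
            apply integral_congr_ae (ae_of_all _ fun ξ => ?_)
            rw [← Real.exp_add]
            congr 1
            ring
        _ = Real.exp (l * (g y - m)) * ∫ ξ, Real.exp (l * (X ξ - g y)) ∂P :=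
            integral_const_mul _ _
        _ ≤ Real.exp (l * (g y - m)) * Real.exp (l ^ 2 * c ^ 2 / 8) := by
            apply mul_le_mul_of_nonneg_left _ (Real.exp_nonneg _)
            rw [← hXmean]
            exact hhoef
        _ = Real.exp (l ^ 2 * c ^ 2 / 8) * Real.exp (l * (g y - m)) := mul_comm _ _
    -- outer chain
    have hexp_prod_int : Integrable
        (fun z : Ξ × (Fin n → Ξ) => Real.exp (l * (f (Fin.cons z.1 z.2) - m))) (P.prod ν) := by
      apply integrable_of_bounds
        (((hFmeas.sub measurable_const).const_mul l).exp).aestronglyMeasurable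
        (B := Real.exp (|l| * (Bb + |m|)))
      intro z
      rw [abs_of_nonneg (Real.exp_nonneg _)]
      apply Real.exp_le_exp.2
      calc l * (f (Fin.cons z.1 z.2) - m) ≤ |l * (f (Fin.cons z.1 z.2) - m)| := le_abs_self _
        _ = |l| * |f (Fin.cons z.1 z.2) - m| := abs_mul _ _
        _ ≤ |l| * (Bb + |m|) := by
            apply mul_le_mul_of_nonneg_left _ (abs_nonneg l)
            calc |f (Fin.cons z.1 z.2) - m| ≤ |f (Fin.cons z.1 z.2)| + |m| := abs_sub _ _
              _ ≤ Bb + |m| := by linarith [hB (Fin.cons z.1 z.2)]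
    have hgexp_int : Integrable (fun y => Real.exp (l * (g y - m))) ν := by
      apply integrable_of_bounds
        (((hgmeas.sub measurable_const).const_mul l).exp).aestronglyMeasurable
        (B := Real.exp (|l| * (Bb + |m|)))
      intro y
      rw [abs_of_nonneg (Real.exp_nonneg _)]
      apply Real.exp_le_exp.2
      calc l * (g y - m) ≤ |l * (g y - m)| := le_abs_self _
        _ = |l| * |g y - m| := abs_mul _ _
        _ ≤ |l| * (Bb + |m|) := by
            apply mul_le_mul_of_nonneg_left _ (abs_nonneg l)
            calc |g y - m| ≤ |g y| + |m| := abs_sub _ _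
              _ ≤ Bb + |m| := by linarith [hgB y]
    calc ∫ x, Real.exp (l * (f x - m)) ∂ν1
        = ∫ z, Real.exp (l * (f (Fin.cons z.1 z.2) - m)) ∂(P.prod ν) :=
          transfer (fun x => Real.exp (l * (f x - m)))
      _ = ∫ y, ∫ ξ, Real.exp (l * (f (Fin.cons ξ y) - m)) ∂P ∂ν :=
          integral_prod_symm _ hexp_prod_int
      _ ≤ ∫ y, Real.exp (l ^ 2 * c ^ 2 / 8) * Real.exp (l * (g y - m)) ∂ν := by
          apply integral_mono hexp_prod_int.integral_prod_right
            (hgexp_int.const_mul _) inner_bound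
      _ = Real.exp (l ^ 2 * c ^ 2 / 8) * ∫ y, Real.exp (l * (g y - m)) ∂ν :=
          integral_const_mul _ _
      _ ≤ Real.exp (l ^ 2 * c ^ 2 / 8) * Real.exp (l ^ 2 * n * c ^ 2 / 8) := by
          apply mul_le_mul_of_nonneg_left _ (Real.exp_nonneg _)
          have := IH g hgmeas Bb hgB c hgosc l
          rwa [← hmg] at this
      _ = Real.exp (l ^ 2 * (n + 1 : ℕ) * c ^ 2 / 8) := by
          rw [← Real.exp_add]
          congr 1
          push_cast
          ring

end McDiarmid


set_option linter.unusedSectionVars false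
section Hilbert
variable {Ξ : Type*} [MeasurableSpace Ξ]
variable {H : Type*} [NormedAddCommGroup H] [InnerProductSpace ℝ H] [CompleteSpace H]

local notation "⟪" x ", " y "⟫" => @inner ℝ _ _ x y

lemma vec_integrable_of_bounds {α E : Type*} [MeasurableSpace α] {ν : Measure α}
    [IsProbabilityMeasure ν] [NormedAddCommGroup E] {X : α → E}
    (hX : AEStronglyMeasurable X ν) {B : ℝ} (hB : ∀ ω, ‖X ω‖ ≤ B) : Integrable X ν :=
  Integrable.mono' (integrable_const B) hX (ae_of_all _ hB)

lemma integral_pi_succ (P : Measure Ξ) [IsProbabilityMeasure P]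
    {E : Type*} [NormedAddCommGroup E] [NormedSpace ℝ E]
    (n : ℕ) (g : (Fin (n+1) → Ξ) → E) :
    ∫ x, g x ∂(Measure.pi fun _ : Fin (n+1) => P)
      = ∫ z : Ξ × (Fin n → Ξ), g (Fin.cons z.1 z.2)
          ∂(P.prod (Measure.pi fun _ : Fin n => P)) := by
  have mp := measurePreserving_piFinSuccAbove (fun _ : Fin (n+1) => P) 0
  set e := MeasurableEquiv.piFinSuccAbove (fun _ : Fin (n+1) => Ξ) 0 with he
  have hsymm : ∀ z : Ξ × (Fin n → Ξ), e.symm z = Fin.cons z.1 z.2 := by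
    intro z
    simp [he, MeasurableEquiv.piFinSuccAbove_symm_apply, Fin.insertNthEquiv, Fin.insertNth_zero]
  have h1 := (mp.symm e).integral_comp' g
  have h2 : ∫ z, g (e.symm z) ∂(P.prod (Measure.pi fun _ : Fin n => P))
      = ∫ z : Ξ × (Fin n → Ξ), g (Fin.cons z.1 z.2)
          ∂(P.prod (Measure.pi fun _ : Fin n => P)) :=
    integral_congr_ae (ae_of_all _ fun z => congrArg g (hsymm z))
  exact h1.symm.trans h2

variable (P : Measure Ξ) [IsProbabilityMeasure P]
variable {φ : Ξ → H} {C : ℝ}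

section VarLemmas
variable (hC : 0 < C) (hφm : StronglyMeasurable φ) (hφ : ∀ ξ, ‖φ ξ‖ ^ 2 ≤ C)
include hC hφm hφ

lemma phi_norm_le : ∀ ξ, ‖φ ξ‖ ≤ Real.sqrt C := by
  intro ξ
  nlinarith [Real.sq_sqrt hC.le, Real.sqrt_nonneg C, hφ ξ, norm_nonneg (φ ξ)]

lemma phi_integrable : Integrable φ P :=
  vec_integrable_of_bounds hφm.aestronglyMeasurable (phi_norm_le hC hφm hφ)

lemma mean_norm_le : ‖∫ ξ, φ ξ ∂P‖ ≤ Real.sqrt C := by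
  calc ‖∫ ξ, φ ξ ∂P‖ ≤ Real.sqrt C * (P Set.univ).toReal :=
        norm_integral_le_of_norm_le_const (ae_of_all _ (phi_norm_le hC hφm hφ))
    _ = Real.sqrt C := by simp

lemma centered_norm_le : ∀ ξ, ‖φ ξ - ∫ ξ', φ ξ' ∂P‖ ≤ 2 * Real.sqrt C := by
  intro ξ
  calc ‖φ ξ - ∫ ξ', φ ξ' ∂P‖ ≤ ‖φ ξ‖ + ‖∫ ξ', φ ξ' ∂P‖ := norm_sub_le _ _
    _ ≤ 2 * Real.sqrt C := by
        linarith [phi_norm_le hC hφm hφ ξ, mean_norm_le P hC hφm hφ]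

lemma centered_var_le : ∫ ξ, ‖φ ξ - ∫ ξ', φ ξ' ∂P‖ ^ 2 ∂P ≤ C := by
  set μH : H := ∫ ξ', φ ξ' ∂P with hμH
  have hint : Integrable φ P := phi_integrable (P := P) hC hφm hφ
  have hintn2 : Integrable (fun ξ => ‖φ ξ‖ ^ 2) P := by
    apply integrable_of_bounds (hφm.norm.measurable.pow_const 2).aestronglyMeasurable (B := C)
    intro ξ
    rw [abs_of_nonneg (by positivity)]
    exact hφ ξ
  have hintin : Integrable (fun ξ => ⟪μH, φ ξ⟫) P := by
    apply integrable_of_bounds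
      ((stronglyMeasurable_const.inner hφm).measurable).aestronglyMeasurable
      (B := Real.sqrt C * Real.sqrt C)
    intro ξ
    calc |⟪μH, φ ξ⟫| ≤ ‖μH‖ * ‖φ ξ‖ := abs_real_inner_le_norm _ _
      _ ≤ Real.sqrt C * Real.sqrt C := by
          have h1 := mean_norm_le P hC hφm hφ
          rw [← hμH] at h1
          have h2 := phi_norm_le hC hφm hφ ξ
          have := Real.sqrt_nonneg C
          nlinarith [norm_nonneg μH, norm_nonneg (φ ξ)]
  have hexpand : ∀ ξ, ‖φ ξ - μH‖ ^ 2 = ‖φ ξ‖ ^ 2 - 2 * ⟪μH, φ ξ⟫ + ‖μH‖ ^ 2 := by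
    intro ξ
    rw [norm_sub_sq_real, real_inner_comm]
  have hinner : ∫ ξ, ⟪μH, φ ξ⟫ ∂P = ‖μH‖ ^ 2 := by
    rw [integral_inner hint, ← hμH, real_inner_self_eq_norm_sq]
  have hsub : Integrable (fun ξ => ‖φ ξ‖ ^ 2 - 2 * ⟪μH, φ ξ⟫) P :=
    hintn2.sub (hintin.const_mul 2)
  calc ∫ ξ, ‖φ ξ - μH‖ ^ 2 ∂P
      = ∫ ξ, (‖φ ξ‖ ^ 2 - 2 * ⟪μH, φ ξ⟫ + ‖μH‖ ^ 2) ∂P :=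
        integral_congr_ae (ae_of_all _ fun ξ => hexpand ξ)
    _ = (∫ ξ, ‖φ ξ‖ ^ 2 ∂P) - 2 * ∫ ξ, ⟪μH, φ ξ⟫ ∂P + ‖μH‖ ^ 2 := by
        rw [integral_add hsub (integrable_const _),
          integral_sub hintn2 (hintin.const_mul 2), integral_const_mul, integral_const]
        simp
    _ ≤ C - 2 * ‖μH‖ ^ 2 + ‖μH‖ ^ 2 := by
        rw [hinner]
        have : ∫ ξ, ‖φ ξ‖ ^ 2 ∂P ≤ C := by
          calc ∫ ξ, ‖φ ξ‖ ^ 2 ∂P ≤ ∫ _, C ∂P := integral_mono hintn2 (integrable_const C) hφ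
            _ = C := by simp
        linarith
    _ ≤ C := by nlinarith [sq_nonneg ‖μH‖]

lemma sum_meas (k : ℕ) : StronglyMeasurable
    (fun x : Fin k → Ξ => ∑ j, (φ (x j) - ∫ ξ', φ ξ' ∂P)) :=
  Finset.stronglyMeasurable_fun_sum _ fun j _ =>
    (hφm.comp_measurable (measurable_pi_apply j)).sub stronglyMeasurable_const

lemma sum_bound (k : ℕ) : ∀ x : Fin k → Ξ,
    ‖∑ j, (φ (x j) - ∫ ξ', φ ξ' ∂P)‖ ≤ k * (2 * Real.sqrt C) := by
  intro x
  calc ‖∑ j, (φ (x j) - ∫ ξ', φ ξ' ∂P)‖ ≤ ∑ j, ‖φ (x j) - ∫ ξ', φ ξ' ∂P‖ :=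
        norm_sum_le _ _
    _ ≤ ∑ _j : Fin k, (2 * Real.sqrt C) :=
        Finset.sum_le_sum fun j _ => centered_norm_le P hC hφm hφ (x j)
    _ = k * (2 * Real.sqrt C) := by
        rw [Finset.sum_const, Finset.card_univ]
        simp [nsmul_eq_mul]

lemma sum_integral_zero : ∀ k : ℕ,
    ∫ x, (∑ j, (φ (x j) - ∫ ξ', φ ξ' ∂P)) ∂(Measure.pi fun _ : Fin k => P) = 0 := by
  intro k
  induction k with
  | zero => simp
  | succ k IH =>
    set μH : H := ∫ ξ', φ ξ' ∂P with hμH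
    set ν : Measure (Fin k → Ξ) := Measure.pi fun _ => P with hν
    rw [integral_pi_succ P k _]
    have hre : (fun z : Ξ × (Fin k → Ξ) => ∑ j : Fin (k+1), (φ ((Fin.cons z.1 z.2 : Fin (k+1) → Ξ) j) - μH))
        = fun z => (φ z.1 - μH) + ∑ j : Fin k, (φ (z.2 j) - μH) := by
      funext z
      rw [Fin.sum_univ_succ]
      simp
    rw [hre]
    have intA : Integrable (fun z : Ξ × (Fin k → Ξ) => φ z.1 - μH) (P.prod ν) :=
      vec_integrable_of_bounds
        ((hφm.comp_measurable measurable_fst).sub stronglyMeasurable_const).aestronglyMeasurable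
        (B := 2 * Real.sqrt C) (fun z => centered_norm_le P hC hφm hφ z.1)
    have intB : Integrable (fun z : Ξ × (Fin k → Ξ) => ∑ j : Fin k, (φ (z.2 j) - μH))
        (P.prod ν) :=
      vec_integrable_of_bounds
        (((sum_meas P hC hφm hφ k).comp_measurable measurable_snd).aestronglyMeasurable)
        (B := k * (2 * Real.sqrt C)) (fun z => sum_bound P hC hφm hφ k z.2)
    rw [integral_add intA intB]
    have e1 : ∫ z, (φ z.1 - μH) ∂(P.prod ν) = 0 := by
      rw [integral_prod _ intA]
      have : ∀ x : Ξ, ∫ _y, (φ x - μH) ∂ν = φ x - μH := fun x => by simp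
      rw [integral_congr_ae (ae_of_all _ this)]
      rw [integral_sub (phi_integrable P hC hφm hφ) (integrable_const _)]
      simp [hμH]
    have e2 : ∫ z, (∑ j : Fin k, (φ (z.2 j) - μH)) ∂(P.prod ν) = 0 := by
      rw [integral_prod_symm _ intB]
      have : ∀ y : Fin k → Ξ, ∫ _x, (∑ j : Fin k, (φ (y j) - μH)) ∂P
          = ∑ j : Fin k, (φ (y j) - μH) := fun y => by simp
      rw [integral_congr_ae (ae_of_all _ this)]
      exact IH
    rw [e1, e2]
    simp

lemma sum_var_le : ∀ k : ℕ,
    ∫ x, ‖∑ j, (φ (x j) - ∫ ξ', φ ξ' ∂P)‖ ^ 2 ∂(Measure.pi fun _ : Fin k => P) ≤ k * C := by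
  intro k
  induction k with
  | zero => simp
  | succ k IH =>
    set μH : H := ∫ ξ', φ ξ' ∂P with hμH
    set ν : Measure (Fin k → Ξ) := Measure.pi fun _ => P with hν
    rw [integral_pi_succ P k _]
    have hre : (fun z : Ξ × (Fin k → Ξ) => ‖∑ j : Fin (k+1), (φ ((Fin.cons z.1 z.2 : Fin (k+1) → Ξ) j) - μH)‖ ^ 2)
        = fun z => (‖φ z.1 - μH‖ ^ 2 + 2 * ⟪φ z.1 - μH, ∑ j : Fin k, (φ (z.2 j) - μH)⟫)
            + ‖∑ j : Fin k, (φ (z.2 j) - μH)‖ ^ 2 := by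
      funext z
      rw [show ∑ j : Fin (k+1), (φ ((Fin.cons z.1 z.2 : Fin (k+1) → Ξ) j) - μH)
          = (φ z.1 - μH) + ∑ j : Fin k, (φ (z.2 j) - μH) by rw [Fin.sum_univ_succ]; simp]
      rw [norm_add_sq_real]
    rw [hre]
    have smA : StronglyMeasurable (fun z : Ξ × (Fin k → Ξ) => φ z.1 - μH) :=
      (hφm.comp_measurable measurable_fst).sub stronglyMeasurable_const
    have smB : StronglyMeasurable (fun z : Ξ × (Fin k → Ξ) => ∑ j : Fin k, (φ (z.2 j) - μH)) :=
      (sum_meas P hC hφm hφ k).comp_measurable measurable_snd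
    have intA2 : Integrable (fun z : Ξ × (Fin k → Ξ) => ‖φ z.1 - μH‖ ^ 2) (P.prod ν) := by
      apply integrable_of_bounds (smA.norm.measurable.pow_const 2).aestronglyMeasurable
        (B := (2 * Real.sqrt C) ^ 2)
      intro z
      rw [abs_of_nonneg (by positivity)]
      have := centered_norm_le P hC hφm hφ z.1
      nlinarith [norm_nonneg (φ z.1 - μH)]
    have intAB : Integrable (fun z : Ξ × (Fin k → Ξ) =>
        ⟪φ z.1 - μH, ∑ j : Fin k, (φ (z.2 j) - μH)⟫) (P.prod ν) := by
      apply integrable_of_bounds (smA.inner smB).measurable.aestronglyMeasurable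
        (B := (2 * Real.sqrt C) * (k * (2 * Real.sqrt C)))
      intro z
      calc |⟪φ z.1 - μH, ∑ j : Fin k, (φ (z.2 j) - μH)⟫|
          ≤ ‖φ z.1 - μH‖ * ‖∑ j : Fin k, (φ (z.2 j) - μH)‖ := abs_real_inner_le_norm _ _
        _ ≤ (2 * Real.sqrt C) * (k * (2 * Real.sqrt C)) := by
            apply mul_le_mul (centered_norm_le P hC hφm hφ z.1)
              (sum_bound P hC hφm hφ k z.2) (norm_nonneg _) (by positivity)
    have intB2 : Integrable (fun z : Ξ × (Fin k → Ξ) =>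
        ‖∑ j : Fin k, (φ (z.2 j) - μH)‖ ^ 2) (P.prod ν) := by
      apply integrable_of_bounds (smB.norm.measurable.pow_const 2).aestronglyMeasurable
        (B := (k * (2 * Real.sqrt C)) ^ 2)
      intro z
      rw [abs_of_nonneg (by positivity)]
      have := sum_bound P hC hφm hφ k z.2
      nlinarith [norm_nonneg (∑ j : Fin k, (φ (z.2 j) - μH))]
    have hsum1 : Integrable (fun z : Ξ × (Fin k → Ξ) =>
        ‖φ z.1 - μH‖ ^ 2 + 2 * ⟪φ z.1 - μH, ∑ j : Fin k, (φ (z.2 j) - μH)⟫) (P.prod ν) :=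
      intA2.add (intAB.const_mul 2)
    rw [integral_add hsum1 intB2, integral_add intA2 (intAB.const_mul 2), integral_const_mul]
    have e1 : ∫ z, ‖φ z.1 - μH‖ ^ 2 ∂(P.prod ν) ≤ C := by
      rw [integral_prod _ intA2]
      have : ∀ x : Ξ, ∫ _y, ‖φ x - μH‖ ^ 2 ∂ν = ‖φ x - μH‖ ^ 2 := fun x => by simp
      rw [integral_congr_ae (ae_of_all _ this)]
      exact centered_var_le P hC hφm hφ
    have e2 : ∫ z, ⟪φ z.1 - μH, ∑ j : Fin k, (φ (z.2 j) - μH)⟫ ∂(P.prod ν) = 0 := by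
      rw [integral_prod _ intAB]
      have intBν : Integrable (fun y : Fin k → Ξ => ∑ j : Fin k, (φ (y j) - μH)) ν :=
        vec_integrable_of_bounds (sum_meas P hC hφm hφ k).aestronglyMeasurable
          (B := k * (2 * Real.sqrt C)) (sum_bound P hC hφm hφ k)
      have : ∀ x : Ξ, ∫ y, ⟪φ x - μH, ∑ j : Fin k, (φ (y j) - μH)⟫ ∂ν = 0 := by
        intro x
        rw [integral_inner intBν, sum_integral_zero P hC hφm hφ k, inner_zero_right]
      rw [integral_congr_ae (ae_of_all _ this)]
      simp
    have e3 : ∫ z, ‖∑ j : Fin k, (φ (z.2 j) - μH)‖ ^ 2 ∂(P.prod ν) ≤ k * C := by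
      rw [integral_prod_symm _ intB2]
      have : ∀ y : Fin k → Ξ, ∫ _x, ‖∑ j : Fin k, (φ (y j) - μH)‖ ^ 2 ∂P
          = ‖∑ j : Fin k, (φ (y j) - μH)‖ ^ 2 := fun y => by simp
      rw [integral_congr_ae (ae_of_all _ this)]
      exact IH
    rw [e2]
    push_cast
    linarith

lemma empEmb_sub_mean (n : ℕ) (hn : 0 < n) : ∀ x : Fin n → Ξ,
    empEmb φ x - ∫ ξ', φ ξ' ∂P = (n : ℝ)⁻¹ • ∑ j, (φ (x j) - ∫ ξ', φ ξ' ∂P) := by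
  intro x
  have hne : ((n : ℝ)) ≠ 0 := Nat.cast_ne_zero.2 hn.ne'
  have h1 : (∑ j, (φ (x j) - ∫ ξ', φ ξ' ∂P)) = (∑ j, φ (x j)) - (n:ℝ) • ∫ ξ', φ ξ' ∂P := by
    rw [Finset.sum_sub_distrib, Finset.sum_const, Finset.card_univ, Fintype.card_fin,
      ← Nat.cast_smul_eq_nsmul ℝ]
  rw [h1, smul_sub, smul_smul, inv_mul_cancel₀ hne, one_smul, empEmb]

lemma empEmb_norm_sub_le (n : ℕ) (hn : 0 < n) : ∀ x : Fin n → Ξ,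
    ‖empEmb φ x - ∫ ξ', φ ξ' ∂P‖ ≤ 2 * Real.sqrt C := by
  intro x
  have hne : ((n : ℝ)) ≠ 0 := Nat.cast_ne_zero.2 hn.ne'
  rw [empEmb_sub_mean P hC hφm hφ n hn x, norm_smul]
  have h1 : ‖(n : ℝ)⁻¹‖ = (n : ℝ)⁻¹ := by
    rw [Real.norm_eq_abs, abs_of_nonneg (by positivity)]
  rw [h1]
  calc (n : ℝ)⁻¹ * ‖∑ j, (φ (x j) - ∫ ξ', φ ξ' ∂P)‖
      ≤ (n : ℝ)⁻¹ * (n * (2 * Real.sqrt C)) := by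
        apply mul_le_mul_of_nonneg_left (sum_bound P hC hφm hφ n x) (by positivity)
    _ = 2 * Real.sqrt C := by field_simp
 
lemma empirical_var (n : ℕ) (hn : 0 < n) :
    ∫ x, ‖empEmb φ x - ∫ ξ', φ ξ' ∂P‖ ^ 2 ∂(Measure.pi fun _ : Fin n => P) ≤ C / n := by
  have hne : ((n : ℝ)) ≠ 0 := Nat.cast_ne_zero.2 hn.ne'
  have hpt : ∀ x : Fin n → Ξ, ‖empEmb φ x - ∫ ξ', φ ξ' ∂P‖ ^ 2
      = ((n : ℝ)⁻¹) ^ 2 * ‖∑ j, (φ (x j) - ∫ ξ', φ ξ' ∂P)‖ ^ 2 := by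
    intro x
    rw [empEmb_sub_mean P hC hφm hφ n hn x, norm_smul, Real.norm_eq_abs,
      abs_of_nonneg (by positivity), mul_pow]
  calc ∫ x, ‖empEmb φ x - ∫ ξ', φ ξ' ∂P‖ ^ 2 ∂(Measure.pi fun _ : Fin n => P)
      = ∫ x, ((n : ℝ)⁻¹) ^ 2 * ‖∑ j, (φ (x j) - ∫ ξ', φ ξ' ∂P)‖ ^ 2
          ∂(Measure.pi fun _ : Fin n => P) :=
        integral_congr_ae (ae_of_all _ hpt)
    _ = ((n : ℝ)⁻¹) ^ 2 * ∫ x, ‖∑ j, (φ (x j) - ∫ ξ', φ ξ' ∂P)‖ ^ 2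
          ∂(Measure.pi fun _ : Fin n => P) := integral_const_mul _ _
    _ ≤ ((n : ℝ)⁻¹) ^ 2 * (n * C) := by
        apply mul_le_mul_of_nonneg_left (sum_var_le P hC hφm hφ n) (by positivity)
    _ = C / n := by field_simp

lemma empirical_meas (n : ℕ) :
    Measurable (fun x : Fin n → Ξ => ‖empEmb φ x - ∫ ξ', φ ξ' ∂P‖) := by
  have smEmp : StronglyMeasurable (fun x : Fin n → Ξ => empEmb φ x) :=
    (Finset.stronglyMeasurable_fun_sum _ fun j _ =>
      hφm.comp_measurable (measurable_pi_apply j)).const_smul _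
  exact (smEmp.sub stronglyMeasurable_const).norm.measurable

lemma empirical_mean_sq (n : ℕ) (hn : 0 < n) :
    (∫ x, ‖empEmb φ x - ∫ ξ', φ ξ' ∂P‖ ∂(Measure.pi fun _ : Fin n => P)) ^ 2 ≤ C / n := by
  set ν : Measure (Fin n → Ξ) := Measure.pi fun _ : Fin n => P with hν
  set f : (Fin n → Ξ) → ℝ := fun x => ‖empEmb φ x - ∫ ξ', φ ξ' ∂P‖ with hf
  have hfm : Measurable f := empirical_meas P hC hφm hφ n
  have hfB : ∀ x, |f x| ≤ 2 * Real.sqrt C := by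
    intro x
    rw [hf, abs_of_nonneg (norm_nonneg _)]
    exact empEmb_norm_sub_le P hC hφm hφ n hn x
  have hint_f : Integrable f ν := integrable_of_bounds hfm.aestronglyMeasurable hfB
  have hint_f2 : Integrable (fun x => f x ^ 2) ν := by
    apply integrable_of_bounds (hfm.pow_const 2).aestronglyMeasurable
      (B := (2 * Real.sqrt C) ^ 2)
    intro x
    rw [abs_of_nonneg (by positivity)]
    have := hfB x
    nlinarith [abs_nonneg (f x), le_abs_self (f x), neg_abs_le (f x)]
  set m : ℝ := ∫ x, f x ∂ν with hm
  have key : 0 ≤ (∫ x, f x ^ 2 ∂ν) - m ^ 2 := by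
    have h0 : 0 ≤ ∫ x, (f x - m) ^ 2 ∂ν := integral_nonneg fun x => sq_nonneg _
    have hsub : Integrable (fun x => f x ^ 2 - 2 * m * f x) ν :=
      hint_f2.sub ((hint_f.const_mul (2 * m)))
    have hexp : ∫ x, (f x - m) ^ 2 ∂ν = (∫ x, f x ^ 2 ∂ν) - m ^ 2 := by
      have hpt : ∀ x, (f x - m) ^ 2 = (f x ^ 2 - 2 * m * f x) + m ^ 2 := fun x => by ring
      rw [integral_congr_ae (ae_of_all _ hpt), integral_add hsub (integrable_const _),
        integral_sub hint_f2 (hint_f.const_mul (2 * m)), integral_const_mul, ← hm,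
        integral_const]
      simp
      ring
    linarith [hexp ▸ h0]
  have hvar : ∫ x, f x ^ 2 ∂ν ≤ C / n := empirical_var P hC hφm hφ n hn
  linarith

lemma dataset_tail [Nonempty Ξ] (n : ℕ) (hn : 0 < n) {L : ℝ} (hL : 0 < L) :
    (Measure.pi fun _ : Fin n => P)
      {x | 2 * C * (1 + 2 * L) / n < ‖empEmb φ x - ∫ ξ', φ ξ' ∂P‖ ^ 2}
        ≤ ENNReal.ofReal (Real.exp (-L)) := by
  set ν : Measure (Fin n → Ξ) := Measure.pi fun _ : Fin n => P with hν
  set f : (Fin n → Ξ) → ℝ := fun x => ‖empEmb φ x - ∫ ξ', φ ξ' ∂P‖ with hf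
  have hne : ((n : ℝ)) ≠ 0 := Nat.cast_ne_zero.2 hn.ne'
  have hnpos : (0:ℝ) < n := by positivity
  have hsC : 0 < Real.sqrt C := Real.sqrt_pos.2 hC
  have hfm : Measurable f := empirical_meas P hC hφm hφ n
  have hfB : ∀ x, |f x| ≤ 2 * Real.sqrt C := by
    intro x
    rw [hf, abs_of_nonneg (norm_nonneg _)]
    exact empEmb_norm_sub_le P hC hφm hφ n hn x
  set c : ℝ := 2 * Real.sqrt C / n with hc
  have hc0 : 0 < c := by positivity
  have hosc : ∀ (j : Fin n) (x : Fin n → Ξ) (ξ ξ' : Ξ),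
      f (Function.update x j ξ) - f (Function.update x j ξ') ≤ c := by
    intro j x ξ ξ'
    have hkey : ∀ ξ0 : Ξ, (fun k => φ (Function.update x j ξ0 k))
        = Function.update (fun k => φ (x k)) j (φ ξ0) := by
      intro ξ0
      funext k
      simp [Function.update_apply, apply_ite φ]
    have hdiff : empEmb φ (Function.update x j ξ) - empEmb φ (Function.update x j ξ')
        = (n : ℝ)⁻¹ • (φ ξ - φ ξ') := by
      rw [empEmb, empEmb, ← smul_sub]
      congr 1
      rw [show (∑ k, φ (Function.update x j ξ k)) = ∑ k, Function.update (fun k => φ (x k)) j (φ ξ) k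
          from Finset.sum_congr rfl fun k _ => congrFun (hkey ξ) k]
      rw [show (∑ k, φ (Function.update x j ξ' k)) = ∑ k, Function.update (fun k => φ (x k)) j (φ ξ') k
          from Finset.sum_congr rfl fun k _ => congrFun (hkey ξ') k]
      rw [Finset.sum_update_of_mem (Finset.mem_univ j), Finset.sum_update_of_mem (Finset.mem_univ j)]
      abel
    calc f (Function.update x j ξ) - f (Function.update x j ξ')
        ≤ ‖(empEmb φ (Function.update x j ξ) - ∫ ξ', φ ξ' ∂P)
            - (empEmb φ (Function.update x j ξ') - ∫ ξ', φ ξ' ∂P)‖ := norm_sub_norm_le _ _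
      _ = ‖(n : ℝ)⁻¹ • (φ ξ - φ ξ')‖ := by rw [show (empEmb φ (Function.update x j ξ) - ∫ ξ', φ ξ' ∂P)
            - (empEmb φ (Function.update x j ξ') - ∫ ξ', φ ξ' ∂P)
            = empEmb φ (Function.update x j ξ) - empEmb φ (Function.update x j ξ') by abel, hdiff]
      _ ≤ c := by
          rw [norm_smul, Real.norm_eq_abs, abs_of_nonneg (by positivity), hc]
          have h1 : ‖φ ξ - φ ξ'‖ ≤ 2 * Real.sqrt C := by
            calc ‖φ ξ - φ ξ'‖ ≤ ‖φ ξ‖ + ‖φ ξ'‖ := norm_sub_le _ _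
              _ ≤ 2 * Real.sqrt C := by
                  linarith [phi_norm_le hC hφm hφ ξ, phi_norm_le hC hφm hφ ξ']
          calc (n:ℝ)⁻¹ * ‖φ ξ - φ ξ'‖ ≤ (n:ℝ)⁻¹ * (2 * Real.sqrt C) := by
                apply mul_le_mul_of_nonneg_left h1 (by positivity)
            _ = 2 * Real.sqrt C / n := by ring
  set m : ℝ := ∫ x, f x ∂ν with hm
  have hm0 : 0 ≤ m := integral_nonneg fun x => norm_nonneg _
  have hmsq : m ^ 2 ≤ C / n := empirical_mean_sq P hC hφm hφ n hn
  set ε : ℝ := Real.sqrt (2 * C * L / n) with hε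
  have hε0 : 0 < ε := Real.sqrt_pos.2 (by positivity)
  have hε2 : ε ^ 2 = 2 * C * L / n := Real.sq_sqrt (by positivity)
  set l : ℝ := ε * n / C with hl
  have hl0 : 0 < l := by positivity
  have hc2 : c ^ 2 = 4 * C / n ^ 2 := by
    rw [hc, div_pow, mul_pow]
    rw [Real.sq_sqrt hC.le]
    norm_num
  have hmgf := mcdiarmid_mgf P n f hfm (2 * Real.sqrt C) hfB c hosc l
  rw [← hν, ← hm] at hmgf
  have hexp_int : Integrable (fun x => Real.exp (l * (f x - m))) ν := by
    apply integrable_of_bounds (((hfm.sub measurable_const).const_mul l).exp).aestronglyMeasurable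
      (B := Real.exp (|l| * (2 * Real.sqrt C + |m|)))
    intro x
    rw [abs_of_nonneg (Real.exp_nonneg _)]
    apply Real.exp_le_exp.2
    calc l * (f x - m) ≤ |l * (f x - m)| := le_abs_self _
      _ = |l| * |f x - m| := abs_mul _ _
      _ ≤ |l| * (2 * Real.sqrt C + |m|) := by
          apply mul_le_mul_of_nonneg_left _ (abs_nonneg l)
          calc |f x - m| ≤ |f x| + |m| := abs_sub _ _
            _ ≤ 2 * Real.sqrt C + |m| := by linarith [hfB x]
  -- Markov / Chernoff
  have hsubset : {x : Fin n → Ξ | 2 * C * (1 + 2 * L) / n < f x ^ 2}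
      ⊆ {x : Fin n → Ξ | Real.exp (l * ε) ≤ Real.exp (l * (f x - m))} := by
    intro x hx
    simp only [Set.mem_setOf_eq] at hx ⊢
    apply Real.exp_le_exp.2
    apply mul_le_mul_of_nonneg_left _ hl0.le
    -- need ε ≤ f x - m
    have h1 : (m + ε) ^ 2 ≤ 2 * C * (1 + 2 * L) / n := by
      have h2 : (m + ε) ^ 2 ≤ 2 * m ^ 2 + 2 * ε ^ 2 := by nlinarith [sq_nonneg (m - ε)]
      calc (m + ε) ^ 2 ≤ 2 * m ^ 2 + 2 * (2 * C * L / n) := by rw [← hε2]; exact h2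
        _ ≤ 2 * (C / n) + 2 * (2 * C * L / n) := by linarith
        _ = 2 * C * (1 + 2 * L) / n := by field_simp
    have hfx0 : 0 ≤ f x := norm_nonneg _
    nlinarith
  have hmarkov := mul_meas_ge_le_integral_of_nonneg
    (ae_of_all ν fun x => Real.exp_nonneg (l * (f x - m))) hexp_int (Real.exp (l * ε))
  have htail : (ν {x | Real.exp (l * ε) ≤ Real.exp (l * (f x - m))}).toReal
      ≤ Real.exp (l ^ 2 * n * c ^ 2 / 8 - l * ε) := by
    rw [Real.exp_sub, le_div_iff₀ (Real.exp_pos _)]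
    calc (ν {x | Real.exp (l * ε) ≤ Real.exp (l * (f x - m))}).toReal * Real.exp (l * ε)
        = Real.exp (l * ε) * (ν {x | Real.exp (l * ε) ≤ Real.exp (l * (f x - m))}).toReal :=
          mul_comm _ _
      _ ≤ ∫ x, Real.exp (l * (f x - m)) ∂ν := hmarkov
      _ ≤ Real.exp (l ^ 2 * n * c ^ 2 / 8) := hmgf
  have hval : l ^ 2 * (n:ℝ) * c ^ 2 / 8 - l * ε = -(ε ^ 2 * (n:ℝ) / (2 * C)) := by
    rw [hl, hc2]
    field_simp
    ring
  have hval2 : -(ε ^ 2 * (n:ℝ) / (2 * C)) = -L := by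
    rw [hε2]
    field_simp
  have hfinal : (ν {x | Real.exp (l * ε) ≤ Real.exp (l * (f x - m))}).toReal
      ≤ Real.exp (-L) := by
    rw [← hval2, ← hval]
    exact htail
  calc ν {x | 2 * C * (1 + 2 * L) / n < ‖empEmb φ x - ∫ ξ', φ ξ' ∂P‖ ^ 2}
      ≤ ν {x | Real.exp (l * ε) ≤ Real.exp (l * (f x - m))} := measure_mono hsubset
    _ ≤ ENNReal.ofReal (Real.exp (-L)) := by
        rw [← ENNReal.ofReal_toReal (measure_ne_top ν _)]
        exact ENNReal.ofReal_le_ofReal hfinal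
end VarLemmas
end Hilbert


/-- **Aggregated embedding estimation error bound.**
For every `δ ∈ (0,1)`, with probability at least `1 − δ` over the `M` mutually
independent datasets (the `i`-th consisting of `n i` i.i.d. samples from `P i`,
modeled by the product measure), `Σ_{i=1}^M ‖μ̂_i − μ_i‖² ≤ 2C(1 + 2·log(M/δ))/n̄`. -/
theorem aggregated_embedding_error_bound
    {H : Type*} [NormedAddCommGroup H] [InnerProductSpace ℝ H] [CompleteSpace H]
    {Ξ : Type*} [MeasurableSpace Ξ]
    (C : ℝ) (hC : 0 < C)
    (φ : Ξ → H) (hφm : StronglyMeasurable φ) (hφ : ∀ ξ, ‖φ ξ‖ ^ 2 ≤ C)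
    (M : ℕ) (hM : 0 < M)
    (P : Fin M → Measure Ξ) [∀ i, IsProbabilityMeasure (P i)]
    (n : Fin M → ℕ) (hn : ∀ i, 0 < n i)
    (μ : Fin M → H) (hμ : ∀ i, μ i = ∫ ξ, φ ξ ∂(P i))
    (nbar : ℝ) (hnbar : nbar = (∑ i, (1 : ℝ) / n i)⁻¹)
    (δ : ℝ) (hδ : δ ∈ Set.Ioo (0 : ℝ) 1) :
    ENNReal.ofReal (1 - δ) ≤
      Measure.pi (fun i => Measure.pi fun _ : Fin (n i) => P i)
        {x : (i : Fin M) → Fin (n i) → Ξ |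
          ∑ i, ‖empEmb φ (x i) - μ i‖ ^ 2 ≤ 2 * C * (1 + 2 * Real.log (M / δ)) / nbar} := by
  obtain ⟨hδ0, hδ1⟩ := hδ
  have hne : Nonempty Ξ := by
    by_contra h
    have hiE : IsEmpty Ξ := not_nonempty_iff.1 h
    have h1 : (P ⟨0, hM⟩) Set.univ = 1 := measure_univ
    rw [Set.univ_eq_empty_iff.2 hiE, measure_empty] at h1
    exact zero_ne_one h1
  set L : ℝ := Real.log (M / δ) with hL
  have hM1 : (1:ℝ) ≤ M := by exact_mod_cast hM
  have hL0 : 0 < L := Real.log_pos (by rw [lt_div_iff₀ hδ0]; linarith)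
  have hexpL : Real.exp (-L) = δ / M := by
    rw [hL, ← Real.log_inv, Real.exp_log (by positivity)]
    rw [inv_div]
  set μtot := Measure.pi (fun i => Measure.pi fun _ : Fin (n i) => P i) with hμtot
  set bad : (i : Fin M) → Set (Fin (n i) → Ξ) := fun i =>
    {y | 2 * C * (1 + 2 * L) / (n i) < ‖empEmb φ y - ∫ ξ', φ ξ' ∂(P i)‖ ^ 2} with hbad
  have hbadmeas : ∀ i, MeasurableSet (bad i) := by
    intro i
    exact measurableSet_lt measurable_const
      (((empirical_meas (P i) hC hφm hφ (n i)).pow_const 2))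
  have hbadle : ∀ i, (Measure.pi fun _ : Fin (n i) => P i) (bad i)
      ≤ ENNReal.ofReal (δ / M) := by
    intro i
    rw [← hexpL]
    exact dataset_tail (P i) hC hφm hφ (n i) (hn i) hL0
  set Bad : Set ((i : Fin M) → Fin (n i) → Ξ) := ⋃ i, (fun x => x i) ⁻¹' (bad i) with hBad
  have hBadmeas : MeasurableSet Bad :=
    MeasurableSet.iUnion fun i => (hbadmeas i).preimage (measurable_pi_apply i)
  have hcyl : ∀ i, μtot ((fun x => x i) ⁻¹' (bad i))
      = (Measure.pi fun _ : Fin (n i) => P i) (bad i) := by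
    intro i
    classical
    have h1 : ((fun x : (i : Fin M) → Fin (n i) → Ξ => x i) ⁻¹' (bad i))
        = Set.pi Set.univ (Function.update (fun j => Set.univ) i (bad i)) := by
      exact Set.eval_preimage
    have h2 : ∀ j, j ≠ i → (Measure.pi fun _ : Fin (n j) => P j)
        (Function.update (fun k => (Set.univ : Set (Fin (n k) → Ξ))) i (bad i) j) = 1 := by
      intro j hj
      rw [Function.update_of_ne hj]
      exact measure_univ
    rw [h1, hμtot, Measure.pi_pi, Finset.prod_eq_single i (fun j _ hj => h2 j hj)
      (fun h => absurd (Finset.mem_univ i) h), Function.update_self]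
  have hBadle : μtot Bad ≤ ENNReal.ofReal δ := by
    calc μtot Bad ≤ ∑' i, μtot ((fun x => x i) ⁻¹' (bad i)) := measure_iUnion_le _
      _ = ∑ i, μtot ((fun x => x i) ⁻¹' (bad i)) := tsum_fintype _
      _ ≤ ∑ _i : Fin M, ENNReal.ofReal (δ / M) := by
          apply Finset.sum_le_sum
          intro i _
          rw [hcyl i]
          exact hbadle i
      _ = (M : ℝ≥0∞) * ENNReal.ofReal (δ / M) := by
          rw [Finset.sum_const, Finset.card_univ, Fintype.card_fin, nsmul_eq_mul]
      _ = ENNReal.ofReal δ := by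
          rw [← ENNReal.ofReal_natCast M, ← ENNReal.ofReal_mul (by positivity)]
          congr 1
          field_simp
  have hsubset : Badᶜ ⊆ {x : (i : Fin M) → Fin (n i) → Ξ |
      ∑ i, ‖empEmb φ (x i) - μ i‖ ^ 2 ≤ 2 * C * (1 + 2 * L) / nbar} := by
    intro x hx
    simp only [hBad, Set.compl_iUnion, Set.mem_iInter, Set.mem_compl_iff, Set.mem_preimage,
      hbad, Set.mem_setOf_eq, not_lt] at hx
    simp only [Set.mem_setOf_eq]
    have hsum : ∑ i, ‖empEmb φ (x i) - μ i‖ ^ 2 ≤ ∑ i, 2 * C * (1 + 2 * L) / (n i) := by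
      apply Finset.sum_le_sum
      intro i _
      rw [hμ i]
      exact hx i
    have heq : ∑ i, 2 * C * (1 + 2 * L) / ((n i : ℝ)) = 2 * C * (1 + 2 * L) / nbar := by
      rw [hnbar]
      rw [show 2 * C * (1 + 2 * L) / (∑ i : Fin M, (1:ℝ) / (n i))⁻¹
          = 2 * C * (1 + 2 * L) * (∑ i : Fin M, (1:ℝ) / (n i)) by
        rw [div_eq_mul_inv, inv_inv]]
      rw [Finset.mul_sum]
      apply Finset.sum_congr rfl
      intro i _
      rw [mul_one_div]
    linarith [hsum.trans_eq heq]
  have hprob : IsProbabilityMeasure μtot := by infer_instance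
  calc ENNReal.ofReal (1 - δ) = 1 - ENNReal.ofReal δ := by
        rw [← ENNReal.ofReal_one, ← ENNReal.ofReal_sub _ hδ0.le]
    _ ≤ 1 - μtot Bad := tsub_le_tsub_left hBadle 1
    _ = μtot Badᶜ := by
        rw [measure_compl hBadmeas (measure_ne_top _ _), measure_univ]
    _ ≤ μtot {x : (i : Fin M) → Fin (n i) → Ξ |
          ∑ i, ‖empEmb φ (x i) - μ i‖ ^ 2 ≤ 2 * C * (1 + 2 * L) / nbar} :=
        measure_mono hsubset
    _ = μtot {x : (i : Fin M) → Fin (n i) → Ξ |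
          ∑ i, ‖empEmb φ (x i) - μ i‖ ^ 2 ≤ 2 * C * (1 + 2 * Real.log (M / δ)) / nbar} := rfl
end

section
/- Let μ_1,…,μ_M and μ̂_1,…,μ̂_M be vectors in a real Hilbert space H with ‖μ_i‖ ≤ √C for all i, and set ε := (Σ_{i=1}^M ‖μ̂_i − μ_i‖²)^{1/2}. Then the Gram matrices K := [⟨μ_i,μ_j⟩_H]_{i,j=1}^M and K̂ := [⟨μ̂_i,μ̂_j⟩_H]_{i,j=1}^M satisfy ‖K̂ − K‖₂ ≤ 2√(MC)·ε + ε². -/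
/-- Gram matrix of a family of vectors in a real inner product space. -/
noncomputable def gram {H : Type*} [NormedAddCommGroup H] [InnerProductSpace ℝ H]
    {m : ℕ} (μ : Fin m → H) : Matrix (Fin m) (Fin m) ℝ :=
  Matrix.of fun i j => (inner ℝ (μ i) (μ j) : ℝ)

/-- Spectral norm (`ℓ²`-operator norm) of a real square matrix. -/
noncomputable def spectralNorm2 {m : ℕ} (A : Matrix (Fin m) (Fin m) ℝ) : ℝ :=
  ‖Matrix.toEuclideanCLM (𝕜 := ℝ) A‖

lemma spectralNorm2_add_le {m : ℕ} (A B : Matrix (Fin m) (Fin m) ℝ) :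
    spectralNorm2 (A + B) ≤ spectralNorm2 A + spectralNorm2 B := by
  unfold spectralNorm2
  rw [map_add]
  exact norm_add_le _ _

/-- spectral norm is at most the Frobenius norm. -/
lemma spectralNorm2_le_frobenius {m : ℕ} (A : Matrix (Fin m) (Fin m) ℝ) :
    spectralNorm2 A ≤ Real.sqrt (∑ i, ∑ j, (A i j) ^ 2) := by
  unfold spectralNorm2
  apply ContinuousLinearMap.opNorm_le_bound _ (Real.sqrt_nonneg _)
  intro x
  have happ : ∀ i, (Matrix.toEuclideanCLM (𝕜 := ℝ) A x) i = A.mulVec x i := fun i =>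
    congrFun (Matrix.ofLp_toEuclideanCLM A x) i
  rw [EuclideanSpace.norm_eq]
  have hx2 : ∑ j, (x j) ^ 2 = ‖x‖ ^ 2 := by
    rw [EuclideanSpace.norm_eq, Real.sq_sqrt (by positivity)]
    simp [sq_abs]
  have key : ∑ i, ‖(Matrix.toEuclideanCLM (𝕜 := ℝ) A x) i‖ ^ 2 ≤
      (∑ i, ∑ j, (A i j) ^ 2) * ‖x‖ ^ 2 := by
    rw [← hx2, Finset.sum_mul]
    apply Finset.sum_le_sum
    intro i _
    rw [happ i]
    simpa [Matrix.mulVec, dotProduct, Real.norm_eq_abs, sq_abs] using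
      Finset.sum_mul_sq_le_sq_mul_sq Finset.univ (fun j => A i j) (fun j => x j)
  calc Real.sqrt (∑ i, ‖(Matrix.toEuclideanCLM (𝕜 := ℝ) A x) i‖ ^ 2)
      ≤ Real.sqrt ((∑ i, ∑ j, (A i j) ^ 2) * ‖x‖ ^ 2) := Real.sqrt_le_sqrt key
    _ = Real.sqrt (∑ i, ∑ j, (A i j) ^ 2) * ‖x‖ := by
        rw [Real.sqrt_mul (by positivity), Real.sqrt_sq (norm_nonneg _)]

/-- spectral norm of an "inner product cross matrix" is at most the product of the
ℓ² norms of the two families. -/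
lemma spectralNorm2_inner_le {H : Type*} [NormedAddCommGroup H] [InnerProductSpace ℝ H]
    {m : ℕ} (u v : Fin m → H) :
    spectralNorm2 (Matrix.of fun i j => (inner ℝ (u i) (v j) : ℝ)) ≤
      Real.sqrt (∑ i, ‖u i‖ ^ 2) * Real.sqrt (∑ j, ‖v j‖ ^ 2) := by
  refine (spectralNorm2_le_frobenius _).trans ?_
  rw [← Real.sqrt_mul (by positivity)]
  apply Real.sqrt_le_sqrt
  rw [Finset.sum_mul_sum]
  apply Finset.sum_le_sum
  intro i _
  apply Finset.sum_le_sum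
  intro j _
  have h := abs_real_inner_le_norm (u i) (v j)
  calc (Matrix.of (fun i j => (inner ℝ (u i) (v j) : ℝ)) i j) ^ 2
      = |(inner ℝ (u i) (v j) : ℝ)| ^ 2 := by rw [sq_abs]; rfl
    _ ≤ (‖u i‖ * ‖v j‖) ^ 2 := by
        apply pow_le_pow_left₀ (abs_nonneg _) h
    _ = ‖u i‖ ^ 2 * ‖v j‖ ^ 2 := by ring

/-- **Deterministic Gram matrix perturbation bound.**
If `‖μ_i‖ ≤ √C` for all `i` and `ε := (Σ_i ‖μ̂_i − μ_i‖²)^{1/2}`, then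
`‖K̂ − K‖₂ ≤ 2√(MC)·ε + ε²`. -/
theorem gram_matrix_perturbation_bound
    {H : Type*} [NormedAddCommGroup H] [InnerProductSpace ℝ H]
    (M : ℕ) (C : ℝ) (hC : 0 < C)
    (μ μhat : Fin M → H) (hμ : ∀ i, ‖μ i‖ ≤ Real.sqrt C)
    (ε : ℝ) (hε : ε = Real.sqrt (∑ i, ‖μhat i - μ i‖ ^ 2)) :
    spectralNorm2 (gram μhat - gram μ) ≤ 2 * Real.sqrt (M * C) * ε + ε ^ 2 := by
  set δ : Fin M → H := fun i => μhat i - μ i with hδ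
  have hdecomp : gram μhat - gram μ =
      (Matrix.of fun i j => (inner ℝ (δ i) (μ j) : ℝ)) +
        ((Matrix.of fun i j => (inner ℝ (μ i) (δ j) : ℝ)) +
          (Matrix.of fun i j => (inner ℝ (δ i) (δ j) : ℝ))) := by
    ext i j
    simp only [gram, Matrix.sub_apply, Matrix.add_apply, Matrix.of_apply, hδ,
      inner_sub_left, inner_sub_right]
    ring
  have hδsum : Real.sqrt (∑ i, ‖δ i‖ ^ 2) = ε := hε.symm
  have hμsum : Real.sqrt (∑ j, ‖μ j‖ ^ 2) ≤ Real.sqrt (M * C) := by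
    apply Real.sqrt_le_sqrt
    calc ∑ j, ‖μ j‖ ^ 2 ≤ ∑ _j : Fin M, C := by
          apply Finset.sum_le_sum
          intro j _
          have := pow_le_pow_left₀ (norm_nonneg _) (hμ j) 2
          rwa [Real.sq_sqrt hC.le] at this
      _ = M * C := by simp [mul_comm]
  have hεnn : 0 ≤ ε := hε ▸ Real.sqrt_nonneg _
  have h1 : spectralNorm2 (Matrix.of fun i j => (inner ℝ (δ i) (μ j) : ℝ)) ≤
      ε * Real.sqrt (M * C) := by
    refine (spectralNorm2_inner_le δ μ).trans ?_
    rw [hδsum]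
    exact mul_le_mul_of_nonneg_left hμsum hεnn
  have h2 : spectralNorm2 (Matrix.of fun i j => (inner ℝ (μ i) (δ j) : ℝ)) ≤
      Real.sqrt (M * C) * ε := by
    refine (spectralNorm2_inner_le μ δ).trans ?_
    rw [hδsum]
    exact mul_le_mul_of_nonneg_right hμsum hεnn
  have h3 : spectralNorm2 (Matrix.of fun i j => (inner ℝ (δ i) (δ j) : ℝ)) ≤ ε ^ 2 := by
    refine (spectralNorm2_inner_le δ δ).trans ?_
    rw [hδsum]; ring_nf; rfl
  calc spectralNorm2 (gram μhat - gram μ)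
      ≤ spectralNorm2 (Matrix.of fun i j => (inner ℝ (δ i) (μ j) : ℝ)) +
        (spectralNorm2 (Matrix.of fun i j => (inner ℝ (μ i) (δ j) : ℝ)) +
          spectralNorm2 (Matrix.of fun i j => (inner ℝ (δ i) (δ j) : ℝ))) := by
        rw [hdecomp]
        exact (spectralNorm2_add_le _ _).trans
          (by gcongr; exact spectralNorm2_add_le _ _)
    _ ≤ ε * Real.sqrt (M * C) + (Real.sqrt (M * C) * ε + ε ^ 2) := by gcongr
    _ = 2 * Real.sqrt (M * C) * ε + ε ^ 2 := by ring
end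

section
/- Let 𝒜 ⊆ ℝ^M be a nonempty closed convex set, let K, K̂ ∈ ℝ^{M×M} be symmetric matrices with K positive definite (so its smallest eigenvalue λ_min(K) > 0), and let q, q̂ ∈ ℝ^M. Let α* be the unique minimizer of α ↦ αᵀKα − qᵀα over 𝒜, and let α̂* be any minimizer of α ↦ αᵀK̂α − q̂ᵀα over 𝒜. Then ‖α̂* − α*‖₂ ≤ (‖K̂ − K‖₂·‖α̂*‖₂ + ‖q̂ − q‖₂/2) / λ_min(K). -/
open Matrix

/-- Euclidean norm of a vector in `ℝ^M`. -/
noncomputable def euclNorm {m : ℕ} (v : Fin m → ℝ) : ℝ := Real.sqrt (∑ i, v i ^ 2)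

lemma euclNorm_nonneg {m : ℕ} (v : Fin m → ℝ) : 0 ≤ euclNorm v := Real.sqrt_nonneg _

lemma sq_euclNorm {m : ℕ} (v : Fin m → ℝ) : euclNorm v ^ 2 = ∑ i, v i ^ 2 :=
  Real.sq_sqrt (by positivity)

lemma euclNorm_eq_norm {m : ℕ} (v : Fin m → ℝ) :
    euclNorm v = ‖(WithLp.equiv 2 (Fin m → ℝ)).symm v‖ := by
  rw [EuclideanSpace.norm_eq]
  simp [euclNorm, Real.norm_eq_abs, sq_abs]

lemma mulVec_euclNorm_le {m : ℕ} (E : Matrix (Fin m) (Fin m) ℝ) (v : Fin m → ℝ) :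
    euclNorm (E.mulVec v) ≤ spectralNorm2 E * euclNorm v := by
  have h := (Matrix.toEuclideanCLM (𝕜 := ℝ) E).le_opNorm ((WithLp.equiv 2 (Fin m → ℝ)).symm v)
  change ‖(WithLp.equiv 2 (Fin m → ℝ)).symm (E *ᵥ v)‖ ≤ ‖Matrix.toEuclideanCLM (𝕜 := ℝ) E‖ * ‖(WithLp.equiv 2 (Fin m → ℝ)).symm v‖ at h
  rwa [← euclNorm_eq_norm,
    ← euclNorm_eq_norm] at h

lemma dotProduct_le {m : ℕ} (u v : Fin m → ℝ) : u ⬝ᵥ v ≤ euclNorm u * euclNorm v := by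
  have h := abs_real_inner_le_norm ((WithLp.equiv 2 (Fin m → ℝ)).symm u)
    ((WithLp.equiv 2 (Fin m → ℝ)).symm v)
  rw [← euclNorm_eq_norm, ← euclNorm_eq_norm] at h
  have : inner ℝ ((WithLp.equiv 2 (Fin m → ℝ)).symm u) ((WithLp.equiv 2 (Fin m → ℝ)).symm v)
      = u ⬝ᵥ v := by
    simp [PiLp.inner_apply, dotProduct, mul_comm]
  rw [this] at h
  exact (le_abs_self _).trans h

lemma real_star_eq {m : ℕ} (A : Matrix (Fin m) (Fin m) ℝ) : star A = Aᵀ := by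
  ext i j; simp [star_apply]

lemma transpose_mulVec_dot {m : ℕ} (A : Matrix (Fin m) (Fin m) ℝ) (x z : Fin m → ℝ) :
    (A *ᵥ x) ⬝ᵥ z = x ⬝ᵥ (Aᵀ *ᵥ z) := by
  rw [dotProduct_comm, dotProduct_mulVec, dotProduct_comm, mulVec_transpose]

lemma rayleigh_lower {m : ℕ} [NeZero m] (K : Matrix (Fin m) (Fin m) ℝ) (hK : K.IsHermitian)
    (x : Fin m → ℝ) :
    (⨅ i, hK.eigenvalues i) * (∑ i, x i ^ 2) ≤ x ⬝ᵥ K.mulVec x := by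
  set U : Matrix (Fin m) (Fin m) ℝ := (hK.eigenvectorUnitary : Matrix (Fin m) (Fin m) ℝ) with hU
  have hUU : U * star U = 1 := (Matrix.mem_unitaryGroup_iff).mp hK.eigenvectorUnitary.2
  set y : Fin m → ℝ := (star U).mulVec x with hy
  have hvU : x ᵥ* U = y := by
    rw [hy, ← mulVec_transpose]
    congr 1
  have hxKx : x ⬝ᵥ K.mulVec x = ∑ i, hK.eigenvalues i * y i ^ 2 := by
    conv_lhs => rw [hK.spectral_theorem, Unitary.conjStarAlgAut_apply]
    rw [← mulVec_mulVec, ← mulVec_mulVec, dotProduct_mulVec, hvU]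
    simp only [dotProduct, mulVec_diagonal, Function.comp]
    refine Finset.sum_congr rfl fun i _ => ?_
    rw [← hU, ← hy]
    simp only [RCLike.ofReal_real_eq_id, id]
    ring
  have hyy : ∑ i, y i ^ 2 = ∑ i, x i ^ 2 := by
    have h1 : y ⬝ᵥ y = x ⬝ᵥ x := by
      conv_lhs => rw [hy]
      rw [transpose_mulVec_dot, ← real_star_eq, star_star, mulVec_mulVec, hUU, one_mulVec]
    simpa [dotProduct, pow_two] using h1
  rw [hxKx, ← hyy, Finset.mul_sum]
  refine Finset.sum_le_sum fun i _ => ?_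
  have hle : (⨅ j, hK.eigenvalues j) ≤ hK.eigenvalues i := ciInf_le (Finite.bddBelow_range _) i
  nlinarith [sq_nonneg (y i)]

lemma first_order {m : ℕ} (A : Set (Fin m → ℝ)) (hconv : Convex ℝ A)
    (B : Matrix (Fin m) (Fin m) ℝ) (hBs : B.IsSymm) (p : Fin m → ℝ) (β : Fin m → ℝ)
    (hβ : β ∈ A)
    (hmin : ∀ α ∈ A, β ⬝ᵥ B.mulVec β - p ⬝ᵥ β ≤ α ⬝ᵥ B.mulVec α - p ⬝ᵥ α)
    (α : Fin m → ℝ) (hα : α ∈ A) :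
    0 ≤ (2 • B.mulVec β - p) ⬝ᵥ (α - β) := by
  set u : Fin m → ℝ := α - β with hu
  have hsymm : ∀ a b : Fin m → ℝ, a ⬝ᵥ B.mulVec b = b ⬝ᵥ B.mulVec a := by
    intro a b
    rw [dotProduct_mulVec, ← mulVec_transpose, hBs.eq, dotProduct_comm]
  set c : ℝ := (2 • B.mulVec β - p) ⬝ᵥ u with hc
  set b : ℝ := u ⬝ᵥ B.mulVec u with hb
  have key : ∀ t : ℝ, 0 < t → t ≤ 1 → 0 ≤ c + t * b := by
    intro t ht0 ht1
    have hmem : β + t • u ∈ A := by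
      have h := hconv hβ hα (by linarith : (0:ℝ) ≤ 1 - t) ht0.le (by ring)
      have heq : (1 - t) • β + t • α = β + t • u := by
        rw [hu]; module
      rwa [heq] at h
    have h2 := hmin _ hmem
    have hexp : (β + t • u) ⬝ᵥ B.mulVec (β + t • u) - p ⬝ᵥ (β + t • u)
        = (β ⬝ᵥ B.mulVec β - p ⬝ᵥ β) + t * (c + t * b) := by
      rw [hc, hb]
      simp only [mulVec_add, mulVec_smul, dotProduct_add, add_dotProduct,
        dotProduct_smul, smul_dotProduct, smul_eq_mul, sub_dotProduct, two_smul,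
        add_dotProduct]
      have h4 : (B.mulVec β) ⬝ᵥ u = β ⬝ᵥ B.mulVec u := by
        rw [dotProduct_comm]; exact hsymm u β
      rw [hsymm u β, h4]
      ring
    rw [hexp] at h2
    nlinarith
  by_contra hneg
  push_neg at hneg
  rcases le_or_gt b 0 with hb0 | hb0
  · have := key 1 one_pos le_rfl
    nlinarith
  · have hcb : 0 < -c / (2 * b) := div_pos (by linarith) (by linarith)
    have ht0 : 0 < min 1 (-c / (2 * b)) := lt_min one_pos hcb
    have ht1 : min 1 (-c / (2 * b)) ≤ 1 := min_le_left _ _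
    have h := key _ ht0 ht1
    have h2 : min 1 (-c / (2 * b)) ≤ -c / (2 * b) := min_le_right _ _
    have h3 : (-c / (2 * b)) * b = -c / 2 := by field_simp
    nlinarith [mul_le_mul_of_nonneg_right h2 hb0.le]

/-- **Perturbation bound for constrained quadratic programs.**
Let `A ⊆ ℝ^M` be nonempty, closed and convex, `K, K̂` symmetric with `K`
positive definite, and let `α*`, `α̂*` minimize `α ↦ αᵀKα − qᵀα` resp.
`α ↦ αᵀK̂α − q̂ᵀα` over `A`. Then
`‖α̂* − α*‖₂ ≤ (‖K̂ − K‖₂·‖α̂*‖₂ + ‖q̂ − q‖₂/2) / λ_min(K)`. -/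
theorem qp_optimizer_perturbation_bound
    (M : ℕ) (A : Set (Fin M → ℝ)) (hne : A.Nonempty) (hcl : IsClosed A) (hconv : Convex ℝ A)
    (K Khat : Matrix (Fin M) (Fin M) ℝ) (hKs : K.IsSymm) (hKhs : Khat.IsSymm)
    (hpd : K.PosDef)
    (q qhat : Fin M → ℝ) (αstar αhat : Fin M → ℝ)
    (hstar_mem : αstar ∈ A)
    (hstar_min : ∀ α ∈ A,
      αstar ⬝ᵥ K.mulVec αstar - q ⬝ᵥ αstar ≤ α ⬝ᵥ K.mulVec α - q ⬝ᵥ α)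
    (hstar_uniq : ∀ β ∈ A,
      (∀ α ∈ A, β ⬝ᵥ K.mulVec β - q ⬝ᵥ β ≤ α ⬝ᵥ K.mulVec α - q ⬝ᵥ α) → β = αstar)
    (hhat_mem : αhat ∈ A)
    (hhat_min : ∀ α ∈ A,
      αhat ⬝ᵥ Khat.mulVec αhat - qhat ⬝ᵥ αhat ≤ α ⬝ᵥ Khat.mulVec α - qhat ⬝ᵥ α) :
    euclNorm (αhat - αstar) ≤
      (spectralNorm2 (Khat - K) * euclNorm αhat + euclNorm (qhat - q) / 2) /
        (⨅ i, hpd.isHermitian.eigenvalues i) := by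
  rcases Nat.eq_zero_or_pos M with hM | hM
  · subst hM
    rw [show (⨅ i : Fin 0, hpd.isHermitian.eigenvalues i) = 0 by rw [iInf_of_isEmpty, Real.sInf_empty], div_zero]
    simp [euclNorm]
  haveI : NeZero M := ⟨hM.ne'⟩
  set lam0 : ℝ := ⨅ i, hpd.isHermitian.eigenvalues i with hlam0
  have hlampos : 0 < lam0 := by
    obtain ⟨i, hi⟩ := exists_eq_ciInf_of_finite (f := hpd.isHermitian.eigenvalues)
    rw [hlam0, ← hi]
    exact hpd.eigenvalues_pos i
  set d : Fin M → ℝ := αhat - αstar with hd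
  have g1 := first_order A hconv K hKs q αstar hstar_mem hstar_min αhat hhat_mem
  have g2 := first_order A hconv Khat hKhs qhat αhat hhat_mem hhat_min αstar hstar_mem
  have hKsym : ∀ a b : Fin M → ℝ, a ⬝ᵥ K.mulVec b = b ⬝ᵥ K.mulVec a := by
    intro a b
    rw [dotProduct_mulVec, ← mulVec_transpose, hKs.eq, dotProduct_comm]
  have key : 2 * (d ⬝ᵥ K.mulVec d) ≤ (qhat - q) ⬝ᵥ d + 2 * (((K - Khat).mulVec αhat) ⬝ᵥ d) := by
    have hId : (2 • K.mulVec αstar - q) ⬝ᵥ (αhat - αstar)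
          + (2 • Khat.mulVec αhat - qhat) ⬝ᵥ (αstar - αhat)
        = (qhat - q) ⬝ᵥ d + 2 * (((K - Khat).mulVec αhat) ⬝ᵥ d) - 2 * (d ⬝ᵥ K.mulVec d) := by
      rw [hd]
      simp only [Matrix.sub_mulVec, Matrix.mulVec_sub, two_smul, add_dotProduct,
        sub_dotProduct, dotProduct_sub, smul_eq_mul]
      have f1 : ∀ (B : Matrix (Fin M) (Fin M) ℝ) (a b : Fin M → ℝ),
          (B.mulVec a) ⬝ᵥ b = b ⬝ᵥ B.mulVec a := fun B a b => dotProduct_comm _ _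
      rw [f1 K αstar αhat, f1 K αstar αstar, f1 Khat αhat αstar, f1 Khat αhat αhat,
        f1 K αhat αhat, f1 K αhat αstar, hKsym αstar αhat]
      ring
    linarith [add_nonneg g1 g2, hId]
  have cs1 : (qhat - q) ⬝ᵥ d ≤ euclNorm (qhat - q) * euclNorm d := dotProduct_le _ _
  have cs2 : ((K - Khat).mulVec αhat) ⬝ᵥ d ≤ euclNorm ((K - Khat).mulVec αhat) * euclNorm d :=
    dotProduct_le _ _
  have cs3 : euclNorm ((K - Khat).mulVec αhat) ≤ spectralNorm2 (Khat - K) * euclNorm αhat := by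
    have h := mulVec_euclNorm_le (K - Khat) αhat
    have hsp : spectralNorm2 (K - Khat) = spectralNorm2 (Khat - K) := by
      rw [show K - Khat = -(Khat - K) from (neg_sub _ _).symm]
      simp [spectralNorm2, map_neg, norm_sub_rev]
    rwa [hsp] at h
  have ray : lam0 * (euclNorm d) ^ 2 ≤ d ⬝ᵥ K.mulVec d := by
    rw [sq_euclNorm]
    exact rayleigh_lower K hpd.isHermitian d
  have hN : 0 ≤ euclNorm d := euclNorm_nonneg d
  rcases eq_or_lt_of_le hN with hN0 | hNpos
  · rw [← hN0]
    apply div_nonneg _ hlampos.le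
    have := euclNorm_nonneg αhat
    have := euclNorm_nonneg (qhat - q)
    have : (0:ℝ) ≤ spectralNorm2 (Khat - K) := norm_nonneg _
    positivity
  · rw [le_div_iff₀ hlampos]
    nlinarith [mul_le_mul_of_nonneg_right cs3 hN, euclNorm_nonneg (qhat - q),
      norm_nonneg (Matrix.toEuclideanCLM (𝕜 := ℝ) (Khat - K)), euclNorm_nonneg αhat]
end

section
/- There exists a universal constant B > 0 such that, for any multi-source setup as described, the empirical Gram matrix satisfies E[‖K̂ − K‖₂²] ≤ C²·(8M/n̄ + B/n̄²), where the expectation is over the M mutually independent datasets. -/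
open MeasureTheory

lemma aux_spectral_sq_le_frobenius {m : ℕ} (A : Matrix (Fin m) (Fin m) ℝ) :
    spectralNorm2 A ^ 2 ≤ ∑ i, ∑ j, A i j ^ 2 := by
  set S : ℝ := ∑ i, ∑ j, A i j ^ 2 with hSdef
  have hS : (0:ℝ) ≤ S := by positivity
  have h1 : spectralNorm2 A ≤ Real.sqrt S := by
    refine ContinuousLinearMap.opNorm_le_bound _ (Real.sqrt_nonneg _) fun x => ?_
    have hy : ∀ i, (Matrix.toEuclideanCLM (𝕜 := ℝ) A) x i = ∑ j, A i j * x j := by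
      intro i
      have := congrFun (Matrix.ofLp_toEuclideanCLM (𝕜 := ℝ) A x) i
      simpa [Matrix.mulVec, dotProduct] using this
    have hAx : ‖(Matrix.toEuclideanCLM (𝕜 := ℝ) A) x‖
        = Real.sqrt (∑ i, (∑ j, A i j * x j) ^ 2) := by
      rw [EuclideanSpace.norm_eq]
      congr 1
      refine Finset.sum_congr rfl fun i _ => ?_
      rw [hy i, Real.norm_eq_abs, sq_abs]
    have hx : ‖x‖ = Real.sqrt (∑ j, (x j) ^ 2) := by
      rw [EuclideanSpace.norm_eq]
      congr 1
      refine Finset.sum_congr rfl fun j _ => ?_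
      rw [Real.norm_eq_abs, sq_abs]
    rw [hAx, hx]
    rw [← Real.sqrt_mul hS]
    apply Real.sqrt_le_sqrt
    calc ∑ i, (∑ j, A i j * x j) ^ 2
        ≤ ∑ i, (∑ j, A i j ^ 2) * ∑ j, (x j) ^ 2 :=
          Finset.sum_le_sum fun i _ => Finset.sum_mul_sq_le_sq_mul_sq _ _ _
      _ = S * ∑ j, (x j) ^ 2 := by rw [← Finset.sum_mul]
  calc spectralNorm2 A ^ 2 ≤ Real.sqrt S ^ 2 := by
        have h0 : (0:ℝ) ≤ spectralNorm2 A := norm_nonneg _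
        exact pow_le_pow_left₀ h0 h1 2
    _ = S := Real.sq_sqrt hS


lemma aux_pi_map_eval {ι : Type*} [Fintype ι] {α : ι → Type*} [∀ i, MeasurableSpace (α i)]
    (μ : ∀ i, Measure (α i)) [∀ i, IsProbabilityMeasure (μ i)] (i : ι) :
    (Measure.pi μ).map (Function.eval i) = μ i := by
  classical
  ext s hs
  rw [Measure.map_apply (measurable_pi_apply i) hs]
  have hpre : Function.eval i ⁻¹' s
      = Set.pi Set.univ (Function.update (fun j => (Set.univ : Set (α j))) i s) := by
    ext x
    simp only [Set.mem_preimage, Set.mem_univ_pi]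
    constructor
    · intro hx j
      rcases eq_or_ne j i with rfl | hj
      · simpa using hx
      · simp [Function.update_of_ne hj]
    · intro hx
      have := hx i
      simpa using this
  rw [hpre, Measure.pi_pi]
  rw [Finset.prod_eq_single i]
  · simp
  · intro j _ hj
    simp [Function.update_of_ne hj]
  · simp

lemma aux_integral_eval {ι : Type*} [Fintype ι] {α : ι → Type*} [∀ i, MeasurableSpace (α i)]
    (μ : ∀ i, Measure (α i)) [∀ i, IsProbabilityMeasure (μ i)] (i : ι)
    {E : Type*} [NormedAddCommGroup E] [NormedSpace ℝ E]
    (f : α i → E) (hf : AEStronglyMeasurable f (μ i)) :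
    ∫ x, f (x i) ∂(Measure.pi μ) = ∫ y, f y ∂(μ i) := by
  rw [← aux_pi_map_eval μ i] at hf ⊢
  exact (integral_map (measurable_pi_apply i).aemeasurable hf).symm

lemma aux_pi_map_pair {ι : Type*} [Fintype ι] {α : ι → Type*} [∀ i, MeasurableSpace (α i)]
    (μ : ∀ i, Measure (α i)) [∀ i, IsProbabilityMeasure (μ i)] {j k : ι} (hjk : j ≠ k) :
    (Measure.pi μ).map (fun x => (x j, x k)) = (μ j).prod (μ k) := by
  classical
  refine (Measure.prod_eq fun s t hs ht => ?_).symm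
  rw [Measure.map_apply ((measurable_pi_apply j).prodMk (measurable_pi_apply k)) (hs.prod ht)]
  have hpre : (fun x : ∀ i, α i => (x j, x k)) ⁻¹' (s ×ˢ t)
      = Set.pi Set.univ
          (Function.update (Function.update (fun l => (Set.univ : Set (α l))) j s) k t) := by
    ext x
    simp only [Set.mem_preimage, Set.mem_prod, Set.mem_univ_pi]
    constructor
    · intro hx l
      rcases eq_or_ne l k with rfl | hlk
      · simpa [Function.update_self] using hx.2
      · rcases eq_or_ne l j with rfl | hlj
        · simpa [Function.update_of_ne hjk, Function.update_self] using hx.1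
        · simp [Function.update_of_ne hlk, Function.update_of_ne hlj]
    · intro hx
      constructor
      · have := hx j
        simpa [Function.update_of_ne hjk, Function.update_self] using this
      · have := hx k
        simpa [Function.update_self] using this
  rw [hpre, Measure.pi_pi]
  have hsub : ({j, k} : Finset ι) ⊆ Finset.univ := Finset.subset_univ _
  rw [← Finset.prod_subset hsub ?_]
  · rw [Finset.prod_pair hjk]
    rw [Function.update_of_ne hjk, Function.update_self, Function.update_self]
  · intro l _ hl
    simp only [Finset.mem_insert, Finset.mem_singleton, not_or] at hl
    rw [Function.update_of_ne hl.2, Function.update_of_ne hl.1]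
    simp

section AuxH
variable {H : Type*} [NormedAddCommGroup H] [InnerProductSpace ℝ H] [CompleteSpace H]

lemma aux_integrable_of_bounded {α : Type*} [MeasurableSpace α] {μ : Measure α}
    [IsFiniteMeasure μ] {E : Type*} [NormedAddCommGroup E] {f : α → E}
    (hf : AEStronglyMeasurable f μ) (b : ℝ) (hb : ∀ a, ‖f a‖ ≤ b) : Integrable f μ :=
  Integrable.mono' (integrable_const b) hf (Filter.Eventually.of_forall hb)

omit [CompleteSpace H] in
lemma aux_sm_inner {α : Type*} [MeasurableSpace α] {u v : α → H}
    (hu : StronglyMeasurable u) (hv : StronglyMeasurable v) :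
    StronglyMeasurable fun x => (inner ℝ (u x) (v x) : ℝ) :=
  continuous_inner.comp_stronglyMeasurable (hu.prodMk hv)

lemma aux_cross_term {ι : Type*} [Fintype ι] {α : ι → Type*} [∀ i, MeasurableSpace (α i)]
    (μ : ∀ i, Measure (α i)) [∀ i, IsProbabilityMeasure (μ i)] {j k : ι} (hjk : j ≠ k)
    (f : α j → H) (g : α k → H) (hf : StronglyMeasurable f) (hg : StronglyMeasurable g)
    (bf bg : ℝ) (hbf : ∀ a, ‖f a‖ ≤ bf) (hbg : ∀ a, ‖g a‖ ≤ bg) :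
    ∫ x, (inner ℝ (f (x j)) (g (x k)) : ℝ) ∂(Measure.pi μ)
      = (inner ℝ (∫ a, f a ∂(μ j)) (∫ a, g a ∂(μ k)) : ℝ) := by
  have hfint : Integrable f (μ j) := aux_integrable_of_bounded hf.aestronglyMeasurable bf hbf
  have hgint : Integrable g (μ k) := aux_integrable_of_bounded hg.aestronglyMeasurable bg hbg
  have hsm : StronglyMeasurable fun p : α j × α k => (inner ℝ (f p.1) (g p.2) : ℝ) :=
    aux_sm_inner (hf.comp_measurable measurable_fst) (hg.comp_measurable measurable_snd)
  have hmap := aux_pi_map_pair μ hjk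
  have hpair : Measurable fun x : ∀ i, α i => (x j, x k) :=
    (measurable_pi_apply j).prodMk (measurable_pi_apply k)
  have h1 : ∫ x, (inner ℝ (f (x j)) (g (x k)) : ℝ) ∂(Measure.pi μ)
      = ∫ p : α j × α k, (inner ℝ (f p.1) (g p.2) : ℝ) ∂((μ j).prod (μ k)) := by
    rw [← hmap, integral_map hpair.aemeasurable hsm.aestronglyMeasurable]
  rw [h1]
  have hint : Integrable (fun p : α j × α k => (inner ℝ (f p.1) (g p.2) : ℝ))
      ((μ j).prod (μ k)) := by
    refine aux_integrable_of_bounded hsm.aestronglyMeasurable (bf * bg) fun p => ?_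
    have h2 := abs_real_inner_le_norm (f p.1) (g p.2)
    have h3 : ‖f p.1‖ * ‖g p.2‖ ≤ bf * bg :=
      mul_le_mul (hbf p.1) (hbg p.2) (norm_nonneg _) ((norm_nonneg _).trans (hbf p.1))
    rw [Real.norm_eq_abs]
    exact h2.trans h3
  rw [integral_prod _ hint]
  have h4 : ∀ a : α j, ∫ b, (inner ℝ (f a) (g b) : ℝ) ∂(μ k) = (inner ℝ (f a) (∫ b, g b ∂(μ k)) : ℝ) :=
    fun a => integral_inner hgint (f a)
  simp_rw [h4]
  have h5 : ∀ a, (inner ℝ (f a) (∫ b, g b ∂(μ k)) : ℝ) = inner ℝ (∫ b, g b ∂(μ k)) (f a) :=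
    fun a => real_inner_comm _ _
  simp_rw [h5]
  rw [integral_inner hfint, real_inner_comm]
lemma aux_variance {Ξ : Type*} [MeasurableSpace Ξ] {n : ℕ} (hn : 0 < n)
    (P : Measure Ξ) [IsProbabilityMeasure P] (φ : Ξ → H) (hφm : StronglyMeasurable φ)
    {C : ℝ} (hC : 0 ≤ C) (hb : ∀ ξ, ‖φ ξ‖ ^ 2 ≤ C) :
    ∫ x : Fin n → Ξ, ‖empEmb φ x - ∫ ξ, φ ξ ∂P‖ ^ 2 ∂(Measure.pi fun _ : Fin n => P) ≤ C / n := by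
  have hn' : ((n : ℝ)) ≠ 0 := Nat.cast_ne_zero.mpr hn.ne'
  set s := Real.sqrt C with hsdef
  have hs2 : s ^ 2 = C := Real.sq_sqrt hC
  have hφs : ∀ ξ, ‖φ ξ‖ ≤ s := by
    intro ξ
    have := Real.sqrt_le_sqrt (hb ξ)
    rwa [Real.sqrt_sq (norm_nonneg _)] at this
  set μ0 := ∫ ξ, φ ξ ∂P with hμ0def
  have hφint : Integrable φ P := aux_integrable_of_bounded hφm.aestronglyMeasurable s hφs
  have hμ0 : ‖μ0‖ ≤ s := by
    have := norm_integral_le_of_norm_le_const (μ := P) (f := φ)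
      (Filter.Eventually.of_forall hφs)
    simpa using this
  set Y : Ξ → H := fun ξ => φ ξ - μ0 with hYdef
  have hYm : StronglyMeasurable Y := hφm.sub stronglyMeasurable_const
  have hYb : ∀ ξ, ‖Y ξ‖ ≤ 2 * s := by
    intro ξ
    calc ‖φ ξ - μ0‖ ≤ ‖φ ξ‖ + ‖μ0‖ := norm_sub_le _ _
      _ ≤ 2 * s := by linarith [hφs ξ]
  have hYint : Integrable Y P := aux_integrable_of_bounded hYm.aestronglyMeasurable (2*s) hYb
  have hEY : ∫ ξ, Y ξ ∂P = 0 := by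
    simp only [hYdef]
    rw [integral_sub hφint (integrable_const _), integral_const]
    simp [hμ0def]
  -- second moment of Y
  have hnm : StronglyMeasurable fun ξ => ‖φ ξ‖ ^ 2 := by
    simpa [pow_two, Pi.mul_def] using hφm.norm.mul hφm.norm
  have hint1 : Integrable (fun ξ => ‖φ ξ‖ ^ 2) P := by
    refine aux_integrable_of_bounded hnm.aestronglyMeasurable C fun ξ => ?_
    rw [Real.norm_eq_abs, abs_of_nonneg (sq_nonneg _)]
    exact hb ξ
  have hint2 : Integrable (fun ξ => (inner ℝ (φ ξ) μ0 : ℝ)) P := by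
    refine aux_integrable_of_bounded
      (aux_sm_inner hφm stronglyMeasurable_const).aestronglyMeasurable (s * s) fun ξ => ?_
    rw [Real.norm_eq_abs]
    exact (abs_real_inner_le_norm _ _).trans
      (mul_le_mul (hφs ξ) hμ0 (norm_nonneg _) ((norm_nonneg _).trans (hφs ξ)))
  have hI2 : ∫ ξ, (inner ℝ (φ ξ) μ0 : ℝ) ∂P = ‖μ0‖ ^ 2 := by
    have hcomm : ∀ ξ, (inner ℝ (φ ξ) μ0 : ℝ) = inner ℝ μ0 (φ ξ) := fun ξ => real_inner_comm _ _
    simp_rw [hcomm]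
    rw [integral_inner hφint, ← hμ0def, real_inner_self_eq_norm_sq]
  have hI1 : ∫ ξ, ‖φ ξ‖ ^ 2 ∂P ≤ C := by
    calc ∫ ξ, ‖φ ξ‖ ^ 2 ∂P ≤ ∫ _, C ∂P := integral_mono hint1 (integrable_const C) hb
      _ = C := by simp
  have hYsq : ∫ ξ, ‖Y ξ‖ ^ 2 ∂P ≤ C := by
    have hexp : ∀ ξ, ‖Y ξ‖ ^ 2 = ‖φ ξ‖ ^ 2 - 2 * (inner ℝ (φ ξ) μ0 : ℝ) + ‖μ0‖ ^ 2 :=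
      fun ξ => norm_sub_sq_real _ _
    simp_rw [hexp]
    have hsub : Integrable (fun ξ => ‖φ ξ‖ ^ 2 - 2 * (inner ℝ (φ ξ) μ0 : ℝ)) P :=
      hint1.sub (hint2.const_mul 2)
    rw [integral_add hsub (integrable_const _),
      integral_sub hint1 (hint2.const_mul 2), integral_const_mul, hI2, integral_const]
    simp only [probReal_univ, smul_eq_mul, one_mul]
    nlinarith [sq_nonneg ‖μ0‖]
  -- expansion
  set ν := Measure.pi fun _ : Fin n => P with hνdef
  have hkey : ∀ x : Fin n → Ξ, empEmb φ x - μ0 = (n:ℝ)⁻¹ • ∑ j, Y (x j) := by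
    intro x
    have hsum : ∑ j : Fin n, Y (x j) = (∑ j, φ (x j)) - (n:ℝ) • μ0 := by
      rw [Finset.sum_sub_distrib]
      congr 1
      rw [Finset.sum_const, Finset.card_univ, Fintype.card_fin, ← Nat.cast_smul_eq_nsmul ℝ]
    rw [hsum, smul_sub, empEmb, smul_smul, inv_mul_cancel₀ hn', one_smul]
  have hnorm : ∀ x : Fin n → Ξ, ‖empEmb φ x - μ0‖ ^ 2
      = ((n:ℝ)⁻¹) ^ 2 * ∑ j, ∑ k, (inner ℝ (Y (x j)) (Y (x k)) : ℝ) := by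
    intro x
    rw [hkey x, norm_smul, mul_pow]
    congr 1
    · rw [Real.norm_eq_abs, sq_abs]
    · rw [← real_inner_self_eq_norm_sq, sum_inner]
      exact Finset.sum_congr rfl fun j _ => inner_sum _ _ _
  have hsmj : ∀ j : Fin n, StronglyMeasurable fun x : Fin n → Ξ => Y (x j) :=
    fun j => hYm.comp_measurable (measurable_pi_apply j)
  have hgint : ∀ j k : Fin n,
      Integrable (fun x : Fin n → Ξ => (inner ℝ (Y (x j)) (Y (x k)) : ℝ)) ν := by
    intro j k
    refine aux_integrable_of_bounded (aux_sm_inner (hsmj j) (hsmj k)).aestronglyMeasurable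
      ((2*s) * (2*s)) fun x => ?_
    rw [Real.norm_eq_abs]
    exact (abs_real_inner_le_norm _ _).trans
      (mul_le_mul (hYb (x j)) (hYb (x k)) (norm_nonneg _) ((norm_nonneg _).trans (hYb (x j))))
  have hdiag : ∀ j : Fin n, ∫ x, (inner ℝ (Y (x j)) (Y (x j)) : ℝ) ∂ν ≤ C := by
    intro j
    rw [hνdef, aux_integral_eval (fun _ : Fin n => P) j (fun a => (inner ℝ (Y a) (Y a) : ℝ))
      (aux_sm_inner hYm hYm).aestronglyMeasurable]
    simp_rw [real_inner_self_eq_norm_sq]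
    exact hYsq
  have hoff : ∀ j k : Fin n, j ≠ k → ∫ x, (inner ℝ (Y (x j)) (Y (x k)) : ℝ) ∂ν = 0 := by
    intro j k hjk
    rw [hνdef, aux_cross_term (fun _ : Fin n => P) hjk Y Y hYm hYm (2*s) (2*s) hYb hYb, hEY]
    simp
  have hsplit : ∫ x, ‖empEmb φ x - μ0‖ ^ 2 ∂ν
      = ((n:ℝ)⁻¹) ^ 2 * ∑ j, ∑ k, ∫ x, (inner ℝ (Y (x j)) (Y (x k)) : ℝ) ∂ν := by
    simp_rw [hnorm]
    rw [integral_const_mul]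
    congr 1
    rw [integral_finset_sum _ fun j _ => integrable_finset_sum _ fun k _ => hgint j k]
    exact Finset.sum_congr rfl fun j _ => integral_finset_sum _ fun k _ => hgint j k
  have hsum_le : ∑ j : Fin n, ∑ k : Fin n, ∫ x, (inner ℝ (Y (x j)) (Y (x k)) : ℝ) ∂ν
      ≤ (n : ℝ) * C := by
    have hrow : ∀ j : Fin n, ∑ k : Fin n, ∫ x, (inner ℝ (Y (x j)) (Y (x k)) : ℝ) ∂ν ≤ C := by
      intro j
      calc ∑ k : Fin n, ∫ x, (inner ℝ (Y (x j)) (Y (x k)) : ℝ) ∂ν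
          ≤ ∑ k : Fin n, (if j = k then C else 0) := by
            refine Finset.sum_le_sum fun k _ => ?_
            rcases eq_or_ne j k with rfl | h
            · simpa using hdiag j
            · rw [hoff j k h]
              simp [h]
        _ = C := by simp
    calc ∑ j : Fin n, ∑ k : Fin n, ∫ x, (inner ℝ (Y (x j)) (Y (x k)) : ℝ) ∂ν
        ≤ ∑ _j : Fin n, C := Finset.sum_le_sum fun j _ => hrow j
      _ = (n : ℝ) * C := by simp [mul_comm]
  rw [hsplit]
  calc ((n:ℝ)⁻¹) ^ 2 * ∑ j, ∑ k, ∫ x, (inner ℝ (Y (x j)) (Y (x k)) : ℝ) ∂ν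
      ≤ ((n:ℝ)⁻¹) ^ 2 * ((n:ℝ) * C) := by
        apply mul_le_mul_of_nonneg_left hsum_le (by positivity)
    _ = C / n := by field_simp
omit [CompleteSpace H] in
lemma aux_entry_sq {s : ℝ} {a b c d : H} (hb : ‖b‖ ≤ s) (hc : ‖c‖ ≤ s) :
    ((inner ℝ a b : ℝ) - inner ℝ c d) ^ 2
      ≤ 2 * s ^ 2 * ‖a - c‖ ^ 2 + 2 * s ^ 2 * ‖b - d‖ ^ 2 := by
  have hid : (inner ℝ a b : ℝ) - inner ℝ c d = (inner ℝ (a - c) b : ℝ) + (inner ℝ c (b - d) : ℝ) := by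
    rw [inner_sub_left, inner_sub_right]; ring
  have h1 : |(inner ℝ (a - c) b : ℝ)| ≤ ‖a - c‖ * s :=
    (abs_real_inner_le_norm _ _).trans (mul_le_mul_of_nonneg_left hb (norm_nonneg _))
  have h2 : |(inner ℝ c (b - d) : ℝ)| ≤ s * ‖b - d‖ :=
    (abs_real_inner_le_norm _ _).trans (mul_le_mul_of_nonneg_right hc (norm_nonneg _))
  have hX2 : ((inner ℝ (a - c) b : ℝ)) ^ 2 ≤ (‖a - c‖ * s) ^ 2 := by
    rw [← sq_abs]; exact pow_le_pow_left₀ (abs_nonneg _) h1 2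
  have hY2 : ((inner ℝ c (b - d) : ℝ)) ^ 2 ≤ (s * ‖b - d‖) ^ 2 := by
    rw [← sq_abs]; exact pow_le_pow_left₀ (abs_nonneg _) h2 2
  rw [hid]
  nlinarith [sq_nonneg ((inner ℝ (a - c) b : ℝ) - (inner ℝ c (b - d) : ℝ))]

end AuxH

set_option maxHeartbeats 1000000 in
/-- **Second-moment bound for the empirical Gram matrix.**
There exists a universal constant `B > 0` such that, for any multi-source setup,
`E[‖K̂ − K‖₂²] ≤ C²·(8M/n̄ + B/n̄²)`, the expectation being over the `M` mutually
independent datasets. -/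
theorem empirical_gram_matrix_second_moment_bound :
    ∃ B : ℝ, 0 < B ∧
      ∀ (H : Type u) (Ξ : Type v)
        [NormedAddCommGroup H] [InnerProductSpace ℝ H] [CompleteSpace H]
        [MeasurableSpace Ξ]
        (C : ℝ), 0 < C →
        ∀ (φ : Ξ → H), StronglyMeasurable φ → (∀ ξ, ‖φ ξ‖ ^ 2 ≤ C) →
        ∀ (M : ℕ), 0 < M →
        ∀ (P : Fin M → Measure Ξ) [∀ i, IsProbabilityMeasure (P i)]
          (n : Fin M → ℕ), (∀ i, 0 < n i) →
        ∀ (μ : Fin M → H), (∀ i, μ i = ∫ ξ, φ ξ ∂(P i)) →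
        ∀ (nbar : ℝ), nbar = (∑ i, (1 : ℝ) / n i)⁻¹ →
        ∫ x : (i : Fin M) → Fin (n i) → Ξ,
            spectralNorm2 (gram (fun i => empEmb φ (x i)) - gram μ) ^ 2
            ∂(Measure.pi fun i => Measure.pi fun _ : Fin (n i) => P i) ≤
          C ^ 2 * (8 * M / nbar + B / nbar ^ 2) := by
  refine ⟨1, one_pos, ?_⟩
  intro H Ξ _ _ _ _ C hC φ hφm hφb M hM P _ n hn μ hμ nbar hnbar
  set s := Real.sqrt C with hsdef
  have hs2 : s ^ 2 = C := Real.sq_sqrt hC.le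
  have hφs : ∀ ξ, ‖φ ξ‖ ≤ s := by
    intro ξ
    have := Real.sqrt_le_sqrt (hφb ξ)
    rwa [Real.sqrt_sq (norm_nonneg _)] at this
  have hμs : ∀ i, ‖μ i‖ ≤ s := by
    intro i
    rw [hμ i]
    have := norm_integral_le_of_norm_le_const (μ := P i) (f := φ)
      (Filter.Eventually.of_forall hφs)
    simpa using this
  have hemb : ∀ (i : Fin M) (y : Fin (n i) → Ξ), ‖empEmb φ y‖ ≤ s := by
    intro i y
    have h1 : ‖∑ j, φ (y j)‖ ≤ (n i : ℝ) * s := by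
      refine (norm_sum_le _ _).trans ?_
      calc ∑ j : Fin (n i), ‖φ (y j)‖ ≤ ∑ _j : Fin (n i), s :=
            Finset.sum_le_sum fun j _ => hφs _
        _ = (n i : ℝ) * s := by simp [mul_comm]
    rw [empEmb, norm_smul, Real.norm_eq_abs, abs_of_nonneg (by positivity : (0:ℝ) ≤ (n i : ℝ)⁻¹)]
    have hni : ((n i : ℝ)) ≠ 0 := Nat.cast_ne_zero.mpr (hn i).ne'
    calc (n i : ℝ)⁻¹ * ‖∑ j, φ (y j)‖ ≤ (n i : ℝ)⁻¹ * ((n i : ℝ) * s) :=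
          mul_le_mul_of_nonneg_left h1 (by positivity)
      _ = s := by field_simp
  -- strong measurability of the per-source deviations
  have hsme : ∀ i : Fin M,
      StronglyMeasurable fun x : (i : Fin M) → Fin (n i) → Ξ => empEmb φ (x i) := by
    intro i
    have hj : ∀ j : Fin (n i),
        StronglyMeasurable fun x : (i : Fin M) → Fin (n i) → Ξ => φ (x i j) :=
      fun j => hφm.comp_measurable ((measurable_pi_apply j).comp (measurable_pi_apply i))
    have hsum := Finset.stronglyMeasurable_sum Finset.univ fun j _ => hj j
    simpa [empEmb, Finset.sum_fn, Pi.smul_def] using hsum.const_smul ((n i : ℝ)⁻¹)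
  have hsmt : ∀ i : Fin M,
      StronglyMeasurable fun x : (i : Fin M) → Fin (n i) → Ξ => ‖empEmb φ (x i) - μ i‖ ^ 2 := by
    intro i
    have h := (hsme i).sub (stronglyMeasurable_const (b := μ i))
    simpa [pow_two, Pi.mul_def] using h.norm.mul h.norm
  have hbt : ∀ (i : Fin M) (x : (i : Fin M) → Fin (n i) → Ξ),
      ‖empEmb φ (x i) - μ i‖ ^ 2 ≤ 4 * C := by
    intro i x
    have h := norm_sub_le (empEmb φ (x i)) (μ i)
    nlinarith [hemb i (x i), hμs i, norm_nonneg (empEmb φ (x i) - μ i), hs2,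
      Real.sqrt_nonneg C]
  have htint : ∀ i : Fin M,
      Integrable (fun x : (i : Fin M) → Fin (n i) → Ξ => ‖empEmb φ (x i) - μ i‖ ^ 2)
        (Measure.pi fun i => Measure.pi fun _ : Fin (n i) => P i) := by
    intro i
    refine aux_integrable_of_bounded (hsmt i).aestronglyMeasurable (4 * C) fun x => ?_
    rw [Real.norm_eq_abs, abs_of_nonneg (sq_nonneg _)]
    exact hbt i x
  -- pointwise bound
  have hpt : ∀ x : (i : Fin M) → Fin (n i) → Ξ,
      spectralNorm2 (gram (fun i => empEmb φ (x i)) - gram μ) ^ 2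
        ≤ 4 * C * M * ∑ i, ‖empEmb φ (x i) - μ i‖ ^ 2 := by
    intro x
    refine (aux_spectral_sq_le_frobenius _).trans ?_
    have hentry : ∀ i j : Fin M, ((gram (fun i => empEmb φ (x i)) - gram μ) i j) ^ 2
        ≤ 2 * C * ‖empEmb φ (x i) - μ i‖ ^ 2 + 2 * C * ‖empEmb φ (x j) - μ j‖ ^ 2 := by
      intro i j
      have hval : (gram (fun i => empEmb φ (x i)) - gram μ) i j
          = (inner ℝ (empEmb φ (x i)) (empEmb φ (x j)) : ℝ) - inner ℝ (μ i) (μ j) := by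
        simp [gram, Matrix.sub_apply]
      rw [hval, ← hs2]
      exact aux_entry_sq (hemb j (x j)) (hμs i)
    calc ∑ i, ∑ j, ((gram (fun i => empEmb φ (x i)) - gram μ) i j) ^ 2
        ≤ ∑ i, ∑ j, (2 * C * ‖empEmb φ (x i) - μ i‖ ^ 2
            + 2 * C * ‖empEmb φ (x j) - μ j‖ ^ 2) :=
          Finset.sum_le_sum fun i _ => Finset.sum_le_sum fun j _ => hentry i j
      _ = 4 * C * M * ∑ i, ‖empEmb φ (x i) - μ i‖ ^ 2 := by
          have hrow : ∀ i : Fin M, ∑ j : Fin M, (2 * C * ‖empEmb φ (x i) - μ i‖ ^ 2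
              + 2 * C * ‖empEmb φ (x j) - μ j‖ ^ 2)
              = (M : ℝ) * (2 * C * ‖empEmb φ (x i) - μ i‖ ^ 2)
                + 2 * C * ∑ j, ‖empEmb φ (x j) - μ j‖ ^ 2 := by
            intro i
            rw [Finset.sum_add_distrib, Finset.sum_const, Finset.card_univ, Fintype.card_fin,
              ← Finset.mul_sum, nsmul_eq_mul]
          simp_rw [hrow]
          rw [Finset.sum_add_distrib, Finset.sum_const, Finset.card_univ, Fintype.card_fin,
            nsmul_eq_mul, ← Finset.mul_sum, ← Finset.mul_sum]
          ring
  -- integrate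
  have hgint : Integrable (fun x : (i : Fin M) → Fin (n i) → Ξ =>
      4 * C * M * ∑ i, ‖empEmb φ (x i) - μ i‖ ^ 2)
      (Measure.pi fun i => Measure.pi fun _ : Fin (n i) => P i) :=
    (integrable_finset_sum Finset.univ fun i _ => htint i).const_mul _
  have hmono : ∫ x : (i : Fin M) → Fin (n i) → Ξ,
      spectralNorm2 (gram (fun i => empEmb φ (x i)) - gram μ) ^ 2
      ∂(Measure.pi fun i => Measure.pi fun _ : Fin (n i) => P i)
      ≤ ∫ x : (i : Fin M) → Fin (n i) → Ξ,
      4 * C * M * ∑ i, ‖empEmb φ (x i) - μ i‖ ^ 2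
      ∂(Measure.pi fun i => Measure.pi fun _ : Fin (n i) => P i) :=
    integral_mono_of_nonneg
      (Filter.Eventually.of_forall fun x => sq_nonneg
        (spectralNorm2 (gram (fun i => empEmb φ (x i)) - gram μ)))
      hgint (Filter.Eventually.of_forall hpt)
  -- compute the per-source variances
  have hsm2 : ∀ i : Fin M, StronglyMeasurable fun y : Fin (n i) → Ξ => ‖empEmb φ y - μ i‖ ^ 2 := by
    intro i
    have hj : ∀ j : Fin (n i), StronglyMeasurable fun y : Fin (n i) → Ξ => φ (y j) :=
      fun j => hφm.comp_measurable (measurable_pi_apply j)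
    have hsum := Finset.stronglyMeasurable_sum Finset.univ fun j _ => hj j
    have hemb' : StronglyMeasurable fun y : Fin (n i) → Ξ => empEmb φ y := by
      simpa [empEmb, Finset.sum_fn, Pi.smul_def] using hsum.const_smul ((n i : ℝ)⁻¹)
    have h := hemb'.sub (stronglyMeasurable_const (b := μ i))
    simpa [pow_two, Pi.mul_def] using h.norm.mul h.norm
  have hVi : ∀ i : Fin M,
      ∫ x : (i : Fin M) → Fin (n i) → Ξ, ‖empEmb φ (x i) - μ i‖ ^ 2
        ∂(Measure.pi fun i => Measure.pi fun _ : Fin (n i) => P i) ≤ C / n i := by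
    intro i
    rw [aux_integral_eval (fun i => Measure.pi fun _ : Fin (n i) => P i) i
      (fun y => ‖empEmb φ y - μ i‖ ^ 2) (hsm2 i).aestronglyMeasurable]
    rw [hμ i]
    exact aux_variance (hn i) (P i) φ hφm hC.le hφb
  -- put everything together
  set S := ∑ i, (1 : ℝ) / n i with hS
  have hS0 : 0 ≤ S := Finset.sum_nonneg fun i _ => by positivity
  have hIg : ∫ x : (i : Fin M) → Fin (n i) → Ξ,
      4 * C * M * ∑ i, ‖empEmb φ (x i) - μ i‖ ^ 2
      ∂(Measure.pi fun i => Measure.pi fun _ : Fin (n i) => P i)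
      ≤ 4 * C * M * (C * S) := by
    rw [integral_const_mul, integral_finset_sum Finset.univ fun i _ => htint i]
    have hsum_le : ∑ i, (∫ x : (i : Fin M) → Fin (n i) → Ξ, ‖empEmb φ (x i) - μ i‖ ^ 2
        ∂(Measure.pi fun i => Measure.pi fun _ : Fin (n i) => P i)) ≤ C * S := by
      calc (∑ i, ∫ x : (i : Fin M) → Fin (n i) → Ξ, ‖empEmb φ (x i) - μ i‖ ^ 2
          ∂(Measure.pi fun i => Measure.pi fun _ : Fin (n i) => P i))
          ≤ ∑ i, C / n i := Finset.sum_le_sum fun i _ => hVi i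
        _ = C * S := by
            rw [hS, Finset.mul_sum]
            exact Finset.sum_congr rfl fun i _ => (mul_one_div C _).symm
    have h4 : (0:ℝ) ≤ 4 * C * M := by positivity
    exact mul_le_mul_of_nonneg_left hsum_le h4
  have hfinal : 4 * C * (M : ℝ) * (C * S) ≤ C ^ 2 * (8 * M / nbar + 1 / nbar ^ 2) := by
    have hRHS : C ^ 2 * (8 * M / nbar + 1 / nbar ^ 2) = C ^ 2 * (8 * M * S + S ^ 2) := by
      rw [hnbar, div_inv_eq_mul, one_div, ← inv_pow, inv_inv]
    rw [hRHS]
    have h1 : 0 ≤ C ^ 2 * (M : ℝ) * S := by positivity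
    have h2 : 0 ≤ C ^ 2 * S ^ 2 := by positivity
    nlinarith
  exact hmono.trans (hIg.trans hfinal)
end
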